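/- arXiv:2208.11798 — 15 statements merged into one kernel-verified Lean document; each statement's English description precedes it below -/
import Mathlib

section
/- Suppose the random treatment assignment Z is invariant in distribution under all within-stratum permutations: for every family ψ = (ψ_1,…,ψ_S) of permutations ψ_s of {1,…,n_s}, the permuted vector (Z_{s,ψ_s(i)})_{s,i} has the same distribution as Z (this holds in any stratified exchangeable randomized experiment, where assignments are mutually independent across strata and exchangeable within each stratum). Then the stratified rank score statistic is distribution free: for any y, y' ∈ ℝ^N, the random variables t(Z, y) and t(Z, y') are identically distributed. -/
open MeasureTheory Finset

/-- 'First'-method rank: ties are broken by index. -/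
noncomputable def rankF {m : ℕ} (v : Fin m → ℝ) (i : Fin m) : ℕ :=
  (Finset.univ.filter fun j => v j < v i ∨ (v j = v i ∧ j ≤ i)).card

/-- Stratified rank score statistic. -/
noncomputable def stratStat {S : ℕ} {n : Fin S → ℕ} (φ : Fin S → ℕ → ℝ)
    (z : ∀ s, Fin (n s) → Bool) (y : ∀ s, Fin (n s) → ℝ) : ℝ :=
  ∑ s, ∑ i, if z s i then φ s (rankF (y s) i) else 0

lemma rankF_pos {m : ℕ} (v : Fin m → ℝ) (i : Fin m) : 1 ≤ rankF v i := by
  have : i ∈ Finset.univ.filter fun j => v j < v i ∨ (v j = v i ∧ j ≤ i) := by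
    simp
  exact Finset.card_pos.mpr ⟨i, this⟩

lemma rankF_le {m : ℕ} (v : Fin m → ℝ) (i : Fin m) : rankF v i ≤ m := by
  simpa [rankF] using Finset.card_le_card
    (Finset.filter_subset (fun j => v j < v i ∨ (v j = v i ∧ j ≤ i)) Finset.univ)

lemma rankF_lt_of_lt {m : ℕ} (v : Fin m → ℝ) {i j : Fin m}
    (h : v i < v j ∨ (v i = v j ∧ i < j)) : rankF v i < rankF v j := by
  apply Finset.card_lt_card
  constructor
  · intro k hk
    simp only [Finset.mem_filter, Finset.mem_univ, true_and] at hk ⊢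
    rcases hk with hk | ⟨hk, hk'⟩ <;> rcases h with h | ⟨h, h'⟩
    · exact Or.inl (hk.trans h)
    · exact Or.inl (h ▸ hk)
    · exact Or.inl (hk ▸ h)
    · exact Or.inr ⟨hk.trans h, hk'.trans h'.le⟩
  · intro hsub
    have hj : j ∈ Finset.univ.filter fun k => v k < v j ∨ (v k = v j ∧ k ≤ j) := by simp
    have := hsub hj
    simp only [Finset.mem_filter, Finset.mem_univ, true_and] at this
    rcases this with hlt | ⟨heq, hle⟩ <;> rcases h with h | ⟨h, h'⟩
    · exact absurd (hlt.trans h) (lt_irrefl _)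
    · exact absurd (h ▸ hlt) (lt_irrefl _)
    · exact absurd (heq ▸ h) (lt_irrefl _)
    · exact absurd (hle.trans_lt h') (lt_irrefl _)

lemma rankF_injective {m : ℕ} (v : Fin m → ℝ) : Function.Injective (rankF v) := by
  intro i j h
  by_contra hij
  rcases lt_trichotomy (v i) (v j) with hv | hv | hv
  · exact absurd h (rankF_lt_of_lt v (Or.inl hv)).ne
  · rcases lt_or_gt_of_ne (show i ≠ j from hij) with hij' | hij'
    · exact absurd h (rankF_lt_of_lt v (Or.inr ⟨hv, hij'⟩)).ne
    · exact absurd h.symm (rankF_lt_of_lt v (Or.inr ⟨hv.symm, hij'⟩)).ne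
  · exact absurd h.symm (rankF_lt_of_lt v (Or.inl hv)).ne

/-- The rank map, viewed as a permutation of `Fin m` (ranks shifted down by one). -/
noncomputable def rankEquiv {m : ℕ} (v : Fin m → ℝ) : Equiv.Perm (Fin m) :=
  Equiv.ofBijective (fun i => ⟨rankF v i - 1, by
      have h1 := rankF_pos v i
      have h2 := rankF_le v i
      omega⟩)
    ((Finite.injective_iff_bijective).mp (by
      intro i j h
      apply rankF_injective v
      have h1 := rankF_pos v i
      have h2 := rankF_pos v j
      have := Fin.mk.inj_iff.mp h
      omega))

lemma rankEquiv_apply {m : ℕ} (v : Fin m → ℝ) (i : Fin m) :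
    (rankEquiv v i : ℕ) = rankF v i - 1 := rfl

lemma rankF_comp {m : ℕ} (v w : Fin m → ℝ) (i : Fin m) :
    rankF v ((rankEquiv v).symm (rankEquiv w i)) = rankF w i := by
  have h : rankEquiv v ((rankEquiv v).symm (rankEquiv w i)) = rankEquiv w i :=
    (rankEquiv v).apply_symm_apply _
  have h' : (rankEquiv v ((rankEquiv v).symm (rankEquiv w i)) : ℕ) = (rankEquiv w i : ℕ) := by
    rw [h]
  rw [rankEquiv_apply, rankEquiv_apply] at h'
  have h1 := rankF_pos v ((rankEquiv v).symm (rankEquiv w i))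
  have h2 := rankF_pos w i
  omega

/-- Under within-stratum exchangeability of the treatment assignment, the stratified
rank score statistic is distribution free. -/
theorem stmt0 {Ω : Type*} [MeasurableSpace Ω] (P : Measure Ω) [IsProbabilityMeasure P]
    (S : ℕ) (hS : 1 ≤ S) (n : Fin S → ℕ) (hn : ∀ s, 1 ≤ n s)
    (φ : Fin S → ℕ → ℝ)
    (hφ : ∀ s, ∀ a b : ℕ, 1 ≤ a → a ≤ b → b ≤ n s → φ s a ≤ φ s b)
    (Z : Ω → ∀ s, Fin (n s) → Bool) (hZ : Measurable Z)
    (hperm : ∀ ψ : ∀ s, Equiv.Perm (Fin (n s)),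
      P.map (fun ω => fun s i => Z ω s (ψ s i)) = P.map Z)
    (y y' : ∀ s, Fin (n s) → ℝ) :
    P.map (fun ω => stratStat φ (Z ω) y) = P.map (fun ω => stratStat φ (Z ω) y') := by
  -- the permutation turning ranks of y' into ranks of y
  set ψ : ∀ s, Equiv.Perm (Fin (n s)) :=
    fun s => (rankEquiv (y' s)).trans (rankEquiv (y s)).symm with hψ
  have hrank : ∀ s i, rankF (y s) (ψ s i) = rankF (y' s) i := by
    intro s i
    exact rankF_comp (y s) (y' s) i
  -- rewriting the statistic
  have hstat : ∀ z : ∀ s, Fin (n s) → Bool,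
      stratStat φ z y' = stratStat φ (fun s j => z s ((ψ s).symm j)) y := by
    intro z
    unfold stratStat
    refine Finset.sum_congr rfl fun s _ => ?_
    refine Fintype.sum_bijective (ψ s) (ψ s).bijective _ _ fun i => ?_
    simp [hrank s i]
  -- measurability of the statistic as a function of z
  have hmeas : Measurable (fun z : ∀ s, Fin (n s) → Bool => stratStat φ z y) := by
    unfold stratStat
    apply Finset.measurable_sum
    intro s _
    apply Finset.measurable_sum
    intro i _
    exact (measurable_of_countable (fun b : Bool => if b then φ s (rankF (y s) i) else 0)).comp
      ((measurable_pi_apply i).comp (measurable_pi_apply s))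
  have hmeasperm : Measurable
      (fun z : ∀ s, Fin (n s) → Bool => fun s j => z s ((ψ s).symm j)) := by
    apply measurable_pi_lambda
    intro s
    apply measurable_pi_lambda
    intro j
    exact (measurable_pi_apply _).comp (measurable_pi_apply s)
  calc P.map (fun ω => stratStat φ (Z ω) y)
      = (P.map Z).map (fun z => stratStat φ z y) := by
        rw [Measure.map_map hmeas hZ]; rfl
    _ = (P.map (fun ω => fun s j => Z ω s ((ψ s).symm j))).map
          (fun z => stratStat φ z y) := by
        rw [hperm (fun s => (ψ s).symm)]
    _ = P.map (fun ω => stratStat φ (Z ω) y') := by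
        have heq : (fun ω => fun s j => Z ω s ((ψ s).symm j)) =
            (fun z : ∀ s, Fin (n s) → Bool => fun s j => z s ((ψ s).symm j)) ∘ Z := rfl
        rw [heq, Measure.map_map hmeas (hmeasperm.comp hZ)]
        congr 1
        ext ω
        exact (hstat (Z ω)).symm
end

section
/- (i) p̲_{k,c} ≤ p_{k,c} ≤ p̄_{k,c} for all integers 0 ≤ k ≤ N and all c ∈ ℝ; (ii) p̄_{k,c} ≤ p̲_{k,c'} for all integers 0 ≤ k ≤ N and all reals c < c'. (In words: the p-value computed with random/index tie-breaking is sandwiched between the p-values obtained by ordering all control units after, respectively before, the treated units within ties, and the upper-bound p-value at threshold c is below the lower-bound p-value at any larger threshold c'.) -/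
open Finset

/-- Within-stratum rank with ties broken by a fixed ordering `π`. -/
noncomputable def rnkA {m : ℕ} (π : Equiv.Perm (Fin m)) (v : Fin m → ℝ) (i : Fin m) : ℕ :=
  (Finset.univ.filter fun j => v j < v i ∨ (v j = v i ∧ π j ≤ π i)).card

/-- Rank with ties broken first placing control units (z = false) before treated ones. -/
noncomputable def rnkBar {m : ℕ} (z : Fin m → Bool) (π : Equiv.Perm (Fin m))
    (v : Fin m → ℝ) (i : Fin m) : ℕ :=
  (Finset.univ.filter fun j => v j < v i ∨ (v j = v i ∧ z j = false ∧ z i = true) ∨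
    (v j = v i ∧ z j = z i ∧ π j ≤ π i)).card

/-- Rank with ties broken first placing treated units (z = true) before control ones. -/
noncomputable def rnkLow {m : ℕ} (z : Fin m → Bool) (π : Equiv.Perm (Fin m))
    (v : Fin m → ℝ) (i : Fin m) : ℕ :=
  (Finset.univ.filter fun j => v j < v i ∨ (v j = v i ∧ z j = true ∧ z i = false) ∨
    (v j = v i ∧ z j = z i ∧ π j ≤ π i)).card

/-- Stratified rank sum statistic using ranks `rnkA`. -/
noncomputable def tA {S : ℕ} {n : Fin S → ℕ} (φ : Fin S → ℕ → ℝ)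
    (π : ∀ s, Equiv.Perm (Fin (n s))) (z : ∀ s, Fin (n s) → Bool)
    (y : ∀ s, Fin (n s) → ℝ) : ℝ :=
  ∑ s, ∑ i, if z s i then φ s (rnkA (π s) (y s) i) else 0

/-- Stratified rank sum statistic using ranks `rnkBar`. -/
noncomputable def tBar {S : ℕ} {n : Fin S → ℕ} (φ : Fin S → ℕ → ℝ)
    (π : ∀ s, Equiv.Perm (Fin (n s))) (z : ∀ s, Fin (n s) → Bool)
    (y : ∀ s, Fin (n s) → ℝ) : ℝ :=
  ∑ s, ∑ i, if z s i then φ s (rnkBar (z s) (π s) (y s) i) else 0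

/-- Stratified rank sum statistic using ranks `rnkLow`. -/
noncomputable def tLow {S : ℕ} {n : Fin S → ℕ} (φ : Fin S → ℕ → ℝ)
    (π : ∀ s, Equiv.Perm (Fin (n s))) (z : ∀ s, Fin (n s) → Bool)
    (y : ∀ s, Fin (n s) → ℝ) : ℝ :=
  ∑ s, ∑ i, if z s i then φ s (rnkLow (z s) (π s) (y s) i) else 0

/- ### Auxiliary lemmas -/

lemma one_le_rnkA {m : ℕ} (π : Equiv.Perm (Fin m)) (v : Fin m → ℝ) (i : Fin m) :
    1 ≤ rnkA π v i :=
  Finset.card_pos.mpr ⟨i, by simp [rnkA]⟩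

lemma rnkA_le {m : ℕ} (π : Equiv.Perm (Fin m)) (v : Fin m → ℝ) (i : Fin m) :
    rnkA π v i ≤ m := by
  simpa [rnkA] using Finset.card_filter_le (Finset.univ : Finset (Fin m)) _

lemma one_le_rnkBar {m : ℕ} (z : Fin m → Bool) (π : Equiv.Perm (Fin m)) (v : Fin m → ℝ)
    (i : Fin m) : 1 ≤ rnkBar z π v i :=
  Finset.card_pos.mpr ⟨i, by simp [rnkBar]⟩

lemma rnkBar_le {m : ℕ} (z : Fin m → Bool) (π : Equiv.Perm (Fin m)) (v : Fin m → ℝ)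
    (i : Fin m) : rnkBar z π v i ≤ m := by
  simpa [rnkBar] using Finset.card_filter_le (Finset.univ : Finset (Fin m)) _

lemma one_le_rnkLow {m : ℕ} (z : Fin m → Bool) (π : Equiv.Perm (Fin m)) (v : Fin m → ℝ)
    (i : Fin m) : 1 ≤ rnkLow z π v i :=
  Finset.card_pos.mpr ⟨i, by simp [rnkLow]⟩

lemma rnkLow_le {m : ℕ} (z : Fin m → Bool) (π : Equiv.Perm (Fin m)) (v : Fin m → ℝ)
    (i : Fin m) : rnkLow z π v i ≤ m := by
  simpa [rnkLow] using Finset.card_filter_le (Finset.univ : Finset (Fin m)) _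

lemma rnkLow_le_rnkA {m : ℕ} (z : Fin m → Bool) (π : Equiv.Perm (Fin m)) (v : Fin m → ℝ)
    (i : Fin m) (hi : z i = true) : rnkLow z π v i ≤ rnkA π v i := by
  apply Finset.card_le_card
  intro j hj
  simp only [Finset.mem_filter, Finset.mem_univ, true_and] at hj ⊢
  rcases hj with h | ⟨_, _, h3⟩ | ⟨h1, _, h3⟩
  · exact Or.inl h
  · rw [hi] at h3; exact absurd h3 (by simp)
  · exact Or.inr ⟨h1, h3⟩

lemma rnkA_le_rnkBar {m : ℕ} (z : Fin m → Bool) (π : Equiv.Perm (Fin m)) (v : Fin m → ℝ)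
    (i : Fin m) (hi : z i = true) : rnkA π v i ≤ rnkBar z π v i := by
  apply Finset.card_le_card
  intro j hj
  simp only [Finset.mem_filter, Finset.mem_univ, true_and] at hj ⊢
  rcases hj with h | ⟨h1, h2⟩
  · exact Or.inl h
  · cases hzj : z j
    · exact Or.inr (Or.inl ⟨h1, rfl, hi⟩)
    · exact Or.inr (Or.inr ⟨h1, hi.symm, h2⟩)

lemma rnkBar_shift {m : ℕ} (z : Fin m → Bool) (π : Equiv.Perm (Fin m)) (v : Fin m → ℝ)
    (ε : ℝ) (hε : 0 < ε) (hgap : ∀ j k : Fin m, v j ≠ v k → ε < |v j - v k|)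
    (i : Fin m) (hi : z i = true) :
    rnkBar z π (fun j => v j - if z j then ε else 0) i = rnkLow z π v i := by
  unfold rnkBar rnkLow
  congr 1
  apply Finset.filter_congr
  intro j _
  cases hzj : z j
  · simp only [hzj, hi]
    simp
    constructor
    · rintro (h | h)
      · linarith
      · exfalso
        by_cases hvv : v j = v i
        · rw [hvv] at h; linarith
        · have hg := hgap j i hvv
          rw [h, show v i - ε - v i = -ε by ring, abs_neg, abs_of_pos hε] at hg
          exact lt_irrefl _ hg
    · intro h
      by_cases hvv : v j = v i
      · exfalso; rw [hvv] at h; exact lt_irrefl _ h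
      · have hg := hgap j i hvv
        rw [abs_of_neg (by linarith)] at hg
        left; linarith
  · simp [hzj, hi]

lemma tBar_shift {S : ℕ} {n : Fin S → ℕ} (φ : Fin S → ℕ → ℝ)
    (π : ∀ s, Equiv.Perm (Fin (n s))) (z : ∀ s, Fin (n s) → Bool)
    (y : ∀ s, Fin (n s) → ℝ) (ε : ℝ) (hε : 0 < ε)
    (hgap : ∀ s (j k : Fin (n s)), y s j ≠ y s k → ε < |y s j - y s k|) :
    tBar φ π z (fun s j => y s j - if z s j then ε else 0) = tLow φ π z y := by
  unfold tBar tLow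
  apply Finset.sum_congr rfl
  intro s _
  apply Finset.sum_congr rfl
  intro i _
  cases hzi : z s i
  · simp
  · simp only [if_pos]
    rw [rnkBar_shift (z s) (π s) (y s) ε hε (hgap s) i hzi]

/-- The p-value computed with index tie-breaking is sandwiched between the p-values
obtained by ordering control units after/before treated units within ties, and the
upper-bound p-value at `c` is below the lower-bound p-value at any `c' > c`. -/
theorem stmt1 (S : ℕ) (hS : 1 ≤ S) (n : Fin S → ℕ) (hn : ∀ s, 1 ≤ n s)
    (z : ∀ s, Fin (n s) → Bool) (Y : ∀ s, Fin (n s) → ℝ)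
    (φ : Fin S → ℕ → ℝ)
    (hφ : ∀ s, ∀ a b : ℕ, 1 ≤ a → a ≤ b → b ≤ n s → φ s a ≤ φ s b)
    (π : ∀ s, Equiv.Perm (Fin (n s)))
    (G : ℝ → ℝ) (hG : Antitone G) :
    let N := ∑ s, n s
    let adj : (∀ s, Fin (n s) → ℝ) → ∀ s, Fin (n s) → ℝ :=
      fun δ s i => Y s i - if z s i then δ s i else 0
    let H : ℕ → ℝ → Set (∀ s, Fin (n s) → ℝ) := fun k c =>
      {δ | ∑ s, (Finset.univ.filter fun i => c < δ s i).card ≤ N - k}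
    let p : ℕ → ℝ → ℝ := fun k c => G (sInf {v | ∃ δ ∈ H k c, v = tA φ π z (adj δ)})
    let pbar : ℕ → ℝ → ℝ := fun k c => G (sInf {v | ∃ δ ∈ H k c, v = tLow φ π z (adj δ)})
    let plow : ℕ → ℝ → ℝ := fun k c => G (sInf {v | ∃ δ ∈ H k c, v = tBar φ π z (adj δ)})
    (∀ k ≤ N, ∀ c : ℝ, plow k c ≤ p k c ∧ p k c ≤ pbar k c) ∧
    (∀ k ≤ N, ∀ c c' : ℝ, c < c' → pbar k c ≤ plow k c') := by
  intro N adj H p pbar plow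
  classical
  -- uniform lower bound for all three statistics
  set L : ℝ := ∑ s, ∑ i, if z s i then φ s 1 else 0 with hL
  have hLB : ∀ (r : ∀ s, Fin (n s) → ℕ),
      (∀ s i, 1 ≤ r s i ∧ r s i ≤ n s) →
      L ≤ ∑ s, ∑ i, if z s i then φ s (r s i) else 0 := by
    intro r hr
    apply Finset.sum_le_sum
    intro s _
    apply Finset.sum_le_sum
    intro i _
    cases hzi : z s i
    · simp
    · simp only [if_pos]
      exact hφ s 1 (r s i) le_rfl (hr s i).1 (hr s i).2
  have hLA : ∀ y, L ≤ tA φ π z y := fun y =>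
    hLB _ (fun s i => ⟨one_le_rnkA _ _ _, rnkA_le _ _ _⟩)
  have hLBar : ∀ y, L ≤ tBar φ π z y := fun y =>
    hLB _ (fun s i => ⟨one_le_rnkBar _ _ _ _, rnkBar_le _ _ _ _⟩)
  have hLLow : ∀ y, L ≤ tLow φ π z y := fun y =>
    hLB _ (fun s i => ⟨one_le_rnkLow _ _ _ _, rnkLow_le _ _ _ _⟩)
  -- every H k c is nonempty (take the constant c)
  have hmem : ∀ (k : ℕ) (c : ℝ), (fun (_ : Fin S) (_ : Fin (n _)) => c) ∈ H k c := by
    intro k c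
    show ∑ s, (Finset.univ.filter fun _ => c < c).card ≤ N - k
    have : ∀ s : Fin S, (Finset.univ.filter fun (_ : Fin (n s)) => c < c).card = 0 := by
      intro s
      simp [Finset.filter_eq_empty_iff]
    simp [this]
  -- key sInf comparison principle
  have key : ∀ (A B : Set ℝ), (∀ a ∈ A, L ≤ a) → B.Nonempty →
      (∀ b ∈ B, ∃ a ∈ A, a ≤ b) → sInf A ≤ sInf B := by
    intro A B hA hB h
    apply le_csInf hB
    intro b hb
    obtain ⟨a, ha, hab⟩ := h b hb
    exact le_trans (csInf_le ⟨L, fun x hx => hA x hx⟩ ha) hab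
  constructor
  · intro k hk c
    constructor
    · -- plow ≤ p : need sInf(tA-values) ≤ sInf(tBar-values)
      apply hG
      apply key
      · rintro a ⟨δ, hδ, rfl⟩; exact hLA _
      · exact ⟨tBar φ π z (adj fun _ _ => c), ⟨_, hmem k c, rfl⟩⟩
      · rintro b ⟨δ, hδ, rfl⟩
        refine ⟨tA φ π z (adj δ), ⟨δ, hδ, rfl⟩, ?_⟩
        apply Finset.sum_le_sum
        intro s _
        apply Finset.sum_le_sum
        intro i _
        cases hzi : z s i
        · simp
        · simp only [if_pos]
          exact hφ s _ _ (one_le_rnkA _ _ _) (rnkA_le_rnkBar _ _ _ _ hzi)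
            (rnkBar_le _ _ _ _)
    · -- p ≤ pbar : need sInf(tLow-values) ≤ sInf(tA-values)
      apply hG
      apply key
      · rintro a ⟨δ, hδ, rfl⟩; exact hLLow _
      · exact ⟨tA φ π z (adj fun _ _ => c), ⟨_, hmem k c, rfl⟩⟩
      · rintro b ⟨δ, hδ, rfl⟩
        refine ⟨tLow φ π z (adj δ), ⟨δ, hδ, rfl⟩, ?_⟩
        apply Finset.sum_le_sum
        intro s _
        apply Finset.sum_le_sum
        intro i _
        cases hzi : z s i
        · simp
        · simp only [if_pos]
          exact hφ s _ _ (one_le_rnkLow _ _ _ _) (rnkLow_le_rnkA _ _ _ _ hzi)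
            (rnkA_le _ _ _)
  · -- pbar k c ≤ plow k c'
    intro k hk c c' hcc'
    apply hG
    apply key
    · rintro a ⟨δ, hδ, rfl⟩; exact hLBar _
    · exact ⟨tLow φ π z (adj fun _ _ => c), ⟨_, hmem k c, rfl⟩⟩
    · rintro b ⟨δ, hδ, rfl⟩
      set y : ∀ s, Fin (n s) → ℝ := adj δ with hy
      -- choose a small ε
      set gaps : Finset ℝ :=
        ((Finset.univ : Finset ((s : Fin S) × Fin (n s) × Fin (n s))).image
          fun q => |y q.1 q.2.1 - y q.1 q.2.2|).filter (0 < ·) with hgaps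
      set F : Finset ℝ := insert (c' - c) gaps with hF
      have hFne : F.Nonempty := ⟨c' - c, Finset.mem_insert_self _ _⟩
      set μ : ℝ := F.min' hFne with hμ
      have hFpos : ∀ x ∈ F, 0 < x := by
        intro x hx
        rcases Finset.mem_insert.mp hx with h | h
        · rw [h]; linarith
        · exact (Finset.mem_filter.mp h).2
      have hμpos : 0 < μ := hFpos _ (Finset.min'_mem _ _)
      set ε : ℝ := μ / 2 with hε
      have hεpos : 0 < ε := by positivity
      have hεle : ε ≤ c' - c := by
        have := Finset.min'_le F _ (Finset.mem_insert_self (c' - c) gaps)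
        rw [hε]; linarith
      have hgap : ∀ s (j k : Fin (n s)), y s j ≠ y s k → ε < |y s j - y s k| := by
        intro s j k hne
        have hpos : 0 < |y s j - y s k| := abs_pos.mpr (sub_ne_zero.mpr hne)
        have hmemF : |y s j - y s k| ∈ F := by
          apply Finset.mem_insert_of_mem
          rw [hgaps]
          refine Finset.mem_filter.mpr ⟨?_, hpos⟩
          exact Finset.mem_image.mpr ⟨⟨s, j, k⟩, Finset.mem_univ _, rfl⟩
        have := Finset.min'_le F _ hmemF
        rw [hε]; linarith
      -- the shifted δ
      set δ' : ∀ s, Fin (n s) → ℝ := fun s i => δ s i + ε with hδ'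
      have hδ'mem : δ' ∈ H k c' := by
        show ∑ s, (Finset.univ.filter fun i => c' < δ' s i).card ≤ N - k
        refine le_trans (Finset.sum_le_sum fun s _ => ?_) hδ
        apply Finset.card_le_card
        intro i hi
        simp only [Finset.mem_filter, Finset.mem_univ, true_and] at hi ⊢
        simp only [hδ'] at hi; linarith
      refine ⟨tBar φ π z (adj δ'), ⟨δ', hδ'mem, rfl⟩, ?_⟩
      have hadj : adj δ' = fun s j => y s j - if z s j then ε else 0 := by
        funext s j
        show Y s j - (if z s j then δ s j + ε else 0)
          = (Y s j - if z s j then δ s j else 0) - if z s j then ε else 0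
        cases z s j <;> simp <;> ring
      rw [hadj, tBar_shift φ π z y ε hεpos hgap]
end

section
/- The map Ψ̃ is a monotone dominating transformation, and it is optimal among all monotone dominating transformations: for every m ≥ 1, every a ∈ ℝ^m and every monotone dominating transformation Ψ, one has Σ_{i=1}^j Ψ̃_i(a) ≤ Σ_{i=1}^j Ψ_i(a) for all 1 ≤ j ≤ m. -/
/-- Cumulative sums `C i = Σ_{t=1}^i Ψ̃_t(a)` of the optimal monotone dominating
transformation of the vector `(a 1, …, a m)`. -/
noncomputable def psiSum (m : ℕ) (a : ℕ → ℝ) : ℕ → ℝ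
  | 0 => 0
  | i + 1 => psiSum m a i +
      sSup {x : ℝ | ∃ j : ℕ, i + 1 ≤ j ∧ j ≤ m ∧
        x = ((∑ t ∈ Finset.Icc 1 j, a t) - psiSum m a i) / ((j : ℝ) - (i : ℝ))}

/-- The optimal monotone dominating transformation `Ψ̃` (indices 1,…,m):
`Ψ̃_1(a) = max_{1≤j≤m} (Σ_{t≤j} a_t)/j` and
`Ψ̃_i(a) = max_{i≤j≤m} (Σ_{t≤j} a_t − Σ_{t<i} Ψ̃_t(a))/(j−i+1)`. -/
noncomputable def psiT (m : ℕ) (a : ℕ → ℝ) (i : ℕ) : ℝ :=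
  psiSum m a i - psiSum m a (i - 1)

/-- `Ψ` is a monotone dominating transformation: for every length `m` and vector
`(a 1, …, a m)`, the transformed sequence is nonincreasing and its partial sums
dominate those of `a`. -/
def MonoDomTrans (Ψ : ℕ → (ℕ → ℝ) → ℕ → ℝ) : Prop :=
  ∀ (m : ℕ) (a : ℕ → ℝ),
    (∀ i j : ℕ, 1 ≤ i → i ≤ j → j ≤ m → Ψ m a j ≤ Ψ m a i) ∧
    (∀ j : ℕ, 1 ≤ j → j ≤ m →
      ∑ i ∈ Finset.Icc 1 j, a i ≤ ∑ i ∈ Finset.Icc 1 j, Ψ m a i)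

/-- The set over which the sup is taken at step `i+1`. -/
def dSet (m : ℕ) (a : ℕ → ℝ) (i : ℕ) : Set ℝ :=
  {x : ℝ | ∃ j : ℕ, i + 1 ≤ j ∧ j ≤ m ∧
    x = ((∑ t ∈ Finset.Icc 1 j, a t) - psiSum m a i) / ((j : ℝ) - (i : ℝ))}

lemma psiSum_succ (m : ℕ) (a : ℕ → ℝ) (i : ℕ) :
    psiSum m a (i + 1) = psiSum m a i + sSup (dSet m a i) := rfl

lemma dSet_finite (m : ℕ) (a : ℕ → ℝ) (i : ℕ) : (dSet m a i).Finite := by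
  apply Set.Finite.subset (Set.Finite.image
    (f := fun j : ℕ => ((∑ t ∈ Finset.Icc 1 j, a t) - psiSum m a i) / ((j : ℝ) - (i : ℝ)))
    (Set.finite_Icc (i + 1) m))
  rintro x ⟨j, h1, h2, rfl⟩
  exact ⟨j, ⟨h1, h2⟩, rfl⟩

lemma le_dSup (m : ℕ) (a : ℕ → ℝ) {i j : ℕ} (h1 : i + 1 ≤ j) (h2 : j ≤ m) :
    ((∑ t ∈ Finset.Icc 1 j, a t) - psiSum m a i) / ((j : ℝ) - (i : ℝ)) ≤ sSup (dSet m a i) :=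
  le_csSup (dSet_finite m a i).bddAbove ⟨j, h1, h2, rfl⟩

lemma dSup_mem (m : ℕ) (a : ℕ → ℝ) {i : ℕ} (h : i + 1 ≤ m) :
    sSup (dSet m a i) ∈ dSet m a i :=
  Set.Nonempty.csSup_mem ⟨_, ⟨i + 1, le_refl _, h, rfl⟩⟩ (dSet_finite m a i)

lemma d_step (m : ℕ) (a : ℕ → ℝ) {i : ℕ} (h : i + 2 ≤ m) :
    sSup (dSet m a (i + 1)) ≤ sSup (dSet m a i) := by
  obtain ⟨j, hj1, hj2, hje⟩ := dSup_mem m a (show i + 1 + 1 ≤ m from h)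
  set D := sSup (dSet m a i) with hD
  have hle := le_dSup m a (show i + 1 ≤ j by omega) hj2
  have hjR : ((i : ℝ)) + 2 ≤ (j : ℝ) := by exact_mod_cast hj1
  have hpos : (0 : ℝ) < (j : ℝ) - (i : ℝ) := by linarith
  rw [div_le_iff₀ hpos] at hle
  rw [hje, psiSum_succ]
  have hpos2 : (0 : ℝ) < (j : ℝ) - ((i + 1 : ℕ) : ℝ) := by push_cast; linarith
  rw [div_le_iff₀ hpos2]
  push_cast
  nlinarith

lemma d_anti (m : ℕ) (a : ℕ → ℝ) (i : ℕ) :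
    ∀ j : ℕ, i ≤ j → j + 1 ≤ m → sSup (dSet m a j) ≤ sSup (dSet m a i) := by
  intro j
  induction j with
  | zero =>
      intro h _
      obtain rfl : i = 0 := Nat.le_zero.mp h
      exact le_rfl
  | succ j ih =>
      intro hij hjm
      rcases Nat.lt_or_ge i (j + 1) with h | h
      · exact le_trans (d_step m a hjm) (ih (by omega) (by omega))
      · obtain rfl : i = j + 1 := by omega
        exact le_rfl

lemma psiT_eq (m : ℕ) (a : ℕ → ℝ) (i : ℕ) :
    psiT m a (i + 1) = sSup (dSet m a i) := by
  rw [psiT, Nat.add_sub_cancel, psiSum_succ]; ring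

lemma sum_psiT (m : ℕ) (a : ℕ → ℝ) (j : ℕ) :
    ∑ i ∈ Finset.Icc 1 j, psiT m a i = psiSum m a j := by
  induction j with
  | zero => simp [psiSum]
  | succ j ih =>
      rw [Finset.sum_Icc_succ_top (by omega : 1 ≤ j + 1), ih, psiT, Nat.add_sub_cancel]
      ring

lemma dom (m : ℕ) (a : ℕ → ℝ) (j : ℕ) (h1 : 1 ≤ j) (h2 : j ≤ m) :
    ∑ t ∈ Finset.Icc 1 j, a t ≤ psiSum m a j := by
  obtain ⟨k, rfl⟩ : ∃ k, j = k + 1 := ⟨j - 1, by omega⟩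
  have hle := le_dSup m a (le_refl (k + 1)) h2
  rw [psiSum_succ]
  have hone : ((k + 1 : ℕ) : ℝ) - (k : ℝ) = 1 := by push_cast; ring
  rw [hone, div_one] at hle
  linarith

lemma hIcc (n : ℕ) : Finset.Icc 1 n = Finset.Ioc 0 n := by
  ext x; simp [Finset.mem_Icc, Finset.mem_Ioc]; omega

lemma opt (m : ℕ) (a : ℕ → ℝ) (Ψ : ℕ → (ℕ → ℝ) → ℕ → ℝ) (hΨ : MonoDomTrans Ψ) :
    ∀ j : ℕ, j ≤ m → psiSum m a j ≤ ∑ i ∈ Finset.Icc 1 j, Ψ m a i := by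
  intro j
  induction j with
  | zero => simp [psiSum]
  | succ j ih =>
      intro hj
      have ihj := ih (by omega)
      obtain ⟨k, hk1, hk2, hke⟩ := dSup_mem m a hj
      have hjk : j ≤ k := by omega
      have hsplit : (∑ i ∈ Finset.Ioc 0 j, Ψ m a i) + ∑ i ∈ Finset.Ioc j k, Ψ m a i =
          ∑ i ∈ Finset.Ioc 0 k, Ψ m a i :=
        Finset.sum_Ioc_consecutive _ (Nat.zero_le j) hjk
      have hbound : ∑ i ∈ Finset.Ioc j k, Ψ m a i ≤ ((k - j : ℕ) : ℝ) * Ψ m a (j + 1) := by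
        have hcard := Finset.sum_le_card_nsmul (Finset.Ioc j k) (fun i => Ψ m a i)
          (Ψ m a (j + 1)) (fun i hi => by
            rw [Finset.mem_Ioc] at hi
            exact (hΨ m a).1 (j + 1) i (by omega) (by omega) (by omega))
        simpa [Nat.card_Ioc, nsmul_eq_mul] using hcard
      rw [← hIcc, ← hIcc] at hsplit
      have hdomk := (hΨ m a).2 k (by omega) hk2
      rw [psiSum_succ, hke]
      rw [Finset.sum_Icc_succ_top (by omega : 1 ≤ j + 1)]
      set P := ∑ i ∈ Finset.Icc 1 j, Ψ m a i
      set C := psiSum m a j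
      set ψ := Ψ m a (j + 1)
      set Sk := ∑ t ∈ Finset.Icc 1 k, a t
      have hn1 : (1 : ℝ) ≤ (k : ℝ) - (j : ℝ) := by
        have : ((j : ℝ)) + 1 ≤ (k : ℝ) := by exact_mod_cast hk1
        linarith
      have hcast : ((k - j : ℕ) : ℝ) = (k : ℝ) - (j : ℝ) := by
        push_cast [Nat.cast_sub hjk]; ring
      rw [hcast] at hbound
      have hSk : Sk ≤ P + ((k : ℝ) - (j : ℝ)) * ψ := by
        calc Sk ≤ ∑ i ∈ Finset.Icc 1 k, Ψ m a i := hdomk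
          _ = P + ∑ i ∈ Finset.Ioc j k, Ψ m a i := hsplit.symm
          _ ≤ P + ((k : ℝ) - (j : ℝ)) * ψ := by linarith
      have hpos : (0 : ℝ) < (k : ℝ) - (j : ℝ) := by linarith
      have key : (Sk - C) / ((k : ℝ) - (j : ℝ)) ≤ P - C + ψ := by
        rw [div_le_iff₀ hpos]
        nlinarith [mul_nonneg (sub_nonneg.2 ihj) (by linarith : (0:ℝ) ≤ (k : ℝ) - (j : ℝ) - 1)]
      linarith

/-- `Ψ̃` is a monotone dominating transformation, and it is optimal: its partial sums
are below those of any monotone dominating transformation. -/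
theorem stmt2 :
    MonoDomTrans psiT ∧
    ∀ Ψ : ℕ → (ℕ → ℝ) → ℕ → ℝ, MonoDomTrans Ψ →
      ∀ (m : ℕ) (a : ℕ → ℝ) (j : ℕ), 1 ≤ m → 1 ≤ j → j ≤ m →
        ∑ i ∈ Finset.Icc 1 j, psiT m a i ≤ ∑ i ∈ Finset.Icc 1 j, Ψ m a i := by
  constructor
  · intro m a
    constructor
    · intro i j h1 h2 h3
      obtain ⟨i', rfl⟩ : ∃ t, i = t + 1 := ⟨i - 1, by omega⟩
      obtain ⟨j', rfl⟩ : ∃ t, j = t + 1 := ⟨j - 1, by omega⟩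
      rw [psiT_eq, psiT_eq]
      exact d_anti m a i' j' (by omega) h3
    · intro j h1 h2
      rw [sum_psiT]
      exact dom m a j h1 h2
  · intro Ψ hΨ m a j _ _ hj2
    rw [sum_psiT]
    exact opt m a Ψ hΨ j hj2
end

section
/- Let N ≥ 1 be an integer, α ∈ ℝ, and p : {0,1,…,N} × ℝ → ℝ be nondecreasing in its second argument and nonincreasing in its first argument (p(k,c) ≤ p(k,c') whenever c ≤ c', and p(k',c) ≤ p(k,c) whenever k ≤ k'), with p(0,c) > α for every c ∈ ℝ. Define I_α(k) = {c ∈ ℝ : p(k,c) > α} for 1 ≤ k ≤ N and S_α(c) = {N − k : 0 ≤ k ≤ N, p(k,c) > α}. Then: (i) each I_α(k) is upward closed (if c ∈ I_α(k) and c' ≥ c then c' ∈ I_α(k)); (ii) the following three subsets of ℝ^N coincide: {δ : δ_(k) ∈ I_α(k) for every 1 ≤ k ≤ N} = {δ : #{i : δ_i > c} ∈ S_α(c) for every c ∈ ℝ} = ⋂_{(k,c) : 0 ≤ k ≤ N, p(k,c) ≤ α} (ℝ^N \ H_{k,c}). -/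
open Finset

lemma perm_filter_card {N : ℕ} (δ : Fin N → ℝ) (P : ℝ → Prop) [DecidablePred P] :
    (univ.filter fun j => P (δ (Tuple.sort δ j))).card = (univ.filter fun i => P (δ i)).card := by
  apply Finset.card_nbij (fun j => Tuple.sort δ j)
  · intro j hj; simp_all
  · intro a _ b _ h; exact (Tuple.sort δ).injective h
  · intro i hi
    refine ⟨(Tuple.sort δ).symm i, by simp_all, by simp⟩

lemma aux_key {N : ℕ} (δ : Fin N → ℝ) (k : Fin N) (c : ℝ) :
    ((univ.filter fun i => c < δ i).card ≤ N - (k.1 + 1)) ↔ δ (Tuple.sort δ k) ≤ c := by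
  set f := δ ∘ Tuple.sort δ with hf
  have hmono : Monotone f := Tuple.monotone_sort δ
  have h1 : (univ.filter fun j => f j ≤ c).card = (univ.filter fun i => δ i ≤ c).card :=
    perm_filter_card δ (fun x => x ≤ c)
  have h2 : (univ.filter fun i => c < δ i).card + (univ.filter fun i => δ i ≤ c).card = N := by
    have := Finset.card_filter_add_card_filter_not (s := (univ : Finset (Fin N)))
      (p := fun i => c < δ i)
    simpa [not_lt] using this
  have hL : (univ.filter fun i => δ i ≤ c).card ≤ N :=
    (Finset.card_filter_le _ _).trans_eq (by simp)
  have hkN : k.1 < N := k.2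
  have hmain : k.1 + 1 ≤ (univ.filter fun j => f j ≤ c).card ↔ f k ≤ c := by
    constructor
    · intro h
      by_contra hc
      push_neg at hc
      have hsub : (univ.filter fun j => f j ≤ c) ⊆ Finset.Iio k := by
        intro j hj
        simp only [mem_filter] at hj
        rw [Finset.mem_Iio]
        by_contra hjk
        push_neg at hjk
        exact absurd (le_trans (hmono hjk) hj.2) (not_le.mpr hc)
      have := Finset.card_le_card hsub
      rw [Fin.card_Iio] at this
      omega
    · intro h
      have hsub : Finset.Iic k ⊆ (univ.filter fun j => f j ≤ c) := by
        intro j hj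
        rw [Finset.mem_Iic] at hj
        simp only [mem_filter, mem_univ, true_and]
        exact le_trans (hmono hj) h
      have := Finset.card_le_card hsub
      rwa [Fin.card_Iic] at this
  rw [h1] at hmain
  constructor
  · intro h; exact hmain.mp (by omega)
  · intro h; have := hmain.mpr h; omega

lemma aux_compl {N : ℕ} (δ : Fin N → ℝ) (c : ℝ) :
    (univ.filter fun i => c < δ i).card + (univ.filter fun i => δ i ≤ c).card = N := by
  have := Finset.card_filter_add_card_filter_not (s := (univ : Finset (Fin N)))
    (p := fun i => c < δ i)
  simpa [not_lt] using this

/-- Monotonicity of the p-values in the quantile index and the threshold yields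
simultaneously valid confidence sets: (i) each confidence set `I_α(k)` for the k-th
order statistic is upward closed; (ii) the intersection over k of the events
`δ_(k) ∈ I_α(k)` equals the intersection over c of `#{i : δ_i > c} ∈ S_α(c)`, and both
equal the intersection of the complements of the rejected null sets `H_{k,c}`. -/
theorem stmt3 (N : ℕ) (hN : 1 ≤ N) (α : ℝ) (p : ℕ → ℝ → ℝ)
    (hpc : ∀ k ≤ N, ∀ c c' : ℝ, c ≤ c' → p k c ≤ p k c')
    (hpk : ∀ k k' : ℕ, k ≤ k' → k' ≤ N → ∀ c : ℝ, p k' c ≤ p k c)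
    (hp0 : ∀ c : ℝ, α < p 0 c) :
    (∀ k : ℕ, 1 ≤ k → k ≤ N → ∀ c c' : ℝ, α < p k c → c ≤ c' → α < p k c') ∧
    ({δ : Fin N → ℝ | ∀ k : Fin N, α < p (k.1 + 1) (δ (Tuple.sort δ k))} =
      {δ : Fin N → ℝ | ∀ c : ℝ, ∃ k ≤ N, α < p k c ∧
        (Finset.univ.filter fun i => c < δ i).card = N - k}) ∧
    ({δ : Fin N → ℝ | ∀ k : Fin N, α < p (k.1 + 1) (δ (Tuple.sort δ k))} =
      {δ : Fin N → ℝ | ∀ k ≤ N, ∀ c : ℝ, p k c ≤ α →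
        ¬ (Finset.univ.filter fun i => c < δ i).card ≤ N - k}) := by
  refine ⟨?_, ?_, ?_⟩
  · intro k _ hkN c c' hc hcc'
    exact lt_of_lt_of_le hc (hpc k hkN c c' hcc')
  · ext δ
    simp only [Set.mem_setOf_eq]
    constructor
    · intro hA c
      have h2 := aux_compl δ c
      have hL : (univ.filter fun i => δ i ≤ c).card ≤ N :=
        (Finset.card_filter_le _ _).trans_eq (by simp)
      set L := (univ.filter fun i => δ i ≤ c).card with hLdef
      refine ⟨L, hL, ?_, by omega⟩
      rcases Nat.eq_zero_or_pos L with h0 | hpos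
      · rw [h0]; exact hp0 c
      · obtain ⟨m, hm⟩ : ∃ m, L = m + 1 := ⟨L - 1, by omega⟩
        have hmN : m < N := by omega
        have hkey : δ (Tuple.sort δ ⟨m, hmN⟩) ≤ c := by
          rw [← aux_key δ ⟨m, hmN⟩ c]
          simp only [Fin.val_mk]
          omega
        have := hA ⟨m, hmN⟩
        rw [hm]
        calc α < p (m + 1) (δ (Tuple.sort δ ⟨m, hmN⟩)) := this
          _ ≤ p (m + 1) c := hpc (m + 1) (by omega) _ _ hkey
    · intro hB k
      set c := δ (Tuple.sort δ k) with hc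
      obtain ⟨k', hk'N, hpk', hcard⟩ := hB c
      have hle : (univ.filter fun i => c < δ i).card ≤ N - (k.1 + 1) :=
        (aux_key δ k c).mpr le_rfl
      have hkk' : k.1 + 1 ≤ k' := by
        have hkN : k.1 < N := k.2
        omega
      exact lt_of_lt_of_le hpk' (hpk (k.1 + 1) k' hkk' hk'N c)
  · ext δ
    simp only [Set.mem_setOf_eq]
    constructor
    · intro hA k hkN c hpkc hle
      rcases Nat.eq_zero_or_pos k with h0 | hpos
      · rw [h0] at hpkc; exact absurd (hp0 c) (not_lt.mpr hpkc)
      · obtain ⟨m, hm⟩ : ∃ m, k = m + 1 := ⟨k - 1, by omega⟩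
        have hmN : m < N := by omega
        rw [hm] at hle
        have hkey : δ (Tuple.sort δ ⟨m, hmN⟩) ≤ c := (aux_key δ ⟨m, hmN⟩ c).mp (by simpa using hle)
        have h1 := hA ⟨m, hmN⟩
        have h2 : p (m + 1) (δ (Tuple.sort δ ⟨m, hmN⟩)) ≤ p (m + 1) c :=
          hpc (m + 1) (by omega) _ _ hkey
        rw [hm] at hpkc
        linarith
    · intro hC k
      by_contra h
      push_neg at h
      have hkN : k.1 + 1 ≤ N := k.2
      have := hC (k.1 + 1) hkN (δ (Tuple.sort δ k)) h
      exact this ((aux_key δ k _).mpr le_rfl)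
end

section
/- Let S ≥ 1 and n_1,…,n_S ≥ 1 be integers, N = Σ_s n_s, and let k be an integer with 0 ≤ k ≤ N; set n_{sk} = min(n_s, N−k). Let t_s(0), t_s(1), …, t_s(n_{sk}) be arbitrary real numbers for each s, and Δ_s = (t_s(0)−t_s(1), …, t_s(n_{sk}−1)−t_s(n_{sk})) ∈ ℝ^{n_{sk}}. Then the optimal value of the linear program min Σ_{s=1}^S Σ_{l=0}^{n_{sk}} x_{sl} t_s(l) over reals x_{sl} ∈ [0,1] with Σ_{l=0}^{n_{sk}} x_{sl} = 1 for every s and Σ_{s=1}^S Σ_{l=0}^{n_{sk}} l·x_{sl} = N−k equals Σ_{s=1}^S t_s(0) − max{Σ_{s=1}^S Σ_{j=1}^{l_s} Ψ̃_j(Δ_s) : (l_1,…,l_S) integers with 0 ≤ l_s ≤ n_{sk} for all s and Σ_s l_s = N−k} (empty sums are 0). In words, the greedy algorithm based on the optimal monotone dominating transformation solves the linear programming relaxation exactly. -/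
namespace Stmt6Aux

variable (m : ℕ) (a : ℕ → ℝ)

/-- partial sums of `a` -/
noncomputable def A (j : ℕ) : ℝ := ∑ t ∈ Finset.Icc 1 j, a t

/-- the candidate set at step `i+1` -/
noncomputable def SetI (i : ℕ) : Set ℝ :=
  (fun j : ℕ => (A a j - psiSum m a i) / ((j : ℝ) - (i : ℝ))) '' (Set.Icc (i + 1) m)

lemma psiSum_succ (i : ℕ) :
    psiSum m a (i + 1) = psiSum m a i + sSup (SetI m a i) := by
  have hset : {x : ℝ | ∃ j : ℕ, i + 1 ≤ j ∧ j ≤ m ∧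
        x = ((∑ t ∈ Finset.Icc 1 j, a t) - psiSum m a i) / ((j : ℝ) - (i : ℝ))}
      = SetI m a i := by
    ext x
    simp only [SetI, Set.mem_image, Set.mem_Icc, Set.mem_setOf_eq, A]
    constructor
    · rintro ⟨j, h1, h2, h3⟩; exact ⟨j, ⟨h1, h2⟩, h3.symm⟩
    · rintro ⟨j, ⟨h1, h2⟩, h3⟩; exact ⟨j, h1, h2, h3.symm⟩
  rw [psiSum, hset]

lemma setI_finite (i : ℕ) : (SetI m a i).Finite :=
  (Set.finite_Icc _ _).image _

lemma setI_nonempty {i : ℕ} (h : i + 1 ≤ m) : (SetI m a i).Nonempty :=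
  ⟨_, Set.mem_image_of_mem _ (Set.mem_Icc.2 ⟨le_refl _, h⟩)⟩

lemma mem_setI {i j : ℕ} (h1 : i + 1 ≤ j) (h2 : j ≤ m) :
    (A a j - psiSum m a i) / ((j : ℝ) - (i : ℝ)) ∈ SetI m a i :=
  Set.mem_image_of_mem _ (Set.mem_Icc.2 ⟨h1, h2⟩)

lemma le_sSup_setI {i j : ℕ} (h1 : i + 1 ≤ j) (h2 : j ≤ m) :
    (A a j - psiSum m a i) / ((j : ℝ) - (i : ℝ)) ≤ sSup (SetI m a i) :=
  le_csSup (setI_finite m a i).bddAbove (mem_setI m a h1 h2)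

lemma jsub_pos {i j : ℕ} (h1 : i + 1 ≤ j) : (0:ℝ) < (j : ℝ) - (i : ℝ) := by
  have : (i:ℝ) + 1 ≤ (j:ℝ) := by exact_mod_cast h1
  linarith

/-- majorant: `A l ≤ C l` for `l ≤ m`. -/
lemma A_le_psiSum {l : ℕ} (h : l ≤ m) : A a l ≤ psiSum m a l := by
  cases l with
  | zero => simp [A, psiSum]
  | succ i =>
    rw [psiSum_succ]
    have hle := le_sSup_setI m a (le_refl (i+1)) h
    have hpos : (0:ℝ) < ((i+1 : ℕ) : ℝ) - (i:ℝ) := jsub_pos (le_refl (i+1))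
    rw [div_le_iff₀ hpos] at hle
    push_cast at hle ⊢
    linarith

/-- single-step monotonicity -/
lemma psiT_succ_le {i : ℕ} (h1 : 1 ≤ i) (h2 : i + 1 ≤ m) :
    psiT m a (i + 1) ≤ psiT m a i := by
  obtain ⟨i', rfl⟩ : ∃ i', i = i' + 1 := ⟨i - 1, by omega⟩
  set d := sSup (SetI m a i') with hd
  have hCi : psiSum m a (i' + 1) = psiSum m a i' + d := psiSum_succ m a i'
  have hub : ∀ j : ℕ, i' + 1 ≤ j → j ≤ m → A a j - psiSum m a i' ≤ d * ((j:ℝ) - i') := by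
    intro j hj1 hj2
    have := le_sSup_setI m a hj1 hj2
    rw [div_le_iff₀ (jsub_pos hj1)] at this
    linarith [this]
  have h1 : psiT m a (i' + 1 + 1) = sSup (SetI m a (i' + 1)) := by
    simp only [psiT, Nat.add_sub_cancel, psiSum_succ m a (i' + 1)]; ring
  have h2' : psiT m a (i' + 1) = d := by
    simp only [psiT, Nat.add_sub_cancel, hCi]; ring
  rw [h1, h2']
  apply csSup_le (setI_nonempty m a h2)
  rintro x ⟨j, hj, rfl⟩
  rw [Set.mem_Icc] at hj
  have hj1 : i' + 1 ≤ j := by omega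
  have hnum : A a j - psiSum m a (i'+1) ≤ d * ((j:ℝ) - (i'+1:ℕ)) := by
    have := hub j hj1 hj.2
    rw [hCi]
    push_cast
    push_cast at this
    nlinarith [this]
  rw [div_le_iff₀ (jsub_pos hj.1)]
  nlinarith [hnum]

/-- full monotonicity on `[1, m]` -/
lemma psiT_antitone {i j : ℕ} (h1 : 1 ≤ i) (h2 : i ≤ j) (h3 : j ≤ m) :
    psiT m a j ≤ psiT m a i := by
  induction j with
  | zero => omega
  | succ j ih =>
    rcases Nat.lt_or_ge i (j+1) with h | h
    · have hij : i ≤ j := by omega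
      exact le_trans (psiT_succ_le m a (by omega) h3) (ih hij (by omega))
    · have : i = j + 1 := by omega
      subst this; rfl



/-- from a point `i < m`, there is `j > i` with `C j = A j` and `C` linear on `[i,j]`. -/
lemma exists_linear_segment {i : ℕ} (h : i < m) :
    ∃ j : ℕ, ∃ d : ℝ, i < j ∧ j ≤ m ∧ psiSum m a j = A a j ∧
      ∀ r : ℕ, i ≤ r → r ≤ j → psiSum m a r = psiSum m a i + ((r:ℝ) - i) * d := by
  set d := sSup (SetI m a i) with hd
  obtain ⟨j₀, hj₀, hval⟩ := (setI_nonempty m a h).csSup_mem (setI_finite m a i)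
  rw [Set.mem_Icc] at hj₀
  rw [← hd] at hval
  -- A j₀ = C i + (j₀ - i) d
  have hAj₀ : A a j₀ = psiSum m a i + ((j₀:ℝ) - i) * d := by
    have hpos := jsub_pos hj₀.1
    field_simp at hval
    nlinarith [hval]
  have hub : ∀ j : ℕ, i + 1 ≤ j → j ≤ m → A a j ≤ psiSum m a i + ((j:ℝ) - i) * d := by
    intro j h1 h2
    have := le_sSup_setI m a h1 h2
    rw [← hd, div_le_iff₀ (jsub_pos h1)] at this
    linarith
  -- linearity by induction
  have hlin : ∀ r : ℕ, i ≤ r → r ≤ j₀ → psiSum m a r = psiSum m a i + ((r:ℝ) - i) * d := by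
    intro r
    induction r with
    | zero => intro h1 h2; have : i = 0 := by omega
              subst this; simp
    | succ r ih =>
      intro h1 h2
      rcases Nat.lt_or_ge i (r+1) with hir | hir
      · -- i ≤ r < r+1 ≤ j₀
        have hCr : psiSum m a r = psiSum m a i + ((r:ℝ) - i) * d := ih (by omega) (by omega)
        have hstep : sSup (SetI m a r) = d := by
          apply le_antisymm
          · apply csSup_le (setI_nonempty m a (by omega))
            rintro x ⟨j, hj, rfl⟩
            rw [Set.mem_Icc] at hj
            rw [div_le_iff₀ (jsub_pos hj.1)]
            have h3 := hub j (by omega) hj.2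
            rw [hCr]
            have : (i:ℝ) ≤ (r:ℝ) := by exact_mod_cast (by omega : i ≤ r)
            nlinarith
          · have hmem := mem_setI m a (show r + 1 ≤ j₀ by omega) (by omega : j₀ ≤ m)
            have heq : (A a j₀ - psiSum m a r) / ((j₀:ℝ) - (r:ℝ)) = d := by
              rw [hAj₀, hCr]
              have hpos : (0:ℝ) < (j₀:ℝ) - (r:ℝ) := jsub_pos (by omega)
              field_simp
              ring
            rw [heq] at hmem
            exact le_csSup (setI_finite m a r).bddAbove hmem
        rw [psiSum_succ, hstep, hCr]
        push_cast
        ring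
      · have : r + 1 = i := by omega
        rw [this]; simp
  refine ⟨j₀, d, by omega, hj₀.2, ?_, hlin⟩
  rw [hlin j₀ (by omega) le_rfl, hAj₀]

/-- two-point (mixture) representation of the concave envelope value. -/
lemma exists_two_point {l : ℕ} (hl : l ≤ m) :
    ∃ p q : ℕ, ∃ β : ℝ, p ≤ l ∧ l ≤ q ∧ q ≤ m ∧ 0 ≤ β ∧ β ≤ 1 ∧
      (1 - β) * (p:ℝ) + β * (q:ℝ) = (l:ℝ) ∧
      (1 - β) * A a p + β * A a q = psiSum m a l := by
  -- strong induction with fuel on m - i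
  suffices H : ∀ fuel i, m - i ≤ fuel → psiSum m a i = A a i → i ≤ l → l ≤ m →
      ∃ p q : ℕ, ∃ β : ℝ, p ≤ l ∧ l ≤ q ∧ q ≤ m ∧ 0 ≤ β ∧ β ≤ 1 ∧
      (1 - β) * (p:ℝ) + β * (q:ℝ) = (l:ℝ) ∧
      (1 - β) * A a p + β * A a q = psiSum m a l by
    refine H m 0 (by omega) ?_ (by omega) hl
    simp [psiSum, A]
  intro fuel
  induction fuel with
  | zero =>
    intro i h1 h2 h3 h4
    have : l = i := by omega
    subst this
    exact ⟨l, l, 0, le_rfl, le_rfl, h4, le_rfl, zero_le_one, by ring, by rw [h2]; ring⟩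
  | succ fuel ih =>
    intro i h1 h2 h3 h4
    rcases Nat.eq_or_lt_of_le h3 with rfl | hil
    · exact ⟨i, i, 0, le_rfl, le_rfl, h4, le_rfl, zero_le_one, by ring, by rw [h2]; ring⟩
    · have him : i < m := by omega
      obtain ⟨j, d, hij, hjm, hCj, hlin⟩ := exists_linear_segment m a him
      rcases le_or_gt l j with hlj | hjl
      · -- l in [i, j]
        have hpos : (0:ℝ) < (j:ℝ) - (i:ℝ) := jsub_pos (by omega)
        refine ⟨i, j, ((l:ℝ) - i) / ((j:ℝ) - i), h3, hlj, hjm, ?_, ?_, ?_, ?_⟩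
        · apply div_nonneg _ (le_of_lt hpos)
          have : (i:ℝ) ≤ (l:ℝ) := by exact_mod_cast h3
          linarith
        · rw [div_le_one hpos]
          have : (l:ℝ) ≤ (j:ℝ) := by exact_mod_cast hlj
          linarith
        · field_simp
          ring
        · rw [← h2, ← hCj, hlin j (by omega) le_rfl, hlin l h3 hlj]
          field_simp
          ring
      · -- recurse from j
        exact ih j (by omega) hCj (by omega) h4
  

lemma psiSum_eq_sum_psiT (l : ℕ) : psiSum m a l = ∑ j ∈ Finset.Icc 1 l, psiT m a j := by
  induction l with
  | zero => simp [psiSum]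
  | succ l ih =>
    rw [Finset.sum_Icc_succ_top (by omega : 1 ≤ l + 1), ← ih]
    simp only [psiT, Nat.add_sub_cancel]
    ring

lemma A_telescope (f : ℕ → ℝ) (l : ℕ) : A (fun j => f (j - 1) - f j) l = f 0 - f l := by
  induction l with
  | zero => simp [A]
  | succ l ih =>
    unfold A at ih ⊢
    rw [Finset.sum_Icc_succ_top (by omega : 1 ≤ l + 1), ih, Nat.add_sub_cancel]
    ring

lemma sum_Icc_one_split (f : ℕ → ℝ) {L M : ℕ} (h : L ≤ M) :
    ∑ j ∈ Finset.Icc 1 M, f j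
      = ∑ j ∈ Finset.Icc 1 L, f j + ∑ j ∈ Finset.Icc (L + 1) M, f j := by
  have h1 : ∀ n : ℕ, Finset.Icc 1 n = Finset.Ioc 0 n := by
    intro n; ext t; simp [Finset.mem_Icc, Finset.mem_Ioc]; omega
  have h2 : Finset.Icc (L + 1) M = Finset.Ioc L M := by
    ext t; simp [Finset.mem_Icc, Finset.mem_Ioc]
  rw [h1, h1, h2]
  exact (Finset.sum_Ioc_consecutive f (Nat.zero_le L) h).symm

lemma exists_le_sum {S : ℕ} (b : Fin S → ℕ) (t : ℕ) (ht : t ≤ ∑ s, b s) :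
    ∃ l : Fin S → ℕ, (∀ s, l s ≤ b s) ∧ ∑ s, l s = t := by
  induction t with
  | zero => exact ⟨fun _ => 0, fun s => Nat.zero_le _, by simp⟩
  | succ t ih =>
    obtain ⟨l, h1, h2⟩ := ih (by omega)
    have hex : ∃ s, l s < b s := by
      by_contra hcon
      push_neg at hcon
      have : ∑ s, b s ≤ ∑ s, l s := Finset.sum_le_sum fun s _ => hcon s
      omega
    obtain ⟨s₀, hs₀⟩ := hex
    refine ⟨Function.update l s₀ (l s₀ + 1), ?_, ?_⟩
    · intro s
      rcases eq_or_ne s s₀ with rfl | h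
      · rw [Function.update_self]; omega
      · rw [Function.update_of_ne h]; exact h1 s
    · rw [Finset.sum_update_of_mem (Finset.mem_univ s₀)]
      rw [← Finset.sum_erase_add Finset.univ l (Finset.mem_univ s₀)] at h2
      rw [← Finset.sdiff_singleton_eq_erase] at h2
      omega

end Stmt6Aux

open Stmt6Aux

/-- The greedy algorithm based on the optimal monotone dominating transformation solves
the linear-programming relaxation exactly: the optimal LP value equals
`Σ_s t_s(0) −` the greedy maximum of the summed transformed increments. -/
theorem stmt6 (S : ℕ) (hS : 1 ≤ S) (n : Fin S → ℕ) (hn : ∀ s, 1 ≤ n s)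
    (k : ℕ) (hk : k ≤ ∑ s, n s) (ts : Fin S → ℕ → ℝ) :
    let N := ∑ s, n s
    let nsk : Fin S → ℕ := fun s => min (n s) (N - k)
    let Δ : Fin S → ℕ → ℝ := fun s j => ts s (j - 1) - ts s j
    sInf {v : ℝ | ∃ x : Fin S → ℕ → ℝ,
        (∀ s, ∀ l ∈ Finset.range (nsk s + 1), 0 ≤ x s l ∧ x s l ≤ 1) ∧
        (∀ s, ∑ l ∈ Finset.range (nsk s + 1), x s l = 1) ∧
        (∑ s, ∑ l ∈ Finset.range (nsk s + 1), (l : ℝ) * x s l = (N : ℝ) - (k : ℝ)) ∧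
        v = ∑ s, ∑ l ∈ Finset.range (nsk s + 1), x s l * ts s l} =
      (∑ s, ts s 0) -
        sSup {w : ℝ | ∃ l : Fin S → ℕ, (∀ s, l s ≤ nsk s) ∧ (∑ s, l s = N - k) ∧
          w = ∑ s, ∑ j ∈ Finset.Icc 1 (l s), psiT (nsk s) (Δ s) j} := by
  intro N nsk Δ
  have hkN : k ≤ N := hk
  have hKcast : ((N - k : ℕ) : ℝ) = (N : ℝ) - (k : ℝ) := by
    push_cast [Nat.cast_sub hkN]; ring
  set W := {w : ℝ | ∃ l : Fin S → ℕ, (∀ s, l s ≤ nsk s) ∧ (∑ s, l s = N - k) ∧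
      w = ∑ s, ∑ j ∈ Finset.Icc 1 (l s), psiT (nsk s) (Δ s) j} with hW
  -- telescoping description of ts
  have hts : ∀ s l, ts s l = ts s 0 - Stmt6Aux.A (Δ s) l := by
    intro s l
    have := A_telescope (ts s) l
    have h2 : Stmt6Aux.A (Δ s) l = ts s 0 - ts s l := this
    linarith
  -- W is finite
  have hWfin : W.Finite := by
    have hdom : {l : Fin S → ℕ | ∀ s, l s ≤ nsk s}.Finite := by
      apply (Set.Finite.pi (fun s : Fin S => Set.finite_Iic (nsk s))).subset
      intro l hl
      simp only [Set.mem_pi, Set.mem_univ, Set.mem_Iic, forall_true_left]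
      exact fun s => hl s
    rw [hW]
    apply Set.Finite.subset
      (hdom.image (fun l => ∑ s, ∑ j ∈ Finset.Icc 1 (l s), psiT (nsk s) (Δ s) j))
    rintro w ⟨l, h1, h2, rfl⟩
    exact ⟨l, h1, rfl⟩
  -- W is nonempty
  have hWne : W.Nonempty := by
    have hN : N = ∑ s, n s := rfl
    have hsum_nsk : N - k ≤ ∑ s, nsk s := by
      by_cases hc : ∃ s, N - k ≤ n s
      · obtain ⟨s, hs⟩ := hc
        have h1 : nsk s = N - k := min_eq_right hs
        have h2 : nsk s ≤ ∑ t, nsk t :=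
          Finset.single_le_sum (fun t _ => Nat.zero_le _) (Finset.mem_univ s)
        omega
      · push_neg at hc
        have h1 : ∀ s, nsk s = n s := fun s => min_eq_left (le_of_lt (hc s))
        have h2 : ∑ s, nsk s = ∑ s, n s := Finset.sum_congr rfl (fun s _ => h1 s)
        omega
    obtain ⟨l, h1, h2⟩ := exists_le_sum nsk (N - k) hsum_nsk
    exact ⟨_, l, h1, h2, rfl⟩
  obtain ⟨lstar, hls1, hls2, hlsval⟩ := hWne.csSup_mem hWfin
  -- the crux upper bound
  have crux : ∀ x : Fin S → ℕ → ℝ,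
      (∀ s, ∀ l ∈ Finset.range (nsk s + 1), 0 ≤ x s l ∧ x s l ≤ 1) →
      (∀ s, ∑ l ∈ Finset.range (nsk s + 1), x s l = 1) →
      (∑ s, ∑ l ∈ Finset.range (nsk s + 1), (l : ℝ) * x s l = (N : ℝ) - (k : ℝ)) →
      ∑ s, ∑ l ∈ Finset.range (nsk s + 1), x s l * Stmt6Aux.A (Δ s) l ≤ sSup W := by
    intro x hx01 hx1 hxm
    have hp0 : ∀ (s : Fin S) (j : ℕ), (0:ℝ) ≤ ∑ l ∈ Finset.Icc j (nsk s), x s l := by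
      intro s j
      apply Finset.sum_nonneg
      intro l hl
      have := (Finset.mem_Icc.1 hl).2
      exact (hx01 s l (Finset.mem_range.2 (by omega))).1
    have hp1 : ∀ (s : Fin S) (j : ℕ), ∑ l ∈ Finset.Icc j (nsk s), x s l ≤ 1 := by
      intro s j
      rw [← hx1 s]
      apply Finset.sum_le_sum_of_subset_of_nonneg
      · intro l hl; rw [Finset.mem_range]; have := (Finset.mem_Icc.1 hl).2; omega
      · intro l hl _; exact (hx01 s l hl).1
    have hswap : ∀ (s : Fin S) (g : ℕ → ℝ),
        ∑ l ∈ Finset.range (nsk s + 1), (∑ j ∈ Finset.Icc 1 l, g j) * x s l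
          = ∑ j ∈ Finset.Icc 1 (nsk s), g j * ∑ l ∈ Finset.Icc j (nsk s), x s l := by
      intro s g
      have h1 : ∀ l ∈ Finset.range (nsk s + 1),
          (∑ j ∈ Finset.Icc 1 l, g j) * x s l = ∑ j ∈ Finset.Icc 1 l, g j * x s l := by
        intro l _; rw [Finset.sum_mul]
      rw [Finset.sum_congr rfl h1]
      rw [Finset.sum_comm' (t' := Finset.Icc 1 (nsk s)) (s' := fun j => Finset.Icc j (nsk s))
        (by intro l j; simp only [Finset.mem_range, Finset.mem_Icc]; omega)]
      apply Finset.sum_congr rfl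
      intro j _
      rw [Finset.mul_sum]
    have hmean : ∑ s, ∑ j ∈ Finset.Icc 1 (nsk s), (∑ l ∈ Finset.Icc j (nsk s), x s l)
        = (N:ℝ) - (k:ℝ) := by
      rw [← hxm]
      apply Finset.sum_congr rfl
      intro s _
      have hcard : ∀ l : ℕ, (∑ j ∈ Finset.Icc 1 l, (1:ℝ)) = (l:ℝ) := by
        intro l; rw [Finset.sum_const, Nat.card_Icc]; simp
      calc ∑ j ∈ Finset.Icc 1 (nsk s), (∑ l ∈ Finset.Icc j (nsk s), x s l)
          = ∑ j ∈ Finset.Icc 1 (nsk s), (1:ℝ) * ∑ l ∈ Finset.Icc j (nsk s), x s l := by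
            simp
        _ = ∑ l ∈ Finset.range (nsk s + 1), (∑ j ∈ Finset.Icc 1 l, (1:ℝ)) * x s l :=
            (hswap s (fun _ => (1:ℝ))).symm
        _ = ∑ l ∈ Finset.range (nsk s + 1), (l:ℝ) * x s l := by
            apply Finset.sum_congr rfl; intro l _; rw [hcard]
    have step1 : ∑ s, ∑ l ∈ Finset.range (nsk s + 1), x s l * Stmt6Aux.A (Δ s) l
        ≤ ∑ s, ∑ j ∈ Finset.Icc 1 (nsk s),
            psiT (nsk s) (Δ s) j * ∑ l ∈ Finset.Icc j (nsk s), x s l := by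
      apply Finset.sum_le_sum
      intro s _
      calc ∑ l ∈ Finset.range (nsk s + 1), x s l * Stmt6Aux.A (Δ s) l
          ≤ ∑ l ∈ Finset.range (nsk s + 1), x s l * psiSum (nsk s) (Δ s) l := by
            apply Finset.sum_le_sum; intro l hl
            exact mul_le_mul_of_nonneg_left
              (A_le_psiSum _ _ (by rw [Finset.mem_range] at hl; omega)) (hx01 s l hl).1
        _ = ∑ l ∈ Finset.range (nsk s + 1),
              (∑ j ∈ Finset.Icc 1 l, psiT (nsk s) (Δ s) j) * x s l := by
            apply Finset.sum_congr rfl; intro l _; rw [← psiSum_eq_sum_psiT]; ring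
        _ = _ := hswap s _
    refine le_trans step1 ?_
    rcases Nat.eq_zero_or_pos (N - k) with hK0 | hKpos
    · have hr0 : (N:ℝ) - (k:ℝ) = 0 := by rw [← hKcast, hK0]; simp
      have h1 := hmean
      rw [hr0] at h1
      have h2 := (Finset.sum_eq_zero_iff_of_nonneg
        (fun s _ => Finset.sum_nonneg fun j _ => hp0 s j)).1 h1
      have hz : ∑ s, ∑ j ∈ Finset.Icc 1 (nsk s),
          psiT (nsk s) (Δ s) j * (∑ l ∈ Finset.Icc j (nsk s), x s l) = 0 := by
        apply Finset.sum_eq_zero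
        intro s hs
        apply Finset.sum_eq_zero
        intro j hj
        rw [(Finset.sum_eq_zero_iff_of_nonneg (fun j _ => hp0 s j)).1 (h2 s hs) j hj, mul_zero]
      rw [hz]
      apply le_csSup hWfin.bddAbove
      rw [hW]
      exact ⟨fun _ => 0, fun s => Nat.zero_le _, by simpa using hK0.symm, by simp⟩
    · have hlpos : ∃ s, 1 ≤ lstar s := by
        by_contra hcon; push_neg at hcon
        have h0 : ∑ s, lstar s = 0 := Finset.sum_eq_zero fun s _ => by have := hcon s; omega
        omega
      set F := Finset.univ.filter (fun s : Fin S => 1 ≤ lstar s) with hF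
      have hFne : F.Nonempty := by
        obtain ⟨s, hs⟩ := hlpos; exact ⟨s, by simp [hF, hs]⟩
      obtain ⟨s', hs'F, hmin⟩ :=
        Finset.exists_min_image F (fun s => psiT (nsk s) (Δ s) (lstar s)) hFne
      have hs'1 : 1 ≤ lstar s' := by
        rw [hF, Finset.mem_filter] at hs'F; exact hs'F.2
      set lam := psiT (nsk s') (Δ s') (lstar s') with hlam
      have ha : ∀ (s : Fin S) (j : ℕ), 1 ≤ j → j ≤ lstar s → lam ≤ psiT (nsk s) (Δ s) j := by
        intro s j h1 h2
        have hsF : s ∈ F := by rw [hF, Finset.mem_filter]; exact ⟨Finset.mem_univ _, by omega⟩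
        have h3 := hmin s hsF
        have h4 := psiT_antitone (nsk s) (Δ s) h1 h2 (hls1 s)
        calc lam ≤ psiT (nsk s) (Δ s) (lstar s) := h3
          _ ≤ psiT (nsk s) (Δ s) j := h4
      have hb : ∀ (s : Fin S) (j : ℕ), lstar s < j → j ≤ nsk s →
          psiT (nsk s) (Δ s) j ≤ lam := by
        intro s j hj1 hj2
        have hmono := psiT_antitone (nsk s) (Δ s)
          (by omega : 1 ≤ lstar s + 1) (by omega : lstar s + 1 ≤ j) hj2
        suffices h : psiT (nsk s) (Δ s) (lstar s + 1) ≤ lam by linarith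
        rcases eq_or_ne s s' with rfl | hne
        · rw [hlam]
          exact psiT_antitone (nsk s) (Δ s) hs'1 (by omega) (by omega)
        · set l' : Fin S → ℕ := fun t =>
            if t = s then lstar s + 1 else if t = s' then lstar s' - 1 else lstar t with hl'
          have hl's : l' s = lstar s + 1 := by simp [hl']
          have hl's' : l' s' = lstar s' - 1 := by simp [hl', hne.symm]
          have hl'o : ∀ t, t ≠ s → t ≠ s' → l' t = lstar t := by
            intro t h1 h2; simp [hl', h1, h2]
          have hpair : ({s, s'} : Finset (Fin S)) ⊆ Finset.univ := Finset.subset_univ _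
          have hfeas1 : ∀ t, l' t ≤ nsk t := by
            intro t
            rcases eq_or_ne t s with rfl | h1
            · rw [hl's]; omega
            rcases eq_or_ne t s' with rfl | h2
            · rw [hl's']; have := hls1 t; omega
            · rw [hl'o t h1 h2]; exact hls1 t
          have hsum_split : ∀ f : Fin S → ℕ,
              ∑ t, f t = ∑ t ∈ Finset.univ \ {s, s'}, f t + (f s + f s') := by
            intro f
            rw [← Finset.sum_sdiff hpair]
            congr 1
            exact Finset.sum_pair hne
          have hfeas2 : ∑ t, l' t = N - k := by
            rw [hsum_split l'] at *
            rw [hsum_split lstar] at hls2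
            have hcongr : ∑ t ∈ Finset.univ \ {s, s'}, l' t
                = ∑ t ∈ Finset.univ \ {s, s'}, lstar t := by
              apply Finset.sum_congr rfl
              intro t ht
              rw [Finset.mem_sdiff] at ht
              have h1 : t ≠ s := fun h => ht.2 (by simp [h])
              have h2 : t ≠ s' := fun h => ht.2 (by simp [h])
              exact hl'o t h1 h2
            rw [hcongr, hl's, hl's']
            omega
          have hmemW : (∑ t, ∑ j ∈ Finset.Icc 1 (l' t), psiT (nsk t) (Δ t) j) ∈ W := by
            rw [hW]; exact ⟨l', hfeas1, hfeas2, rfl⟩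
          have hle := le_csSup hWfin.bddAbove hmemW
          rw [hlsval] at hle
          have hsum_splitR : ∀ f : Fin S → ℝ,
              ∑ t, f t = ∑ t ∈ Finset.univ \ {s, s'}, f t + (f s + f s') := by
            intro f
            rw [← Finset.sum_sdiff hpair]
            congr 1
            exact Finset.sum_pair hne
          rw [hsum_splitR (fun t => ∑ j ∈ Finset.Icc 1 (l' t), psiT (nsk t) (Δ t) j),
            hsum_splitR (fun t => ∑ j ∈ Finset.Icc 1 (lstar t), psiT (nsk t) (Δ t) j)] at hle
          have hcongrR : ∑ t ∈ Finset.univ \ {s, s'},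
                ∑ j ∈ Finset.Icc 1 (l' t), psiT (nsk t) (Δ t) j
              = ∑ t ∈ Finset.univ \ {s, s'},
                ∑ j ∈ Finset.Icc 1 (lstar t), psiT (nsk t) (Δ t) j := by
            apply Finset.sum_congr rfl
            intro t ht
            rw [Finset.mem_sdiff] at ht
            have h1 : t ≠ s := fun h => ht.2 (by simp [h])
            have h2 : t ≠ s' := fun h => ht.2 (by simp [h])
            rw [hl'o t h1 h2]
          obtain ⟨c, hc⟩ : ∃ c, lstar s' = c + 1 := ⟨lstar s' - 1, by omega⟩
          have e1 : ∑ j ∈ Finset.Icc 1 (l' s), psiT (nsk s) (Δ s) j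
              = ∑ j ∈ Finset.Icc 1 (lstar s), psiT (nsk s) (Δ s) j
                + psiT (nsk s) (Δ s) (lstar s + 1) := by
            rw [hl's]
            exact Finset.sum_Icc_succ_top (by omega) _
          have e2 : ∑ j ∈ Finset.Icc 1 (lstar s'), psiT (nsk s') (Δ s') j
              = ∑ j ∈ Finset.Icc 1 (l' s'), psiT (nsk s') (Δ s') j
                + psiT (nsk s') (Δ s') (lstar s') := by
            rw [hl's', hc]
            simp only [Nat.add_sub_cancel]
            exact Finset.sum_Icc_succ_top (by omega) _
          rw [hcongrR, e1, e2] at hle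
          rw [hlam]
          linarith
      have hexp : ∀ s : Fin S,
          ∑ j ∈ Finset.Icc 1 (nsk s), psiT (nsk s) (Δ s) j * (∑ l ∈ Finset.Icc j (nsk s), x s l)
            = ∑ j ∈ Finset.Icc 1 (nsk s),
                (psiT (nsk s) (Δ s) j - lam) * (∑ l ∈ Finset.Icc j (nsk s), x s l)
              + lam * ∑ j ∈ Finset.Icc 1 (nsk s), (∑ l ∈ Finset.Icc j (nsk s), x s l) := by
        intro s
        rw [Finset.mul_sum, ← Finset.sum_add_distrib]
        apply Finset.sum_congr rfl; intro j _; ring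
      have hper : ∀ s : Fin S,
          ∑ j ∈ Finset.Icc 1 (nsk s),
              (psiT (nsk s) (Δ s) j - lam) * (∑ l ∈ Finset.Icc j (nsk s), x s l)
            ≤ ∑ j ∈ Finset.Icc 1 (lstar s), (psiT (nsk s) (Δ s) j - lam) := by
        intro s
        rw [sum_Icc_one_split
          (fun j => (psiT (nsk s) (Δ s) j - lam) * (∑ l ∈ Finset.Icc j (nsk s), x s l))
          (hls1 s)]
        have t1 : ∑ j ∈ Finset.Icc 1 (lstar s),
              (psiT (nsk s) (Δ s) j - lam) * (∑ l ∈ Finset.Icc j (nsk s), x s l)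
            ≤ ∑ j ∈ Finset.Icc 1 (lstar s), (psiT (nsk s) (Δ s) j - lam) := by
          apply Finset.sum_le_sum
          intro j hj
          rw [Finset.mem_Icc] at hj
          have h1 : 0 ≤ psiT (nsk s) (Δ s) j - lam := sub_nonneg.2 (ha s j hj.1 hj.2)
          nlinarith [hp0 s j, hp1 s j]
        have t2 : ∑ j ∈ Finset.Icc (lstar s + 1) (nsk s),
              (psiT (nsk s) (Δ s) j - lam) * (∑ l ∈ Finset.Icc j (nsk s), x s l) ≤ 0 := by
          apply Finset.sum_nonpos
          intro j hj
          rw [Finset.mem_Icc] at hj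
          have h1 : psiT (nsk s) (Δ s) j - lam ≤ 0 := sub_nonpos.2 (hb s j (by omega) hj.2)
          exact mul_nonpos_iff.2 (Or.inr ⟨h1, hp0 s j⟩)
        linarith
      have hGsum : ∀ s : Fin S,
          ∑ j ∈ Finset.Icc 1 (lstar s), (psiT (nsk s) (Δ s) j - lam)
            = ∑ j ∈ Finset.Icc 1 (lstar s), psiT (nsk s) (Δ s) j - lam * (lstar s : ℝ) := by
        intro s
        rw [Finset.sum_sub_distrib, Finset.sum_const, Nat.card_Icc]
        simp [nsmul_eq_mul]
        ring
      have hcast2 : ∑ s, ((lstar s : ℕ) : ℝ) = (N:ℝ) - (k:ℝ) := by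
        rw [← hKcast, ← hls2]
        exact (Nat.cast_sum _ _).symm
      calc ∑ s, ∑ j ∈ Finset.Icc 1 (nsk s),
              psiT (nsk s) (Δ s) j * (∑ l ∈ Finset.Icc j (nsk s), x s l)
          = ∑ s, (∑ j ∈ Finset.Icc 1 (nsk s),
                (psiT (nsk s) (Δ s) j - lam) * (∑ l ∈ Finset.Icc j (nsk s), x s l))
              + lam * ((N:ℝ) - (k:ℝ)) := by
            rw [Finset.sum_congr rfl (fun s _ => hexp s), Finset.sum_add_distrib,
              ← Finset.mul_sum, hmean]
        _ ≤ ∑ s, (∑ j ∈ Finset.Icc 1 (lstar s), (psiT (nsk s) (Δ s) j - lam))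
              + lam * ((N:ℝ) - (k:ℝ)) := by
            have := Finset.sum_le_sum (fun s (_ : s ∈ Finset.univ) => hper s)
            linarith
        _ = sSup W := by
            rw [Finset.sum_congr rfl (fun s _ => hGsum s), Finset.sum_sub_distrib,
              ← Finset.mul_sum, hcast2, hlsval]
            ring

  refine IsLeast.csInf_eq ⟨?_, ?_⟩
  · -- membership (achievability)
    choose P Q B hP hQ hQm hB0 hB1 hmix hval using
      fun s => Stmt6Aux.exists_two_point (nsk s) (Δ s) (hls1 s)
    set x : Fin S → ℕ → ℝ :=
      fun s l => (if l = P s then 1 - B s else 0) + (if l = Q s then B s else 0) with hx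
    have hPmem : ∀ s, P s ∈ Finset.range (nsk s + 1) :=
      fun s => Finset.mem_range.2 (by have := hP s; have := hls1 s; omega)
    have hQmem : ∀ s, Q s ∈ Finset.range (nsk s + 1) :=
      fun s => Finset.mem_range.2 (by have := hQm s; omega)
    have hxsum : ∀ (s : Fin S) (f : ℕ → ℝ),
        ∑ l ∈ Finset.range (nsk s + 1), x s l * f l
          = (1 - B s) * f (P s) + B s * f (Q s) := by
      intro s f
      have hterm : ∀ l, x s l * f l
          = (if l = P s then (1 - B s) * f l else 0)
            + (if l = Q s then (B s) * f l else 0) := by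
        intro l
        simp only [hx]
        by_cases h1 : l = P s <;> by_cases h2 : l = Q s
        · rw [if_pos h1, if_pos h2, if_pos h1, if_pos h2]; ring
        · rw [if_pos h1, if_neg h2, if_pos h1, if_neg h2]; ring
        · rw [if_neg h1, if_pos h2, if_neg h1, if_pos h2]; ring
        · rw [if_neg h1, if_neg h2, if_neg h1, if_neg h2]; ring
      rw [Finset.sum_congr rfl (fun l _ => hterm l), Finset.sum_add_distrib,
        Finset.sum_ite_eq' _ (P s) (fun l => (1 - B s) * f l),
        Finset.sum_ite_eq' _ (Q s) (fun l => B s * f l),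
        if_pos (hPmem s), if_pos (hQmem s)]
    have hcast2 : ∑ s, ((lstar s : ℕ) : ℝ) = (N:ℝ) - (k:ℝ) := by
      rw [← hKcast, ← hls2]
      exact (Nat.cast_sum _ _).symm
    refine ⟨x, ?_, ?_, ?_, ?_⟩
    · intro s l _
      have hx4 : x s l = (if l = P s then 1 - B s else 0) + (if l = Q s then B s else 0) := by
        simp only [hx]
      by_cases h1 : l = P s <;> by_cases h2 : l = Q s
      · rw [hx4, if_pos h1, if_pos h2]; constructor <;> linarith [hB0 s, hB1 s]
      · rw [hx4, if_pos h1, if_neg h2]; constructor <;> linarith [hB0 s, hB1 s]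
      · rw [hx4, if_neg h1, if_pos h2]; constructor <;> linarith [hB0 s, hB1 s]
      · rw [hx4, if_neg h1, if_neg h2]; constructor <;> linarith [hB0 s, hB1 s]
    · intro s
      have h := hxsum s (fun _ => (1:ℝ))
      simp only [mul_one] at h
      rw [h]
      ring
    · have hmean1 : ∀ s : Fin S,
          ∑ l ∈ Finset.range (nsk s + 1), (l:ℝ) * x s l = ((lstar s : ℕ) : ℝ) := by
        intro s
        have h := hxsum s (fun l => (l:ℝ))
        have hcomm : ∑ l ∈ Finset.range (nsk s + 1), (l:ℝ) * x s l
            = ∑ l ∈ Finset.range (nsk s + 1), x s l * (l:ℝ) := by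
          apply Finset.sum_congr rfl; intro l _; ring
        rw [hcomm, h]
        have := hmix s
        linarith
      rw [Finset.sum_congr rfl (fun s _ => hmean1 s)]
      exact hcast2
    · have hobj : ∀ s : Fin S, ∑ l ∈ Finset.range (nsk s + 1), x s l * ts s l
          = ts s 0 - psiSum (nsk s) (Δ s) (lstar s) := by
        intro s
        rw [hxsum s (ts s), hts s (P s), hts s (Q s)]
        linear_combination (-1 : ℝ) * hval s
      rw [Finset.sum_congr rfl (fun s _ => hobj s), Finset.sum_sub_distrib, hlsval]
      congr 1
      apply Finset.sum_congr rfl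
      intro s _
      exact (psiSum_eq_sum_psiT _ _ _).symm

  · -- lower bound
    rintro v ⟨x, hx01, hx1, hxm, rfl⟩
    have hobj : ∀ s, ∑ l ∈ Finset.range (nsk s + 1), x s l * ts s l
        = ts s 0 - ∑ l ∈ Finset.range (nsk s + 1), x s l * Stmt6Aux.A (Δ s) l := by
      intro s
      have : ∀ l ∈ Finset.range (nsk s + 1), x s l * ts s l
          = x s l * ts s 0 - x s l * Stmt6Aux.A (Δ s) l := by
        intro l _; rw [hts s l]; ring
      rw [Finset.sum_congr rfl this, Finset.sum_sub_distrib, ← Finset.sum_mul, hx1 s, one_mul]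
    rw [Finset.sum_congr rfl (fun s _ => hobj s), Finset.sum_sub_distrib]
    have := crux x hx01 hx1 hxm
    linarith
end

section
/- For every y ∈ ℝ^n, d̲(z, y) ≤ d(z, y) ≤ d̄(z, y). (Ranking tied units with treated units last gives the largest rank-sum statistic, ranking them first gives the smallest, and any fixed-ordering tie-break lies in between.) -/
open Finset

/-- Rank with ties broken by a fixed ordering `π`. -/
noncomputable def rnk1 {n : ℕ} (π : Equiv.Perm (Fin n)) (y : Fin n → ℝ) (i : Fin n) : ℕ :=
  (Finset.univ.filter fun j => y j < y i ∨ (y j = y i ∧ π j ≤ π i)).card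

/-- Rank with ties broken placing control units (z = false) before treated units. -/
noncomputable def rnk1Bar {n : ℕ} (z : Fin n → Bool) (π : Equiv.Perm (Fin n))
    (y : Fin n → ℝ) (i : Fin n) : ℕ :=
  (Finset.univ.filter fun j => y j < y i ∨ (y j = y i ∧ z j = false ∧ z i = true) ∨
    (y j = y i ∧ z j = z i ∧ π j ≤ π i)).card

/-- Rank with ties broken placing treated units (z = true) before control units. -/
noncomputable def rnk1Low {n : ℕ} (z : Fin n → Bool) (π : Equiv.Perm (Fin n))
    (y : Fin n → ℝ) (i : Fin n) : ℕ :=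
  (Finset.univ.filter fun j => y j < y i ∨ (y j = y i ∧ z j = true ∧ z i = false) ∨
    (y j = y i ∧ z j = z i ∧ π j ≤ π i)).card

lemma rnk1_pos {n : ℕ} (π : Equiv.Perm (Fin n)) (y : Fin n → ℝ) (i : Fin n) :
    1 ≤ rnk1 π y i := by
  have : i ∈ Finset.univ.filter fun j => y j < y i ∨ (y j = y i ∧ π j ≤ π i) := by
    simp
  exact Finset.card_pos.mpr ⟨i, this⟩

lemma rnk1Bar_le_n {n : ℕ} (z : Fin n → Bool) (π : Equiv.Perm (Fin n))
    (y : Fin n → ℝ) (i : Fin n) : rnk1Bar z π y i ≤ n := by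
  simpa [rnk1Bar] using Finset.card_filter_le (Finset.univ : Finset (Fin n)) _

lemma rnk1_le_n {n : ℕ} (π : Equiv.Perm (Fin n))
    (y : Fin n → ℝ) (i : Fin n) : rnk1 π y i ≤ n := by
  simpa [rnk1] using Finset.card_filter_le (Finset.univ : Finset (Fin n)) _

lemma rnk1Low_pos {n : ℕ} (z : Fin n → Bool) (π : Equiv.Perm (Fin n))
    (y : Fin n → ℝ) (i : Fin n) : 1 ≤ rnk1Low z π y i := by
  have : i ∈ Finset.univ.filter fun j => y j < y i ∨ (y j = y i ∧ z j = true ∧ z i = false) ∨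
      (y j = y i ∧ z j = z i ∧ π j ≤ π i) := by simp
  exact Finset.card_pos.mpr ⟨i, this⟩

lemma rnk1Low_le {n : ℕ} (z : Fin n → Bool) (π : Equiv.Perm (Fin n))
    (y : Fin n → ℝ) (i : Fin n) (hi : z i = true) : rnk1Low z π y i ≤ rnk1 π y i := by
  apply Finset.card_le_card
  intro j hj
  simp only [Finset.mem_filter, Finset.mem_univ, true_and] at hj ⊢
  rcases hj with h | ⟨_, _, h⟩ | ⟨h1, _, h3⟩
  · exact Or.inl h
  · rw [hi] at h; exact absurd h (by simp)
  · exact Or.inr ⟨h1, h3⟩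

lemma rnk1_le_bar {n : ℕ} (z : Fin n → Bool) (π : Equiv.Perm (Fin n))
    (y : Fin n → ℝ) (i : Fin n) (hi : z i = true) : rnk1 π y i ≤ rnk1Bar z π y i := by
  apply Finset.card_le_card
  intro j hj
  simp only [Finset.mem_filter, Finset.mem_univ, true_and] at hj ⊢
  rcases hj with h | ⟨h1, h2⟩
  · exact Or.inl h
  · cases hzj : z j
    · exact Or.inr (Or.inl ⟨h1, rfl, hi⟩)
    · exact Or.inr (Or.inr ⟨h1, by rw [hi], h2⟩)

/-- Ranking tied units with treated units last gives the largest rank-sum statistic,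
ranking them first gives the smallest, and any fixed-ordering tie-break lies between:
`d̲(z,y) ≤ d(z,y) ≤ d̄(z,y)`. -/
theorem stmt8 (n : ℕ) (hn : 1 ≤ n) (z : Fin n → Bool) (π : Equiv.Perm (Fin n))
    (φ : ℕ → ℝ) (hφ : ∀ a b : ℕ, 1 ≤ a → a ≤ b → b ≤ n → φ a ≤ φ b)
    (y : Fin n → ℝ) :
    (∑ i, if z i then φ (rnk1Low z π y i) else 0) ≤
      (∑ i, if z i then φ (rnk1 π y i) else 0) ∧
    (∑ i, if z i then φ (rnk1 π y i) else 0) ≤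
      (∑ i, if z i then φ (rnk1Bar z π y i) else 0) := by
  constructor
  · apply Finset.sum_le_sum
    intro i _
    cases hi : z i
    · simp
    · simp only [if_pos]
      exact hφ _ _ (rnk1Low_pos z π y i) (rnk1Low_le z π y i hi) (rnk1_le_n π y i)
  · apply Finset.sum_le_sum
    intro i _
    cases hi : z i
    · simp
    · simp only [if_pos]
      exact hφ _ _ (rnk1_pos π y i) (rnk1_le_bar z π y i hi) (rnk1Bar_le_n z π y i)
end

section
/- For every y ∈ ℝ^n and every real a > 0, d̄(z, y) ≤ d̲(z, y + a·z), where y + a·z is the vector with coordinates y_i + a·z_i (i.e., the outcomes of treated units are shifted up by a). -/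
open Finset

/-- Shifting the treated outcomes up by any `a > 0` turns the upper tie-break statistic
into a lower bound for the lower tie-break statistic: `d̄(z, y) ≤ d̲(z, y + a·z)`. -/
theorem stmt9 (n : ℕ) (hn : 1 ≤ n) (z : Fin n → Bool) (π : Equiv.Perm (Fin n))
    (φ : ℕ → ℝ) (hφ : ∀ a b : ℕ, 1 ≤ a → a ≤ b → b ≤ n → φ a ≤ φ b)
    (y : Fin n → ℝ) (a : ℝ) (ha : 0 < a) :
    (∑ i, if z i then φ (rnk1Bar z π y i) else 0) ≤
      (∑ i, if z i then
        φ (rnk1Low z π (fun j => y j + if z j then a else 0) i) else 0) := by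
  apply Finset.sum_le_sum
  intro i _
  by_cases hz : z i
  · simp only [hz, if_true]
    set y' : Fin n → ℝ := fun j => y j + if z j then a else 0 with hy'
    have h1 : 1 ≤ rnk1Bar z π y i := by
      rw [rnk1Bar]
      refine Finset.card_pos.mpr ⟨i, ?_⟩
      simp
    have hsub : rnk1Bar z π y i ≤ rnk1Low z π y' i := by
      apply Finset.card_le_card
      intro j hj
      simp only [Finset.mem_filter, Finset.mem_univ, true_and] at hj ⊢
      have hyi : y' i = y i + a := by simp [hy', hz]
      rcases hj with h | ⟨he, hjf, _⟩ | ⟨he, hzz, hp⟩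
      · left
        rw [hyi]
        by_cases hzj : z j
        · simp only [hy', hzj, if_true]; linarith
        · simp only [hy', hzj, Bool.false_eq_true, if_false]; linarith
      · left
        rw [hyi]
        simp only [hy', hjf, Bool.false_eq_true, if_false]
        linarith
      · right; right
        refine ⟨?_, hzz, hp⟩
        rw [hyi]
        have : z j = true := by rw [hzz, hz]
        simp [hy', this, he]
    have hn' : rnk1Low z π y' i ≤ n := by
      rw [rnk1Low]
      calc _ ≤ (Finset.univ : Finset (Fin n)).card := Finset.card_filter_le _ _
        _ = n := by simp
    exact hφ _ _ h1 hsub hn'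
  · simp [hz]
end

section
/- Let n_1,…,n_S ≥ 1 be integers with N = Σ_s n_s, identify ℝ^N with ∏_{s=1}^S ℝ^{n_s} via stratum blocks, fix c ∈ ℝ and an integer 0 ≤ k ≤ N, and let f_s : ℝ^{n_s} → ℝ be functions each taking only finitely many values. Define t_s(l) = inf{ f_s(δ_s) : δ_s ∈ ℝ^{n_s}, #{i : δ_{si} > c} ≤ l } for integers 0 ≤ l ≤ n_s. Then inf{ Σ_{s=1}^S f_s(δ_s) : δ ∈ H_{k,c} } = min{ Σ_{s=1}^S t_s(l_s) : (l_1,…,l_S) ∈ K_n(N−k) }, and the infimum on the left-hand side is attained. -/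
open Finset

lemma pad_alloc {S : ℕ} (n : Fin S → ℕ) (m : ℕ) (hm : m ≤ ∑ s, n s) :
    ∀ d (a : Fin S → ℕ), m - ∑ s, a s ≤ d → (∀ s, a s ≤ n s) → (∑ s, a s ≤ m) →
    ∃ l : Fin S → ℕ, (∀ s, a s ≤ l s) ∧ (∀ s, l s ≤ n s) ∧ ∑ s, l s = m := by
  intro d
  induction d with
  | zero =>
    intro a hd ha hs
    exact ⟨a, fun s => le_rfl, ha, by omega⟩
  | succ d ih =>
    intro a hd ha hs
    by_cases h : ∑ s, a s = m
    · exact ⟨a, fun s => le_rfl, ha, h⟩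
    · have hlt : ∑ s, a s < m := lt_of_le_of_ne hs h
      have hex : ∃ s, a s < n s := by
        by_contra hc
        push_neg at hc
        have : ∑ s, n s ≤ ∑ s, a s := Finset.sum_le_sum fun s _ => hc s
        omega
      obtain ⟨s0, hs0⟩ := hex
      have hsum : ∑ s, Function.update a s0 (a s0 + 1) s = (∑ s, a s) + 1 := by
        rw [Finset.sum_update_of_mem (Finset.mem_univ s0)]
        rw [← Finset.add_sum_erase Finset.univ a (Finset.mem_univ s0)]
        rw [Finset.sdiff_singleton_eq_erase]
        ring
      have hup : ∀ s, Function.update a s0 (a s0 + 1) s ≤ n s := by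
        intro s
        rcases eq_or_ne s s0 with rfl | hne
        · simpa using hs0
        · simpa [Function.update_of_ne hne] using ha s
      obtain ⟨l, h1, h2, h3⟩ := ih (Function.update a s0 (a s0 + 1))
        (by omega) hup (by omega)
      refine ⟨l, fun s => ?_, h2, h3⟩
      refine le_trans ?_ (h1 s)
      rcases eq_or_ne s s0 with rfl | hne
      · simp
      · simp [Function.update_of_ne hne]

/-- The minimization of a separable objective over the composite null set `H_{k,c}`
decomposes into per-stratum minimizations combined over integer allocations, and the
infimum is attained. -/
theorem stmt11 (S : ℕ) (hS : 1 ≤ S) (n : Fin S → ℕ) (hn : ∀ s, 1 ≤ n s)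
    (c : ℝ) (k : ℕ) (hk : k ≤ ∑ s, n s)
    (f : ∀ s : Fin S, (Fin (n s) → ℝ) → ℝ)
    (hf : ∀ s, (Set.range (f s)).Finite) :
    let N := ∑ s, n s
    let tl : Fin S → ℕ → ℝ := fun s l =>
      sInf {v : ℝ | ∃ δs : Fin (n s) → ℝ,
        (Finset.univ.filter fun i => c < δs i).card ≤ l ∧ v = f s δs}
    let LHS := sInf {v : ℝ | ∃ δ : ∀ s, Fin (n s) → ℝ,
        (∑ s, (Finset.univ.filter fun i => c < δ s i).card ≤ N - k) ∧
        v = ∑ s, f s (δ s)}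
    (LHS = sInf {v : ℝ | ∃ l : Fin S → ℕ, (∀ s, l s ≤ n s) ∧ (∑ s, l s = N - k) ∧
        v = ∑ s, tl s (l s)}) ∧
    ∃ δ : ∀ s, Fin (n s) → ℝ,
      (∑ s, (Finset.univ.filter fun i => c < δ s i).card ≤ N - k) ∧
      (∑ s, f s (δ s)) = LHS := by
  intro N tl LHS
  -- per-stratum sets
  set T : Fin S → ℕ → Set ℝ := fun s l =>
    {v : ℝ | ∃ δs : Fin (n s) → ℝ,
      (Finset.univ.filter fun i => c < δs i).card ≤ l ∧ v = f s δs} with hT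
  have hTsub : ∀ s l, T s l ⊆ Set.range (f s) := by
    rintro s l v ⟨δs, _, rfl⟩; exact ⟨δs, rfl⟩
  have hTfin : ∀ s l, (T s l).Finite := fun s l => (hf s).subset (hTsub s l)
  have hTne : ∀ s l, (T s l).Nonempty := by
    intro s l
    refine ⟨f s (fun _ => c), fun _ => c, ?_, rfl⟩
    simp [lt_irrefl]
  have htl_mem : ∀ s l, tl s l ∈ T s l := fun s l =>
    Set.Nonempty.csInf_mem (hTne s l) (hTfin s l)
  have htl_le : ∀ s l (δs : Fin (n s) → ℝ),
      (Finset.univ.filter fun i => c < δs i).card ≤ l → tl s l ≤ f s δs := by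
    intro s l δs h
    exact csInf_le (hTfin s l).bddBelow ⟨δs, h, rfl⟩
  have htl_anti : ∀ s (l l' : ℕ), l ≤ l' → tl s l' ≤ tl s l := by
    intro s l l' h
    refine csInf_le_csInf (hTfin s l').bddBelow (hTne s l) ?_
    rintro v ⟨δs, hc, rfl⟩
    exact ⟨δs, le_trans hc h, rfl⟩
  -- the two main sets
  set A : Set ℝ := {v : ℝ | ∃ δ : ∀ s, Fin (n s) → ℝ,
      (∑ s, (Finset.univ.filter fun i => c < δ s i).card ≤ N - k) ∧
      v = ∑ s, f s (δ s)} with hA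
  set B : Set ℝ := {v : ℝ | ∃ l : Fin S → ℕ, (∀ s, l s ≤ n s) ∧ (∑ s, l s = N - k) ∧
      v = ∑ s, tl s (l s)} with hB
  -- finite superset
  set F : Set ℝ := (fun g : Fin S → ℝ => ∑ s, g s) ''
    (Set.pi Set.univ fun s => Set.range (f s)) with hF
  have hFfin : F.Finite := (Set.Finite.pi fun s => hf s).image _
  have hAsub : A ⊆ F := by
    rintro v ⟨δ, _, rfl⟩
    exact ⟨fun s => f s (δ s), fun s _ => ⟨δ s, rfl⟩, rfl⟩
  have hBsub : B ⊆ F := by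
    rintro v ⟨l, _, _, rfl⟩
    exact ⟨fun s => tl s (l s), fun s _ => hTsub s (l s) (htl_mem s (l s)), rfl⟩
  have hAfin : A.Finite := hFfin.subset hAsub
  have hBfin : B.Finite := hFfin.subset hBsub
  have hAne : A.Nonempty := by
    refine ⟨∑ s, f s (fun _ => c), fun _ _ => c, ?_, rfl⟩
    have : ∀ s : Fin S, (Finset.univ.filter fun i : Fin (n s) => c < c).card = 0 := by
      intro s; simp [lt_irrefl]
    simp [this]
  have hBne : B.Nonempty := by
    obtain ⟨l, _, h2, h3⟩ := pad_alloc n (N - k) (by omega) (N - k) 0 (by simp) (by simp) (by simp)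
    exact ⟨∑ s, tl s (l s), l, h2, h3, rfl⟩
  have hAmem : sInf A ∈ A := hAne.csInf_mem hAfin
  have hBmem : sInf B ∈ B := hBne.csInf_mem hBfin
  have hLHS : LHS = sInf A := rfl
  -- sInf B ≤ sInf A
  have h1 : sInf B ≤ sInf A := by
    obtain ⟨δ, hδ, heq⟩ := hAmem
    set a : Fin S → ℕ := fun s => (Finset.univ.filter fun i => c < δ s i).card with ha
    have han : ∀ s, a s ≤ n s := by
      intro s
      calc a s ≤ (Finset.univ : Finset (Fin (n s))).card := Finset.card_filter_le _ _
        _ = n s := by simp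
    obtain ⟨l, hl1, hl2, hl3⟩ := pad_alloc n (N - k) (by omega) (N - k) a (by omega) han hδ
    have hmem : ∑ s, tl s (l s) ∈ B := ⟨l, hl2, hl3, rfl⟩
    have hle : ∑ s, tl s (l s) ≤ ∑ s, f s (δ s) := by
      refine Finset.sum_le_sum fun s _ => ?_
      exact le_trans (htl_anti s (a s) (l s) (hl1 s)) (htl_le s (a s) (δ s) le_rfl)
    calc sInf B ≤ ∑ s, tl s (l s) := csInf_le hBfin.bddBelow hmem
      _ ≤ ∑ s, f s (δ s) := hle
      _ = sInf A := heq.symm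
  -- sInf A ≤ sInf B
  have h2 : sInf A ≤ sInf B := by
    obtain ⟨l, hl1, hl2, heq⟩ := hBmem
    choose δ hδc hδv using fun s => htl_mem s (l s)
    have hcard : ∑ s, (Finset.univ.filter fun i => c < δ s i).card ≤ N - k := by
      calc ∑ s, (Finset.univ.filter fun i => c < δ s i).card ≤ ∑ s, l s :=
            Finset.sum_le_sum fun s _ => hδc s
        _ = N - k := hl2
    have hmem : ∑ s, f s (δ s) ∈ A := ⟨δ, hcard, rfl⟩
    calc sInf A ≤ ∑ s, f s (δ s) := csInf_le hAfin.bddBelow hmem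
      _ = ∑ s, tl s (l s) := by exact Finset.sum_congr rfl fun s _ => (hδv s).symm
      _ = sInf B := heq.symm
  refine ⟨le_antisymm h2 h1, ?_⟩
  obtain ⟨δ, hδ, heq⟩ := hAmem
  exact ⟨δ, hδ, heq.symm⟩
end

section
/- Let S ≥ 1 and n_1,…,n_S ≥ 1 be integers, N = Σ_s n_s, and for each s let t_s : {0,1,…,n_s} → ℝ be nonincreasing. For an integer 0 ≤ k ≤ N set n_{sk} = min(n_s, N−k) and let T(k) be the optimal value of the linear program min Σ_{s=1}^S Σ_{l=0}^{n_{sk}} x_{sl} t_s(l) over reals x_{sl} ∈ [0,1] with Σ_{l=0}^{n_{sk}} x_{sl} = 1 for every s and Σ_{s=1}^S Σ_{l=0}^{n_{sk}} l·x_{sl} = N−k (the minimum exists, the feasible set being nonempty and compact). Then T(k−1) ≤ T(k) for every 1 ≤ k ≤ N. Moreover, if t̃_s : {0,1,…,n_s} → ℝ (also nonincreasing) satisfy t_s(l) ≤ t̃_s(l) for all s and l, then the corresponding optimal values satisfy T(k) ≤ T̃(k) for every 0 ≤ k ≤ N. -/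
open Finset

def FeasSet (S : ℕ) (n : Fin S → ℕ) (N : ℕ) (f : Fin S → ℕ → ℝ) (k : ℕ) : Set ℝ :=
  {v : ℝ | ∃ x : Fin S → ℕ → ℝ,
    (∀ s, ∀ l ∈ Finset.range (min (n s) (N - k) + 1), 0 ≤ x s l ∧ x s l ≤ 1) ∧
    (∀ s, ∑ l ∈ Finset.range (min (n s) (N - k) + 1), x s l = 1) ∧
    (∑ s, ∑ l ∈ Finset.range (min (n s) (N - k) + 1), (l : ℝ) * x s l
        = (N : ℝ) - (k : ℝ)) ∧
    v = ∑ s, ∑ l ∈ Finset.range (min (n s) (N - k) + 1), x s l * f s l}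

theorem sInf_mono' (A B : Set ℝ) (b : ℝ) (hA : ∀ v ∈ A, b ≤ v) (hB : B.Nonempty)
    (h : ∀ v ∈ B, ∃ u ∈ A, u ≤ v) : sInf A ≤ sInf B := by
  refine le_csInf hB fun v hv => ?_
  obtain ⟨u, hu, huv⟩ := h v hv
  exact le_trans (csInf_le ⟨b, fun w hw => hA w hw⟩ hu) huv

theorem feas_bdd {S N : ℕ} {n : Fin S → ℕ} {f : Fin S → ℕ → ℝ}
    (hf : ∀ s, ∀ l l' : ℕ, l ≤ l' → l' ≤ n s → f s l' ≤ f s l) (k : ℕ) :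
    ∀ v ∈ FeasSet S n N f k, (∑ s, f s (n s)) ≤ v := by
  rintro v ⟨x, hx01, hx1, -, rfl⟩
  refine Finset.sum_le_sum fun s _ => ?_
  have h1 : f s (n s) = ∑ l ∈ Finset.range (min (n s) (N - k) + 1), x s l * f s (n s) := by
    rw [← Finset.sum_mul, hx1 s, one_mul]
  rw [h1]
  refine Finset.sum_le_sum fun l hl => ?_
  have hl' : l ≤ n s := le_trans (Nat.lt_succ_iff.mp (Finset.mem_range.mp hl)) (min_le_left _ _)
  exact mul_le_mul_of_nonneg_left (hf s l (n s) hl' le_rfl) (hx01 s l hl).1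

theorem feas_nonempty {S N : ℕ} {n : Fin S → ℕ} (hn : ∀ s, 1 ≤ n s)
    (hN : N = ∑ s, n s) (hN1 : 1 ≤ N) (f : Fin S → ℕ → ℝ) {k : ℕ} (hk : k ≤ N) :
    (FeasSet S n N f k).Nonempty := by
  rcases Nat.eq_zero_or_pos (N - k) with hm0 | hm1
  · refine ⟨_, ⟨fun _ l => if l = 0 then (1:ℝ) else 0, ?_, ?_, ?_, rfl⟩⟩
    · intro s l _; dsimp only; split_ifs <;> norm_num
    · intro s
      rw [Finset.sum_ite_eq' (Finset.range (min (n s) (N - k) + 1)) 0 (fun _ => (1:ℝ)),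
        if_pos (Finset.mem_range.2 (Nat.succ_pos _))]
    · have hkN : k = N := by omega
      subst hkN
      rw [sub_self]
      refine Finset.sum_eq_zero fun s _ => Finset.sum_eq_zero fun l hl => ?_
      rcases eq_or_ne l 0 with h | h
      · simp [h]
      · simp [h]
  · set m := N - k with hm
    have hNpos : (0:ℝ) < N := by exact_mod_cast hN1
    set ee : Fin S → ℝ := fun s => (m : ℝ) * (n s) / N with hee
    have hM1 : ∀ s, 1 ≤ min (n s) m := fun s => le_min (hn s) hm1
    have hMpos : ∀ s, (0:ℝ) < ((min (n s) m : ℕ) : ℝ) := fun s => by exact_mod_cast hM1 s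
    have heM : ∀ s, ee s ≤ ((min (n s) m : ℕ) : ℝ) := by
      intro s
      rw [hee]; dsimp only
      rw [div_le_iff₀ hNpos]
      rcases le_total (n s) m with h | h
      · rw [min_eq_left h]
        have h2 : (m:ℝ) ≤ N := by exact_mod_cast (by omega : m ≤ N)
        nlinarith [Nat.cast_nonneg (α := ℝ) (n s)]
      · rw [min_eq_right h]
        have hnsN : n s ≤ N := by
          rw [hN]; exact Finset.single_le_sum (fun _ _ => Nat.zero_le _) (Finset.mem_univ s)
        have h2 : ((n s):ℝ) ≤ N := by exact_mod_cast hnsN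
        nlinarith [Nat.cast_nonneg (α := ℝ) m]
    have hee0 : ∀ s, 0 ≤ ee s := fun s => by rw [hee]; positivity
    refine ⟨_, ⟨fun s l => (if l = 0 then 1 - ee s / ((min (n s) m : ℕ) : ℝ) else 0)
        + (if l = min (n s) m then ee s / ((min (n s) m : ℕ) : ℝ) else 0), ?_, ?_, ?_, rfl⟩⟩
    · intro s l _
      have h1 : 0 ≤ ee s / ((min (n s) m : ℕ) : ℝ) := div_nonneg (hee0 s) (le_of_lt (hMpos s))
      have h2 : ee s / ((min (n s) m : ℕ) : ℝ) ≤ 1 := (div_le_one (hMpos s)).2 (heM s)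
      dsimp only
      split_ifs <;> constructor <;> linarith
    · intro s
      rw [Finset.sum_add_distrib,
        Finset.sum_ite_eq' (Finset.range (min (n s) m + 1)) 0
          (fun _ => 1 - ee s / ((min (n s) m : ℕ) : ℝ)),
        Finset.sum_ite_eq' (Finset.range (min (n s) m + 1)) (min (n s) m)
          (fun _ => ee s / ((min (n s) m : ℕ) : ℝ)),
        if_pos (Finset.mem_range.2 (Nat.succ_pos _)),
        if_pos (Finset.mem_range.2 (Nat.lt_succ_self _))]
      ring
    · have hterm : ∀ s, (∑ l ∈ Finset.range (min (n s) m + 1), (l:ℝ) *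
          ((if l = 0 then 1 - ee s / ((min (n s) m : ℕ) : ℝ) else 0)
            + (if l = min (n s) m then ee s / ((min (n s) m : ℕ) : ℝ) else 0))) = ee s := by
        intro s
        simp only [mul_add, mul_ite, mul_zero]
        rw [Finset.sum_add_distrib,
          Finset.sum_ite_eq' _ 0 (fun l : ℕ => (l:ℝ) * (1 - ee s / ((min (n s) m : ℕ) : ℝ))),
          Finset.sum_ite_eq' _ (min (n s) m) (fun l : ℕ => (l:ℝ) * (ee s / ((min (n s) m : ℕ) : ℝ))),
          if_pos (Finset.mem_range.2 (Nat.succ_pos _)),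
          if_pos (Finset.mem_range.2 (Nat.lt_succ_self _))]
        rw [Nat.cast_zero, zero_mul, zero_add, mul_comm,
          div_mul_cancel₀ _ (ne_of_gt (hMpos s))]
      rw [Finset.sum_congr rfl fun s _ => hterm s]
      have hsum : ∑ s, ((n s):ℝ) = (N:ℝ) := by rw [hN]; push_cast; rfl
      have hmcast : (m:ℝ) = (N:ℝ) - k := by rw [hm, Nat.cast_sub hk]
      simp only [hee]
      rw [← Finset.sum_div, ← Finset.mul_sum, hsum, mul_div_assoc,
        div_self (ne_of_gt hNpos), mul_one, hmcast]

theorem part1 {S N : ℕ} {n : Fin S → ℕ} (hN : N = ∑ s, n s)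
    {t : Fin S → ℕ → ℝ}
    (ht : ∀ s, ∀ l l' : ℕ, l ≤ l' → l' ≤ n s → t s l' ≤ t s l)
    {k : ℕ} (hk1 : 1 ≤ k) (hk2 : k ≤ N) :
    ∀ v ∈ FeasSet S n N t k, ∃ u ∈ FeasSet S n N t (k - 1), u ≤ v := by
  rintro v ⟨x, hx01, hx1, hxm, rfl⟩
  set m := N - k with hm
  have hmk : N - (k - 1) = m + 1 := by omega
  have hcc' : ∀ s, min (n s) m ≤ min (n s) (m+1) := fun s => min_le_min le_rfl (Nat.le_succ m)
  have hc'n : ∀ s, min (n s) (m+1) ≤ n s := fun s => min_le_left _ _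
  -- per-stratum means
  set e : Fin S → ℝ := fun s => ∑ l ∈ Finset.range (min (n s) m + 1), (l : ℝ) * x s l with he
  have he0 : ∀ s, 0 ≤ e s := fun s => Finset.sum_nonneg fun l hl =>
    mul_nonneg (Nat.cast_nonneg l) (hx01 s l hl).1
  have hec : ∀ s, e s ≤ ((min (n s) m : ℕ) : ℝ) := by
    intro s
    calc e s ≤ ∑ l ∈ Finset.range (min (n s) m + 1), ((min (n s) m : ℕ) : ℝ) * x s l := by
          refine Finset.sum_le_sum fun l hl => ?_
          exact mul_le_mul_of_nonneg_right
            (by exact_mod_cast Nat.lt_succ_iff.mp (Finset.mem_range.mp hl)) (hx01 s l hl).1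
      _ = ((min (n s) m : ℕ) : ℝ) := by rw [← Finset.mul_sum, hx1 s, mul_one]
  have hec' : ∀ s, e s ≤ ((min (n s) (m+1) : ℕ) : ℝ) :=
    fun s => (hec s).trans (by exact_mod_cast hcc' s)
  have hesum : ∑ s, e s = (m : ℝ) := by
    have hcast : (N : ℝ) - (k : ℝ) = (m : ℝ) := by rw [hm, Nat.cast_sub hk2]
    rw [← hcast]; exact hxm
  -- capacities
  set cap : Fin S → ℝ := fun s => ((min (n s) (m+1) : ℕ) : ℝ) - e s with hcap
  have hcap0 : ∀ s, 0 ≤ cap s := fun s => sub_nonneg.2 (hec' s)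
  have hcapsum : (1 : ℝ) ≤ ∑ s, cap s := by
    have hnat : m + 1 ≤ ∑ s, min (n s) (m+1) := by
      by_cases hex : ∃ s, m + 1 ≤ n s
      · obtain ⟨s, hs⟩ := hex
        calc m + 1 = min (n s) (m+1) := (min_eq_right hs).symm
          _ ≤ ∑ s, min (n s) (m+1) :=
            Finset.single_le_sum (f := fun s => min (n s) (m+1))
              (fun _ _ => Nat.zero_le _) (Finset.mem_univ s)
      · push_neg at hex
        have hall : ∀ s, min (n s) (m+1) = n s :=
          fun s => min_eq_left (le_of_lt (hex s))
        calc m + 1 ≤ N := by omega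
          _ = ∑ s, n s := hN
          _ = ∑ s, min (n s) (m+1) := Finset.sum_congr rfl fun s _ => (hall s).symm
    have hcast : ((m:ℝ) + 1) ≤ ∑ s, ((min (n s) (m+1) : ℕ) : ℝ) := by
      have := hnat; push_cast at this ⊢
      exact_mod_cast this
    have hsum : ∑ s, cap s = (∑ s, ((min (n s) (m+1) : ℕ) : ℝ)) - m := by
      rw [hcap, Finset.sum_sub_distrib, hesum]
    linarith
  -- greedy allocation
  set capN : ℕ → ℝ := fun i => if h : i < S then cap ⟨i, h⟩ else 0 with hcapN
  have hcapN0 : ∀ i, 0 ≤ capN i := by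
    intro i; rw [hcapN]; dsimp only; split_ifs; exacts [hcap0 _, le_rfl]
  set g : ℕ → ℝ := fun j => min (∑ i ∈ Finset.range j, capN i) 1 with hg
  set δ : Fin S → ℝ := fun s => g (s.1 + 1) - g s.1 with hδ
  have hgmono : Monotone g := by
    intro a b hab
    exact min_le_min (Finset.sum_le_sum_of_subset_of_nonneg (Finset.range_subset_range.2 hab)
      (fun i _ _ => hcapN0 i)) le_rfl
  have hδ0 : ∀ s, 0 ≤ δ s := fun s => sub_nonneg.2 (hgmono (Nat.le_succ _))
  have hcapNs : ∀ s : Fin S, capN s.1 = cap s := by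
    intro s; rw [hcapN]; dsimp only; rw [dif_pos s.2]
  have hδcap : ∀ s, δ s ≤ cap s := by
    intro s
    have h1 : g (s.1+1) ≤ g s.1 + cap s := by
      rw [hg]; dsimp only
      rw [Finset.sum_range_succ, hcapNs s]
      calc min (∑ i ∈ Finset.range s.1, capN i + cap s) 1
          ≤ min (∑ i ∈ Finset.range s.1, capN i + cap s) (1 + cap s) :=
            min_le_min le_rfl (by linarith [hcap0 s])
        _ = min (∑ i ∈ Finset.range s.1, capN i) 1 + cap s := by rw [min_add_add_right]
    rw [hδ]; dsimp only; linarith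
  have hδsum : ∑ s, δ s = 1 := by
    have h1 : ∑ s : Fin S, δ s = ∑ i ∈ Finset.range S, (g (i+1) - g i) :=
      Fin.sum_univ_eq_sum_range (fun i => g (i+1) - g i) S
    rw [h1, Finset.sum_range_sub g S]
    have hg0 : g 0 = 0 := by rw [hg]; simp
    have hgS : g S = 1 := by
      rw [hg]; dsimp only
      have h2 : ∑ i ∈ Finset.range S, capN i = ∑ s : Fin S, cap s := by
        rw [← Fin.sum_univ_eq_sum_range (fun i => capN i) S]
        exact Finset.sum_congr rfl fun s _ => hcapNs s
      rw [h2]; exact min_eq_right hcapsum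
    rw [hg0, hgS, sub_zero]
  -- mixing weights
  set lam : Fin S → ℝ := fun s =>
    if e s < ((min (n s) (m+1) : ℕ) : ℝ) then δ s / (((min (n s) (m+1) : ℕ) : ℝ) - e s) else 0
    with hlam
  have hlam0 : ∀ s, 0 ≤ lam s := by
    intro s; rw [hlam]; dsimp only; split_ifs with h
    · exact div_nonneg (hδ0 s) (by linarith)
    · exact le_rfl
  have hlam1 : ∀ s, lam s ≤ 1 := by
    intro s; rw [hlam]; dsimp only; split_ifs with h
    · exact (div_le_one (by linarith)).2 (hδcap s)
    · norm_num
  have hlamkey : ∀ s, lam s * (((min (n s) (m+1) : ℕ) : ℝ) - e s) = δ s := by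
    intro s; rw [hlam]; dsimp only; split_ifs with h
    · exact div_mul_cancel₀ _ (ne_of_gt (sub_pos.2 h))
    · have h2 : cap s ≤ 0 := by rw [hcap]; dsimp only; linarith [not_lt.mp h]
      have h3 : δ s = 0 := le_antisymm (by linarith [hδcap s]) (hδ0 s)
      rw [h3, zero_mul]
  -- the new point
  set xb : Fin S → ℕ → ℝ := fun s l => if l ≤ min (n s) m then x s l else 0 with hxb
  set y : Fin S → ℕ → ℝ := fun s l =>
    (1 - lam s) * xb s l + (if l = min (n s) (m+1) then lam s else 0) with hy
  have hsub : ∀ s, Finset.range (min (n s) m + 1) ⊆ Finset.range (min (n s) (m+1) + 1) :=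
    fun s => Finset.range_subset_range.2 (Nat.add_le_add_right (hcc' s) 1)
  have hxb_gen : ∀ (s : Fin S) (F : ℕ → ℝ),
      ∑ l ∈ Finset.range (min (n s) (m+1) + 1), xb s l * F l
        = ∑ l ∈ Finset.range (min (n s) m + 1), x s l * F l := by
    intro s F
    have h1 : ∑ l ∈ Finset.range (min (n s) m + 1), xb s l * F l
        = ∑ l ∈ Finset.range (min (n s) (m+1) + 1), xb s l * F l := by
      refine Finset.sum_subset (hsub s) fun l _ hl => ?_
      have h2 : ¬ l ≤ min (n s) m := by
        simpa [Finset.mem_range, Nat.lt_succ_iff] using hl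
      rw [hxb]; dsimp only; rw [if_neg h2, zero_mul]
    rw [← h1]
    refine Finset.sum_congr rfl fun l hl => ?_
    rw [hxb]; dsimp only; rw [if_pos (Nat.lt_succ_iff.mp (Finset.mem_range.mp hl))]
  have hxb_sum : ∀ s, ∑ l ∈ Finset.range (min (n s) (m+1) + 1), xb s l = 1 := by
    intro s
    have h1 := hxb_gen s (fun _ => (1:ℝ))
    simp only [mul_one] at h1
    rw [h1, hx1 s]
  have hxb_lin : ∀ s, ∑ l ∈ Finset.range (min (n s) (m+1) + 1), (l:ℝ) * xb s l = e s := by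
    intro s
    have h1 := hxb_gen s (fun l => (l:ℝ))
    rw [he]; dsimp only
    calc ∑ l ∈ Finset.range (min (n s) (m+1) + 1), (l:ℝ) * xb s l
        = ∑ l ∈ Finset.range (min (n s) (m+1) + 1), xb s l * (l:ℝ) :=
          Finset.sum_congr rfl fun l _ => mul_comm _ _
      _ = ∑ l ∈ Finset.range (min (n s) m + 1), x s l * (l:ℝ) := h1
      _ = ∑ l ∈ Finset.range (min (n s) m + 1), (l:ℝ) * x s l :=
          Finset.sum_congr rfl fun l _ => mul_comm _ _
  have hxb01 : ∀ s l, 0 ≤ xb s l ∧ xb s l ≤ 1 := by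
    intro s l
    rw [hxb]; dsimp only; split_ifs with h
    · exact hx01 s l (Finset.mem_range.2 (Nat.lt_succ_of_le h))
    · norm_num
  have hmemc' : ∀ s, min (n s) (m+1) ∈ Finset.range (min (n s) (m+1) + 1) :=
    fun s => Finset.mem_range.2 (Nat.lt_succ_self _)
  -- per-stratum identities for y
  have hy_sum : ∀ s, ∑ l ∈ Finset.range (min (n s) (m+1) + 1), y s l = 1 := by
    intro s
    rw [hy]; dsimp only
    rw [Finset.sum_add_distrib, ← Finset.mul_sum, hxb_sum s,
      Finset.sum_ite_eq' (Finset.range (min (n s) (m+1) + 1)) (min (n s) (m+1))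
        (fun _ : ℕ => lam s), if_pos (hmemc' s)]
    ring
  have hy_lin : ∀ s, ∑ l ∈ Finset.range (min (n s) (m+1) + 1), (l:ℝ) * y s l
      = e s + δ s := by
    intro s
    rw [hy]; dsimp only
    have h1 : ∀ l : ℕ, (l:ℝ) * ((1 - lam s) * xb s l + (if l = min (n s) (m+1) then lam s else 0))
        = (1 - lam s) * ((l:ℝ) * xb s l) + (if l = min (n s) (m+1) then (l:ℝ) * lam s else 0) := by
      intro l; split_ifs <;> ring
    rw [Finset.sum_congr rfl fun l _ => h1 l, Finset.sum_add_distrib, ← Finset.mul_sum,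
      hxb_lin s,
      Finset.sum_ite_eq' (Finset.range (min (n s) (m+1) + 1)) (min (n s) (m+1))
        (fun l : ℕ => (l:ℝ) * lam s), if_pos (hmemc' s)]
    have h2 := hlamkey s
    linear_combination h2
  have hy_obj : ∀ s, ∑ l ∈ Finset.range (min (n s) (m+1) + 1), y s l * t s l
      = (1 - lam s) * (∑ l ∈ Finset.range (min (n s) m + 1), x s l * t s l)
        + lam s * t s (min (n s) (m+1)) := by
    intro s
    rw [hy]; dsimp only
    have h1 : ∀ l : ℕ, ((1 - lam s) * xb s l + (if l = min (n s) (m+1) then lam s else 0)) * t s l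
        = (1 - lam s) * (xb s l * t s l)
          + (if l = min (n s) (m+1) then lam s * t s l else 0) := by
      intro l; split_ifs <;> ring
    rw [Finset.sum_congr rfl fun l _ => h1 l, Finset.sum_add_distrib, ← Finset.mul_sum,
      hxb_gen s (fun l => t s l),
      Finset.sum_ite_eq' (Finset.range (min (n s) (m+1) + 1)) (min (n s) (m+1))
        (fun l : ℕ => lam s * t s l), if_pos (hmemc' s)]
  have hA : ∀ s, t s (min (n s) (m+1)) ≤ ∑ l ∈ Finset.range (min (n s) m + 1), x s l * t s l := by
    intro s
    calc t s (min (n s) (m+1))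
        = ∑ l ∈ Finset.range (min (n s) m + 1), x s l * t s (min (n s) (m+1)) := by
          rw [← Finset.sum_mul, hx1 s, one_mul]
      _ ≤ ∑ l ∈ Finset.range (min (n s) m + 1), x s l * t s l := by
          refine Finset.sum_le_sum fun l hl => ?_
          refine mul_le_mul_of_nonneg_left (ht s l (min (n s) (m+1)) ?_ (hc'n s)) (hx01 s l hl).1
          exact le_trans (Nat.lt_succ_iff.mp (Finset.mem_range.mp hl)) (hcc' s)
  -- assemble
  refine ⟨∑ s, ∑ l ∈ Finset.range (min (n s) (N - (k-1)) + 1), y s l * t s l,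
    ⟨y, ?_, ?_, ?_, rfl⟩, ?_⟩
  · simp only [hmk]
    intro s l hl
    have h1 := hlam0 s
    have h2 := hlam1 s
    have h3 := (hxb01 s l).1
    have h4 := (hxb01 s l).2
    rw [hy]; dsimp only
    have h5 : (1 - lam s) * xb s l ≤ (1 - lam s) * 1 :=
      mul_le_mul_of_nonneg_left h4 (by linarith)
    have h6 : 0 ≤ (1 - lam s) * xb s l := mul_nonneg (by linarith) h3
    split_ifs with h
    · constructor <;> linarith
    · constructor <;> linarith
  · simp only [hmk]; exact hy_sum
  · simp only [hmk]
    rw [Finset.sum_congr rfl fun s _ => hy_lin s, Finset.sum_add_distrib, hesum, hδsum]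
    have h1 : ((k-1:ℕ):ℝ) = (k:ℝ) - 1 := by rw [Nat.cast_sub hk1, Nat.cast_one]
    have h2 : (m:ℝ) = (N:ℝ) - (k:ℝ) := by rw [hm, Nat.cast_sub hk2]
    rw [h1]; linarith
  · simp only [hmk]
    rw [Finset.sum_congr rfl fun s _ => hy_obj s]
    refine Finset.sum_le_sum fun s _ => ?_
    have h1 := hA s
    have h2 := hlam0 s
    have h4 : 0 ≤ lam s * ((∑ l ∈ Finset.range (min (n s) m + 1), x s l * t s l)
        - t s (min (n s) (m+1))) := mul_nonneg h2 (sub_nonneg.2 h1)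
    have h5 : (1 - lam s) * (∑ l ∈ Finset.range (min (n s) m + 1), x s l * t s l)
        + lam s * t s (min (n s) (m+1))
        = (∑ l ∈ Finset.range (min (n s) m + 1), x s l * t s l)
          - lam s * ((∑ l ∈ Finset.range (min (n s) m + 1), x s l * t s l)
            - t s (min (n s) (m+1))) := by ring
    rw [h5]
    linarith

/-- Monotonicity of the linear-programming lower bound on the minimized stratified rank
statistic: the LP optimal value `T(k)` is nondecreasing in the quantile index `k`, and
nondecreasing under pointwise increase of the (nonincreasing) stratum values `t_s`. -/
theorem stmt12 (S : ℕ) (hS : 1 ≤ S) (n : Fin S → ℕ) (hn : ∀ s, 1 ≤ n s)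
    (t t' : Fin S → ℕ → ℝ)
    (ht : ∀ s, ∀ l l' : ℕ, l ≤ l' → l' ≤ n s → t s l' ≤ t s l)
    (ht' : ∀ s, ∀ l l' : ℕ, l ≤ l' → l' ≤ n s → t' s l' ≤ t' s l)
    (hle : ∀ s, ∀ l ≤ n s, t s l ≤ t' s l) :
    let N := ∑ s, n s
    let T : (Fin S → ℕ → ℝ) → ℕ → ℝ := fun f k =>
      sInf {v : ℝ | ∃ x : Fin S → ℕ → ℝ,
        (∀ s, ∀ l ∈ Finset.range (min (n s) (N - k) + 1), 0 ≤ x s l ∧ x s l ≤ 1) ∧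
        (∀ s, ∑ l ∈ Finset.range (min (n s) (N - k) + 1), x s l = 1) ∧
        (∑ s, ∑ l ∈ Finset.range (min (n s) (N - k) + 1), (l : ℝ) * x s l
            = (N : ℝ) - (k : ℝ)) ∧
        v = ∑ s, ∑ l ∈ Finset.range (min (n s) (N - k) + 1), x s l * f s l}
    (∀ k : ℕ, 1 ≤ k → k ≤ N → T t (k - 1) ≤ T t k) ∧
    (∀ k ≤ N, T t k ≤ T t' k) := by
  intro N T
  have hN : N = ∑ s, n s := rfl
  have hN1 : 1 ≤ N := le_trans (hn ⟨0, hS⟩)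
    (hN ▸ Finset.single_le_sum (f := n) (fun _ _ => Nat.zero_le _)
      (Finset.mem_univ (⟨0, hS⟩ : Fin S)))
  have hTeq : ∀ f k, T f k = sInf (FeasSet S n N f k) := fun f k => rfl
  constructor
  · intro k hk1 hk2
    rw [hTeq, hTeq]
    exact sInf_mono' _ _ _ (feas_bdd ht (k - 1)) (feas_nonempty hn hN hN1 t hk2)
      (part1 hN ht hk1 hk2)
  · intro k hk
    rw [hTeq, hTeq]
    refine sInf_mono' _ _ (∑ s, t s (n s)) (feas_bdd ht k)
      (feas_nonempty hn hN hN1 t' hk) ?_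
    rintro v ⟨x, hx01, hx1, hxm, rfl⟩
    refine ⟨_, ⟨x, hx01, hx1, hxm, rfl⟩, ?_⟩
    refine Finset.sum_le_sum fun s _ => Finset.sum_le_sum fun l hl => ?_
    have hl' : l ≤ n s :=
      le_trans (Nat.lt_succ_iff.mp (Finset.mem_range.mp hl)) (min_le_left _ _)
    exact mul_le_mul_of_nonneg_left (hle s l hl') (hx01 s l hl).1
end

section
/- For any integer n ≥ 1, any b = (b_0, b_1, …, b_n) ∈ ℝ^{n+1}, any a = (a_1,…,a_n) ∈ ℝ^n with a_i = b_{i−1} − b_i for all i, and any real number k ∈ [0, n]: Σ_{i=1}^{⌊k⌋} Ψ̃_i(a) + (k − ⌊k⌋)·Ψ̃_{⌊k⌋+1}(a) = max_{(x_0,…,x_n) ∈ S_{n,k}} Σ_{l=0}^n x_l (b_0 − b_l), where ⌊k⌋ is the greatest integer ≤ k and the term involving Ψ̃_{⌊k⌋+1}(a) is taken to be 0 when k is an integer (in particular when k = n). -/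
/-- partial sums -/
def pS (a : ℕ → ℝ) (j : ℕ) : ℝ := ∑ t ∈ Finset.Icc 1 j, a t

lemma psiSet_eq (m : ℕ) (a : ℕ → ℝ) (i : ℕ) :
    {x : ℝ | ∃ j : ℕ, i + 1 ≤ j ∧ j ≤ m ∧
        x = ((∑ t ∈ Finset.Icc 1 j, a t) - psiSum m a i) / ((j : ℝ) - (i : ℝ))} =
    ↑((Finset.Icc (i+1) m).image fun j => (pS a j - psiSum m a i) / ((j : ℝ) - (i : ℝ))) := by
  ext x
  simp [pS, Finset.mem_Icc, and_assoc, eq_comm]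

lemma psiT_succ (m : ℕ) (a : ℕ → ℝ) (i : ℕ) :
    psiT m a (i+1) = sSup {x : ℝ | ∃ j : ℕ, i + 1 ≤ j ∧ j ≤ m ∧
        x = ((∑ t ∈ Finset.Icc 1 j, a t) - psiSum m a i) / ((j : ℝ) - (i : ℝ))} := by
  simp [psiT, psiSum]

lemma psiT_le (m : ℕ) (a : ℕ → ℝ) {i j : ℕ} (hij : i < j) (hjm : j ≤ m) :
    (pS a j - psiSum m a i) / ((j : ℝ) - (i : ℝ)) ≤ psiT m a (i+1) := by
  rw [psiT_succ, psiSet_eq]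
  exact le_csSup ((Finset.Icc (i+1) m).image _).bddAbove
    (by simp only [Finset.coe_image, Set.mem_image, Finset.mem_coe, Finset.mem_Icc]
        exact ⟨j, ⟨hij, hjm⟩, rfl⟩)

lemma psiT_attained (m : ℕ) (a : ℕ → ℝ) {i : ℕ} (him : i < m) :
    ∃ j, i + 1 ≤ j ∧ j ≤ m ∧ psiT m a (i+1) = (pS a j - psiSum m a i) / ((j : ℝ) - (i : ℝ)) := by
  rw [psiT_succ]
  have hne : {x : ℝ | ∃ j : ℕ, i + 1 ≤ j ∧ j ≤ m ∧
        x = ((∑ t ∈ Finset.Icc 1 j, a t) - psiSum m a i) / ((j : ℝ) - (i : ℝ))}.Nonempty :=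
    ⟨_, ⟨m, him, le_rfl, rfl⟩⟩
  have hfin : {x : ℝ | ∃ j : ℕ, i + 1 ≤ j ∧ j ≤ m ∧
        x = ((∑ t ∈ Finset.Icc 1 j, a t) - psiSum m a i) / ((j : ℝ) - (i : ℝ))}.Finite := by
    rw [psiSet_eq]; exact Finset.finite_toSet _
  have := hne.csSup_mem hfin
  obtain ⟨j, h1, h2, h3⟩ := this
  exact ⟨j, h1, h2, by rw [h3]; rfl⟩

lemma psiSum_succ_sub (m : ℕ) (a : ℕ → ℝ) (i : ℕ) :
    psiSum m a (i+1) = psiSum m a i + psiT m a (i+1) := by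
  simp [psiT]

lemma pS_le_psiSum (m : ℕ) (a : ℕ → ℝ) {l : ℕ} (hl : l ≤ m) : pS a l ≤ psiSum m a l := by
  rcases Nat.eq_zero_or_pos l with h | h
  · subst h; simp [pS, psiSum]
  · obtain ⟨i, rfl⟩ : ∃ i, l = i + 1 := ⟨l - 1, by omega⟩
    have := psiT_le m a (Nat.lt_succ_self i) hl
    have hden : ((i+1 : ℕ) : ℝ) - (i : ℝ) = 1 := by push_cast; ring
    rw [hden, div_one] at this
    have := psiSum_succ_sub m a i
    linarith



lemma psiT_antitone_step (m : ℕ) (a : ℕ → ℝ) {i : ℕ} (hi : 1 ≤ i) (him : i < m) :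
    psiT m a (i+1) ≤ psiT m a i := by
  obtain ⟨j, hj1, hjm, hj⟩ := psiT_attained m a him
  have hcast : ((i - 1 : ℕ) : ℝ) = (i : ℝ) - 1 := by
    have := Nat.cast_sub hi (R := ℝ); simpa using this
  have h2 : (pS a j - psiSum m a (i-1)) / ((j : ℝ) - ((i-1 : ℕ) : ℝ)) ≤ psiT m a ((i-1)+1) := by
    exact psiT_le m a (by omega) hjm
  rw [show i - 1 + 1 = i by omega] at h2
  have hii : psiSum m a i = psiSum m a (i-1) + psiT m a i := by
    have := psiSum_succ_sub m a (i-1); rw [show i - 1 + 1 = i by omega] at this; exact this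
  have hd : (0:ℝ) < (j:ℝ) - (i:ℝ) := by
    have : i < j := by omega
    exact sub_pos.mpr (by exact_mod_cast this)
  have hSj : pS a j = psiSum m a i + ((j:ℝ) - (i:ℝ)) * psiT m a (i+1) := by
    field_simp at hj
    linarith [hj]
  rw [hcast] at h2
  rw [div_le_iff₀ (by linarith)] at h2
  nlinarith [h2, hSj, hii, hd]

lemma psiT_antitone (m : ℕ) (a : ℕ → ℝ) {s t : ℕ} (hs : 1 ≤ s) (hst : s ≤ t) (htm : t ≤ m) :
    psiT m a t ≤ psiT m a s := by
  induction t with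
  | zero => omega
  | succ t ih =>
    rcases Nat.lt_or_ge s (t+1) with h | h
    · have h1 : psiT m a (t+1) ≤ psiT m a t := psiT_antitone_step m a (by omega) (by omega)
      exact h1.trans (ih (by omega) (by omega))
    · have : s = t + 1 := by omega
      subst this; rfl

lemma psiSum_sub_eq_sum (m : ℕ) (a : ℕ → ℝ) {p q : ℕ} (hpq : p ≤ q) :
    psiSum m a q - psiSum m a p = ∑ t ∈ Finset.Icc (p+1) q, psiT m a t := by
  induction q with
  | zero =>
    have : p = 0 := by omega
    subst this; simp
  | succ q ih =>
    rcases Nat.lt_or_ge p (q+1) with h | h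
    · rw [Finset.sum_Icc_succ_top (by omega : p + 1 ≤ q + 1), ← ih (by omega),
        psiSum_succ_sub m a q]
      ring
    · have : p = q + 1 := by omega
      subst this; simp

lemma psiSum_eq_sum (m : ℕ) (a : ℕ → ℝ) (q : ℕ) :
    psiSum m a q = ∑ t ∈ Finset.Icc 1 q, psiT m a t := by
  have := psiSum_sub_eq_sum m a (Nat.zero_le q)
  simpa [psiSum] using this

lemma touch (m : ℕ) (a : ℕ → ℝ) {i : ℕ} (him : i < m) :
    ∃ j, i + 1 ≤ j ∧ j ≤ m ∧ psiSum m a j = pS a j ∧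
      ∀ t, i + 1 ≤ t → t ≤ j → psiT m a t = psiT m a (i+1) := by
  obtain ⟨j, hj1, hjm, hj⟩ := psiT_attained m a him
  have hd : (0:ℝ) < (j:ℝ) - (i:ℝ) := sub_pos.mpr (by exact_mod_cast (by omega : i < j))
  have hSj : pS a j = psiSum m a i + ((j:ℝ) - (i:ℝ)) * psiT m a (i+1) := by
    field_simp at hj; linarith
  have hle : ∀ t ∈ Finset.Icc (i+1) j, psiT m a t ≤ psiT m a (i+1) := by
    intro t ht
    rw [Finset.mem_Icc] at ht
    exact psiT_antitone m a (by omega) ht.1 (le_trans ht.2 hjm)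
  have hcard : (Finset.Icc (i+1) j).card = j - i := by
    rw [Nat.card_Icc]; omega
  have hsum_le : ∑ t ∈ Finset.Icc (i+1) j, psiT m a t ≤ ((j:ℝ) - (i:ℝ)) * psiT m a (i+1) := by
    calc ∑ t ∈ Finset.Icc (i+1) j, psiT m a t
        ≤ ∑ t ∈ Finset.Icc (i+1) j, psiT m a (i+1) := Finset.sum_le_sum hle
      _ = ((j:ℝ) - (i:ℝ)) * psiT m a (i+1) := by
          rw [Finset.sum_const, hcard, nsmul_eq_mul]
          congr 1
          push_cast [Nat.cast_sub (by omega : i ≤ j)]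
          ring
  have hCj : psiSum m a j - psiSum m a i = ∑ t ∈ Finset.Icc (i+1) j, psiT m a t :=
    psiSum_sub_eq_sum m a (by omega)
  have hSC : pS a j ≤ psiSum m a j := pS_le_psiSum m a hjm
  have heq : psiSum m a j = pS a j := by linarith
  have hsum_eq : ∑ t ∈ Finset.Icc (i+1) j, psiT m a t =
      ∑ t ∈ Finset.Icc (i+1) j, psiT m a (i+1) := by
    rw [Finset.sum_const, hcard, nsmul_eq_mul]
    have : ((j - i : ℕ) : ℝ) = (j:ℝ) - (i:ℝ) := by
      push_cast [Nat.cast_sub (by omega : i ≤ j)]; ring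
    rw [this]
    linarith
  have hpt := (Finset.sum_eq_sum_iff_of_le hle).mp hsum_eq
  exact ⟨j, hj1, hjm, heq, fun t ht1 ht2 => hpt t (Finset.mem_Icc.mpr ⟨ht1, ht2⟩)⟩

lemma seg (m : ℕ) (a : ℕ → ℝ) : ∀ i, i < m →
    ∃ p q, p ≤ i ∧ i + 1 ≤ q ∧ q ≤ m ∧ psiSum m a p = pS a p ∧ psiSum m a q = pS a q ∧
      ∀ t, p + 1 ≤ t → t ≤ q → psiT m a t = psiT m a (i+1) := by
  intro i
  induction i with
  | zero =>
    intro h0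
    obtain ⟨j, hj1, hjm, hje, hjc⟩ := touch m a h0
    exact ⟨0, j, le_rfl, hj1, hjm, by simp [psiSum, pS], hje, hjc⟩
  | succ i ih =>
    intro him
    by_cases hC : psiSum m a (i+1) = pS a (i+1)
    · obtain ⟨j, hj1, hjm, hje, hjc⟩ := touch m a him
      exact ⟨i+1, j, le_rfl, hj1, hjm, hC, hje, hjc⟩
    · obtain ⟨p, q, hp, hq1, hqm, hpe, hqe, hc⟩ := ih (by omega)
      have hq2 : i + 2 ≤ q := by
        rcases Nat.lt_or_ge q (i+2) with h | h
        · have : q = i + 1 := by omega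
          subst this; exact absurd hqe hC
        · exact h
      have hstep : psiT m a (i+2) = psiT m a (i+1) := hc (i+2) (by omega) hq2
      exact ⟨p, q, by omega, hq2, hqm, hpe, hqe, fun t ht1 ht2 => by
        rw [hc t ht1 ht2, ← hstep]⟩

lemma pS_tel (b : ℕ → ℝ) (j : ℕ) : pS (fun i => b (i-1) - b i) j = b 0 - b j := by
  induction j with
  | zero => simp [pS]
  | succ j ih =>
    rw [pS, Finset.sum_Icc_succ_top (by omega : 1 ≤ j+1)]
    rw [pS] at ih
    simp only [Nat.add_sub_cancel]
    rw [ih]; ring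

lemma sum_pick (n p : ℕ) (hp : p < n+1) (c : ℝ) (g : ℕ → ℝ) :
    ∑ l ∈ Finset.range (n+1), g l * (if l = p then c else 0) = g p * c := by
  rw [Finset.sum_eq_single p]
  · simp
  · intro l _ hl; simp [hl]
  · intro h; exact absurd (Finset.mem_range.mpr hp) h

lemma sum_const_interval (m : ℕ) (a : ℕ → ℝ) {p q : ℕ} (hpq : p ≤ q) (c : ℝ)
    (hc : ∀ t, p + 1 ≤ t → t ≤ q → psiT m a t = c) :
    psiSum m a q - psiSum m a p = ((q:ℝ) - (p:ℝ)) * c := by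
  rw [psiSum_sub_eq_sum m a hpq]
  rw [Finset.sum_congr rfl (fun t ht => hc t (Finset.mem_Icc.mp ht).1 (Finset.mem_Icc.mp ht).2)]
  rw [Finset.sum_const, Nat.card_Icc, nsmul_eq_mul]
  congr 1
  have : q + 1 - (p+1) = q - p := by omega
  rw [this, Nat.cast_sub hpq]

set_option maxHeartbeats 1000000 in
/-- The linearly interpolated partial sums of `Ψ̃(a)`, with `a_i = b_{i−1} − b_i`, equal
the maximal fractional single-stratum objective over the simplex-with-mean constraint
`S_{n,k}`. -/
theorem stmt13 (n : ℕ) (hn : 1 ≤ n) (b : ℕ → ℝ) (k : ℝ) (hk0 : 0 ≤ k) (hkn : k ≤ n) :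
    (∑ i ∈ Finset.Icc 1 ⌊k⌋₊, psiT n (fun i => b (i - 1) - b i) i) +
      (k - (⌊k⌋₊ : ℝ)) * psiT n (fun i => b (i - 1) - b i) (⌊k⌋₊ + 1) =
    sSup {v : ℝ | ∃ x : ℕ → ℝ, (∀ l ≤ n, 0 ≤ x l ∧ x l ≤ 1) ∧
      (∑ l ∈ Finset.range (n + 1), x l = 1) ∧
      (∑ l ∈ Finset.range (n + 1), (l : ℝ) * x l = k) ∧
      v = ∑ l ∈ Finset.range (n + 1), x l * (b 0 - b l)} := by
  set a : ℕ → ℝ := fun i => b (i - 1) - b i with ha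
  set i₀ := ⌊k⌋₊ with hi₀
  have hi₀k : (i₀ : ℝ) ≤ k := Nat.floor_le hk0
  have hki₀ : k < (i₀ : ℝ) + 1 := Nat.lt_floor_add_one k
  have hi₀n : i₀ ≤ n := by
    have h := Nat.floor_mono hkn
    simpa [hi₀] using h
  rw [← psiSum_eq_sum n a i₀]
  set Ψ := psiT n a (i₀ + 1) with hΨ
  set V := psiSum n a i₀ + (k - (i₀ : ℝ)) * Ψ with hV
  show V = _
  have htel : ∀ l : ℕ, pS a l = b 0 - b l := fun l => pS_tel b l
  by_cases hcase : i₀ < n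
  · -- fractional / interior case
    obtain ⟨p, q, hp, hq1, hqn, hpe, hqe, hconst⟩ := seg n a i₀ hcase
    have hpq : p < q := by omega
    have hD : (0:ℝ) < (q:ℝ) - (p:ℝ) := by
      have : (p:ℝ) < (q:ℝ) := by exact_mod_cast hpq
      linarith
    have hpk : (p:ℝ) ≤ k := le_trans (by exact_mod_cast hp) hi₀k
    have hkq : k < (q:ℝ) := by
      have : ((i₀:ℝ) + 1) ≤ (q:ℝ) := by exact_mod_cast hq1
      linarith
    set c1 : ℝ := ((q:ℝ) - k) / ((q:ℝ) - (p:ℝ)) with hc1def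
    set c2 : ℝ := (k - (p:ℝ)) / ((q:ℝ) - (p:ℝ)) with hc2def
    have hc1 : 0 ≤ c1 := div_nonneg (by linarith) (by linarith)
    have hc2 : 0 ≤ c2 := div_nonneg (by linarith) (by linarith)
    have hc12 : c1 + c2 = 1 := by
      rw [hc1def, hc2def, ← add_div, div_eq_one_iff_eq hD.ne']
      ring
    set x : ℕ → ℝ := fun l => (if l = p then c1 else 0) + (if l = q then c2 else 0) with hx
    have hx01 : ∀ l ≤ n, 0 ≤ x l ∧ x l ≤ 1 := by
      intro l _
      have t1 : (0:ℝ) ≤ (if l = p then c1 else 0) := by split <;> simp [hc1]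
      have t2 : (0:ℝ) ≤ (if l = q then c2 else 0) := by split <;> simp [hc2]
      have t3 : (if l = p then c1 else 0) ≤ c1 := by split <;> simp [hc1]
      have t4 : (if l = q then c2 else 0) ≤ c2 := by split <;> simp [hc2]
      exact ⟨add_nonneg t1 t2, by simp only [hx]; linarith⟩
    have hxsum : ∑ l ∈ Finset.range (n + 1), x l = 1 := by
      simp only [hx]
      rw [Finset.sum_add_distrib]
      have e1 := sum_pick n p (by omega) c1 (fun _ => (1:ℝ))
      have e2 := sum_pick n q (by omega) c2 (fun _ => (1:ℝ))
      simp only [one_mul] at e1 e2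
      rw [e1, e2, hc12]
    have hmean : ∑ l ∈ Finset.range (n + 1), (l : ℝ) * x l = k := by
      have hrw : ∀ l : ℕ, (l:ℝ) * x l
          = (fun t : ℕ => (t:ℝ)) l * (if l = p then c1 else 0)
            + (fun t : ℕ => (t:ℝ)) l * (if l = q then c2 else 0) := by
        intro l; simp only [hx]; ring
      rw [Finset.sum_congr rfl (fun l _ => hrw l), Finset.sum_add_distrib,
        sum_pick n p (by omega), sum_pick n q (by omega)]
      show (p:ℝ) * c1 + (q:ℝ) * c2 = k
      rw [hc1def, hc2def]
      field_simp
      ring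
    have hval : ∑ l ∈ Finset.range (n + 1), x l * (b 0 - b l)
        = c1 * (b 0 - b p) + c2 * (b 0 - b q) := by
      have hrw : ∀ l : ℕ, x l * (b 0 - b l)
          = (fun t : ℕ => b 0 - b t) l * (if l = p then c1 else 0)
            + (fun t : ℕ => b 0 - b t) l * (if l = q then c2 else 0) := by
        intro l; simp only [hx]; ring
      rw [Finset.sum_congr rfl (fun l _ => hrw l), Finset.sum_add_distrib,
        sum_pick n p (by omega), sum_pick n q (by omega)]
      ring
    have hbp : b 0 - b (p:ℕ) = psiSum n a p := by rw [hpe, htel p]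
    have hbq : b 0 - b (q:ℕ) = psiSum n a q := by rw [hqe, htel q]
    have hq' : psiSum n a q - psiSum n a p = ((q:ℝ) - (p:ℝ)) * Ψ :=
      sum_const_interval n a (le_of_lt hpq) Ψ (fun t ht1 ht2 => hconst t ht1 ht2)
    have hi' : psiSum n a i₀ - psiSum n a p = ((i₀:ℝ) - (p:ℝ)) * Ψ :=
      sum_const_interval n a hp Ψ (fun t ht1 ht2 => hconst t ht1 (by omega))
    have hVval : V = ∑ l ∈ Finset.range (n + 1), x l * (b 0 - b l) := by
      rw [hval, hbp, hbq, hV, hc1def, hc2def]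
      field_simp
      nlinarith [hq', hi', hD]
    have hmem : V ∈ {v : ℝ | ∃ x : ℕ → ℝ, (∀ l ≤ n, 0 ≤ x l ∧ x l ≤ 1) ∧
        (∑ l ∈ Finset.range (n + 1), x l = 1) ∧
        (∑ l ∈ Finset.range (n + 1), (l : ℝ) * x l = k) ∧
        v = ∑ l ∈ Finset.range (n + 1), x l * (b 0 - b l)} :=
      ⟨x, hx01, hxsum, hmean, hVval⟩
    have hub : ∀ v ∈ {v : ℝ | ∃ x : ℕ → ℝ, (∀ l ≤ n, 0 ≤ x l ∧ x l ≤ 1) ∧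
        (∑ l ∈ Finset.range (n + 1), x l = 1) ∧
        (∑ l ∈ Finset.range (n + 1), (l : ℝ) * x l = k) ∧
        v = ∑ l ∈ Finset.range (n + 1), x l * (b 0 - b l)}, v ≤ V := by
      rintro v ⟨y, hy01, hysum, hymean, rfl⟩
      have key : ∀ l, l ≤ n → b 0 - b l ≤ psiSum n a i₀ + ((l:ℝ) - (i₀:ℝ)) * Ψ := by
        intro l hl
        have h1 : b 0 - b l = pS a l := (htel l).symm
        have h2 : pS a l ≤ psiSum n a l := pS_le_psiSum n a hl
        rcases le_or_gt i₀ l with h | h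
        · have hcast : ((l - i₀ : ℕ) : ℝ) = (l:ℝ) - (i₀:ℝ) := by
            push_cast [Nat.cast_sub h]; ring
          have h3 : psiSum n a l - psiSum n a i₀ ≤ ((l:ℝ) - (i₀:ℝ)) * Ψ := by
            rw [psiSum_sub_eq_sum n a h]
            calc ∑ t ∈ Finset.Icc (i₀+1) l, psiT n a t
                ≤ ∑ t ∈ Finset.Icc (i₀+1) l, Ψ := by
                  refine Finset.sum_le_sum fun t ht => ?_
                  have ht' := Finset.mem_Icc.mp ht
                  exact psiT_antitone n a (by omega) ht'.1 (by omega)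
              _ = ((l:ℝ) - (i₀:ℝ)) * Ψ := by
                  rw [Finset.sum_const, Nat.card_Icc, nsmul_eq_mul]
                  congr 1
                  rw [show l + 1 - (i₀ + 1) = l - i₀ by omega, hcast]
          linarith
        · have hcast : ((i₀ - l : ℕ) : ℝ) = (i₀:ℝ) - (l:ℝ) := by
            push_cast [Nat.cast_sub (le_of_lt h)]; ring
          have h3 : ((i₀:ℝ) - (l:ℝ)) * Ψ ≤ psiSum n a i₀ - psiSum n a l := by
            rw [psiSum_sub_eq_sum n a (le_of_lt h)]
            calc ((i₀:ℝ) - (l:ℝ)) * Ψ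
                = ∑ _t ∈ Finset.Icc (l+1) i₀, Ψ := by
                  rw [Finset.sum_const, Nat.card_Icc, nsmul_eq_mul]
                  rw [show i₀ + 1 - (l + 1) = i₀ - l by omega, hcast]
              _ ≤ ∑ t ∈ Finset.Icc (l+1) i₀, psiT n a t := by
                  refine Finset.sum_le_sum fun t ht => ?_
                  have ht' := Finset.mem_Icc.mp ht
                  exact psiT_antitone n a (by omega) (by omega) (by omega)
          linarith
      have step : ∑ l ∈ Finset.range (n + 1), y l * (b 0 - b l)
          ≤ ∑ l ∈ Finset.range (n + 1), y l * (psiSum n a i₀ + ((l:ℝ) - (i₀:ℝ)) * Ψ) := by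
        refine Finset.sum_le_sum fun l hl => ?_
        have hl' : l ≤ n := by
          have := Finset.mem_range.mp hl; omega
        exact mul_le_mul_of_nonneg_left (key l hl') (hy01 l hl').1
      have expand : ∑ l ∈ Finset.range (n + 1), y l * (psiSum n a i₀ + ((l:ℝ) - (i₀:ℝ)) * Ψ) = V := by
        have hrw : ∀ l : ℕ, y l * (psiSum n a i₀ + ((l:ℝ) - (i₀:ℝ)) * Ψ)
            = (psiSum n a i₀ - (i₀:ℝ) * Ψ) * y l + Ψ * ((l:ℝ) * y l) := by
          intro l; ring
        rw [Finset.sum_congr rfl (fun l _ => hrw l), Finset.sum_add_distrib,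
          ← Finset.mul_sum, ← Finset.mul_sum, hysum, hymean, hV]
        ring
      linarith
    exact ((csSup_le ⟨V, hmem⟩ hub).antisymm (le_csSup ⟨V, hub⟩ hmem)).symm
  · -- boundary case k = n
    have hi₀eq : i₀ = n := by omega
    have hkeq : k = (n:ℝ) := by
      have : (n:ℝ) ≤ k := by rw [← hi₀eq] at *; exact hi₀k
      linarith
    have hCn : psiSum n a n = b 0 - b n := by
      obtain ⟨j, hj1, hjn, hje, _⟩ := touch n a (show n - 1 < n by omega)
      have : j = n := by omega
      subst this
      rw [hje, htel]
    set x : ℕ → ℝ := fun l => if l = n then 1 else 0 with hx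
    have hx01 : ∀ l ≤ n, 0 ≤ x l ∧ x l ≤ 1 := by
      intro l _
      simp only [hx]
      split <;> norm_num
    have hxsum : ∑ l ∈ Finset.range (n + 1), x l = 1 := by
      have e1 := sum_pick n n (by omega) (1:ℝ) (fun _ => (1:ℝ))
      simp only [one_mul] at e1
      simp only [hx]
      exact e1
    have hmean : ∑ l ∈ Finset.range (n + 1), (l : ℝ) * x l = k := by
      have e1 := sum_pick n n (by omega) (1:ℝ) (fun t : ℕ => (t:ℝ))
      simp only [hx]
      rw [e1, hkeq]; ring
    have hVval : V = ∑ l ∈ Finset.range (n + 1), x l * (b 0 - b l) := by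
      have hrw : ∀ l : ℕ, x l * (b 0 - b l)
          = (fun t : ℕ => b 0 - b t) l * (if l = n then (1:ℝ) else 0) := by
        intro l; simp only [hx]; ring
      rw [Finset.sum_congr rfl (fun l _ => hrw l), sum_pick n n (by omega)]
      show V = (b 0 - b n) * 1
      rw [hV, hi₀eq, hkeq, hCn]
      ring
    have hmem : V ∈ {v : ℝ | ∃ x : ℕ → ℝ, (∀ l ≤ n, 0 ≤ x l ∧ x l ≤ 1) ∧
        (∑ l ∈ Finset.range (n + 1), x l = 1) ∧
        (∑ l ∈ Finset.range (n + 1), (l : ℝ) * x l = k) ∧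
        v = ∑ l ∈ Finset.range (n + 1), x l * (b 0 - b l)} :=
      ⟨x, hx01, hxsum, hmean, hVval⟩
    have hub : ∀ v ∈ {v : ℝ | ∃ x : ℕ → ℝ, (∀ l ≤ n, 0 ≤ x l ∧ x l ≤ 1) ∧
        (∑ l ∈ Finset.range (n + 1), x l = 1) ∧
        (∑ l ∈ Finset.range (n + 1), (l : ℝ) * x l = k) ∧
        v = ∑ l ∈ Finset.range (n + 1), x l * (b 0 - b l)}, v ≤ V := by
      rintro v ⟨y, hy01, hysum, hymean, rfl⟩
      have hzsum : ∑ l ∈ Finset.range (n + 1), ((n:ℝ) - (l:ℝ)) * y l = 0 := by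
        have hrw : ∀ l : ℕ, ((n:ℝ) - (l:ℝ)) * y l = (n:ℝ) * y l - (l:ℝ) * y l := by
          intro l; ring
        rw [Finset.sum_congr rfl (fun l _ => hrw l), Finset.sum_sub_distrib,
          ← Finset.mul_sum, hysum, hymean, hkeq]
        ring
      have hz : ∀ l ∈ Finset.range (n + 1), ((n:ℝ) - (l:ℝ)) * y l = 0 := by
        refine (Finset.sum_eq_zero_iff_of_nonneg fun l hl => ?_).mp hzsum
        have hl' : l ≤ n := by have := Finset.mem_range.mp hl; omega
        refine mul_nonneg ?_ (hy01 l hl').1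
        have : (l:ℝ) ≤ (n:ℝ) := by exact_mod_cast hl'
        linarith
      have hy0 : ∀ l < n, y l = 0 := by
        intro l hl
        have := hz l (Finset.mem_range.mpr (by omega))
        have hne : (n:ℝ) - (l:ℝ) ≠ 0 := by
          have : (l:ℝ) < (n:ℝ) := by exact_mod_cast hl
          intro hcon; linarith
        exact (mul_eq_zero.mp this).resolve_left hne
      have hyn : y n = 1 := by
        rw [Finset.sum_range_succ] at hysum
        rw [Finset.sum_eq_zero (fun l hl => hy0 l (Finset.mem_range.mp hl))] at hysum
        linarith
      have hvval : ∑ l ∈ Finset.range (n + 1), y l * (b 0 - b l) = b 0 - b n := by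
        rw [Finset.sum_range_succ,
          Finset.sum_eq_zero (fun l hl => by rw [hy0 l (Finset.mem_range.mp hl), zero_mul]),
          hyn]
        ring
      rw [hvval, hV, hi₀eq, hkeq, hCn]
      ring_nf
      linarith [le_refl (b 0 - b n)]
    exact ((csSup_le ⟨V, hmem⟩ hub).antisymm (le_csSup ⟨V, hub⟩ hmem)).symm
end

section
/- Let n = (n_1,…,n_S) with integers n_s ≥ 1, let k be an integer with 0 ≤ k ≤ Σ_s n_s, and let b_{sj} be arbitrary real numbers for 1 ≤ s ≤ S and 0 ≤ j ≤ n_s. Let g_s : [0, n_s] → ℝ be the piecewise-linear interpolant of the points (j, b_{sj}), j = 0,1,…,n_s (so g_s(x) = b_{sj} + (b_{s,j+1} − b_{sj})(x − j) for j ≤ x ≤ j+1), and g(l_1,…,l_S) = Σ_{s=1}^S g_s(l_s). Then min_{(l_1,…,l_S) ∈ K_n(k)} g(l_1,…,l_S) = min_{(l_1,…,l_S) ∈ R_n(k)} g(l_1,…,l_S), and likewise max_{(l_1,…,l_S) ∈ K_n(k)} g = max_{(l_1,…,l_S) ∈ R_n(k)} g; the optima over R_n(k) exist since g is continuous and R_n(k)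 is compact and nonempty. -/
open Finset

/-- Piecewise-linear interpolant of the points `(j, b j)`, `j = 0, 1, 2, …`
(on `[0, m]` it interpolates `(j, b j)` for `j = 0, …, m`). -/
noncomputable def plin (b : ℕ → ℝ) (x : ℝ) : ℝ :=
  b ⌊x⌋₊ + (b (⌊x⌋₊ + 1) - b ⌊x⌋₊) * (x - (⌊x⌋₊ : ℝ))

lemma plin_nat (b : ℕ → ℝ) (m : ℕ) : plin b (m : ℝ) = b m := by
  simp [plin]

lemma plin_eval (b : ℕ → ℝ) (m : ℕ) (θ : ℝ) (h0 : 0 ≤ θ) (h1 : θ ≤ 1) :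
    plin b ((m : ℝ) + θ) = b m + (b (m + 1) - b m) * θ := by
  rcases eq_or_lt_of_le h1 with h | h
  · subst h
    have : (m : ℝ) + 1 = ((m + 1 : ℕ) : ℝ) := by push_cast; ring
    rw [this, plin_nat]; ring
  · have hfl : ⌊(m : ℝ) + θ⌋₊ = m := by
      rw [Nat.floor_eq_iff (by positivity)]
      constructor <;> push_cast <;> linarith
    simp [plin, hfl]

lemma plin_neg (b : ℕ → ℝ) (x : ℝ) : plin (fun j => -(b j)) x = -(plin b x) := by
  simp [plin]; ring

lemma round_base {S : ℕ} (n : Fin S → ℕ) (b : Fin S → ℕ → ℝ) (k : ℕ)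
    (l : Fin S → ℝ) (hint : ∀ s, l s = (⌊l s⌋₊ : ℝ))
    (h1 : ∀ s, l s ≤ (n s : ℝ)) (hsum : ∑ s, l s = (k : ℝ)) :
    ∃ m : Fin S → ℕ, (∀ s, m s ≤ n s) ∧ (∑ s, m s = k) ∧
      ∑ s, plin (b s) ((m s : ℝ)) = ∑ s, plin (b s) (l s) := by
  refine ⟨fun s => ⌊l s⌋₊, fun s => ?_, ?_, ?_⟩
  · have := h1 s; rw [hint s] at this; exact_mod_cast this
  · have : ((∑ s, ⌊l s⌋₊ : ℕ) : ℝ) = (k : ℝ) := by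
      push_cast
      rw [← hsum]; exact Finset.sum_congr rfl fun s _ => (hint s).symm
    exact_mod_cast this
  · exact Finset.sum_congr rfl fun s _ => by rw [← hint s]

lemma round_step {S : ℕ} (n : Fin S → ℕ) (b : Fin S → ℕ → ℝ)
    (l : Fin S → ℝ) (s t : Fin S) (hst : s ≠ t)
    (hs : l s ≠ (⌊l s⌋₊ : ℝ)) (ht : l t ≠ (⌊l t⌋₊ : ℝ))
    (h0 : ∀ u, 0 ≤ l u) (h1 : ∀ u, l u ≤ (n u : ℝ))
    (hc : b s (⌊l s⌋₊ + 1) - b s ⌊l s⌋₊ ≤ b t (⌊l t⌋₊ + 1) - b t ⌊l t⌋₊) :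
    ∃ l' : Fin S → ℝ, (∀ u, 0 ≤ l' u) ∧ (∀ u, l' u ≤ (n u : ℝ)) ∧
      (∑ u, l' u = ∑ u, l u) ∧
      (∑ u, plin (b u) (l' u) ≤ ∑ u, plin (b u) (l u)) ∧
      ((univ.filter fun u => l' u ≠ (⌊l' u⌋₊ : ℝ)).card <
        (univ.filter fun u => l u ≠ (⌊l u⌋₊ : ℝ)).card) := by
  set θs := l s - (⌊l s⌋₊ : ℝ) with hθsdef
  set θt := l t - (⌊l t⌋₊ : ℝ) with hθtdef
  have hθs0 : 0 < θs := lt_of_le_of_ne (sub_nonneg.2 (Nat.floor_le (h0 s))) (by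
    intro h; exact hs (by rw [hθsdef] at h; linarith [h.symm]))
  have hθt0 : 0 < θt := lt_of_le_of_ne (sub_nonneg.2 (Nat.floor_le (h0 t))) (by
    intro h; exact ht (by rw [hθtdef] at h; linarith [h.symm]))
  have hθs1 : θs < 1 := by
    have := Nat.lt_floor_add_one (l s); rw [hθsdef]; linarith
  have hθt1 : θt < 1 := by
    have := Nat.lt_floor_add_one (l t); rw [hθtdef]; linarith
  set ε := min (1 - θs) θt with hεdef
  have hε0 : 0 < ε := lt_min (by linarith) hθt0
  have hε1 : ε ≤ 1 - θs := min_le_left _ _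
  have hε2 : ε ≤ θt := min_le_right _ _
  set l' := Function.update (Function.update l s (l s + ε)) t (l t - ε) with hl'def
  have hl's : l' s = l s + ε := by
    rw [hl'def, Function.update_of_ne hst, Function.update_self]
  have hl't : l' t = l t - ε := by rw [hl'def, Function.update_self]
  have hl'u : ∀ u, u ≠ s → u ≠ t → l' u = l u := fun u hus hut => by
    rw [hl'def, Function.update_of_ne hut, Function.update_of_ne hus]
  have hls_eq : l s = (⌊l s⌋₊ : ℝ) + θs := by rw [hθsdef]; ring
  have hlt_eq : l t = (⌊l t⌋₊ : ℝ) + θt := by rw [hθtdef]; ring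
  have hts : t ∈ univ.erase s := mem_erase.2 ⟨hst.symm, mem_univ t⟩
  have expand : ∀ f : Fin S → ℝ,
      ∑ u, f u = f s + (f t + ∑ u ∈ (univ.erase s).erase t, f u) := by
    intro f
    rw [← Finset.add_sum_erase _ f (mem_univ s), ← Finset.add_sum_erase _ f hts]
  have hrest : ∑ u ∈ (univ.erase s).erase t, l' u = ∑ u ∈ (univ.erase s).erase t, l u :=
    Finset.sum_congr rfl fun u hu =>
      hl'u u (mem_erase.1 (mem_erase.1 hu).2).1 (mem_erase.1 hu).1
  have hrestp : ∑ u ∈ (univ.erase s).erase t, plin (b u) (l' u)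
      = ∑ u ∈ (univ.erase s).erase t, plin (b u) (l u) :=
    Finset.sum_congr rfl fun u hu => by
      rw [hl'u u (mem_erase.1 (mem_erase.1 hu).2).1 (mem_erase.1 hu).1]
  -- plin evaluations
  have hps : plin (b s) (l s) = b s ⌊l s⌋₊ + (b s (⌊l s⌋₊ + 1) - b s ⌊l s⌋₊) * θs := by
    conv_lhs => rw [hls_eq]
    exact plin_eval _ _ _ hθs0.le hθs1.le
  have hpt : plin (b t) (l t) = b t ⌊l t⌋₊ + (b t (⌊l t⌋₊ + 1) - b t ⌊l t⌋₊) * θt := by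
    conv_lhs => rw [hlt_eq]
    exact plin_eval _ _ _ hθt0.le hθt1.le
  have hps' : plin (b s) (l' s)
      = b s ⌊l s⌋₊ + (b s (⌊l s⌋₊ + 1) - b s ⌊l s⌋₊) * (θs + ε) := by
    have h : l' s = (⌊l s⌋₊ : ℝ) + (θs + ε) := by rw [hl's, hθsdef]; ring
    conv_lhs => rw [h]
    exact plin_eval _ _ _ (by linarith) (by linarith)
  have hpt' : plin (b t) (l' t)
      = b t ⌊l t⌋₊ + (b t (⌊l t⌋₊ + 1) - b t ⌊l t⌋₊) * (θt - ε) := by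
    have h : l' t = (⌊l t⌋₊ : ℝ) + (θt - ε) := by rw [hl't, hθtdef]; ring
    conv_lhs => rw [h]
    exact plin_eval _ _ _ (by linarith) (by linarith)
  -- bounds
  have hb0 : ∀ u, 0 ≤ l' u := by
    intro u
    by_cases hus : u = s
    · subst hus; rw [hl's]; linarith [h0 u]
    by_cases hut : u = t
    · subst hut; rw [hl't]
      have hcn : (0 : ℝ) ≤ (⌊l u⌋₊ : ℝ) := Nat.cast_nonneg _
      linarith [hθtdef]
    · rw [hl'u u hus hut]; exact h0 u
  have hb1 : ∀ u, l' u ≤ (n u : ℝ) := by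
    intro u
    by_cases hus : u = s
    · subst hus
      have hfl : (⌊l u⌋₊ : ℝ) + 1 ≤ (n u : ℝ) := by
        have h1' : (⌊l u⌋₊ : ℝ) < (n u : ℝ) := by
          have h2' : (⌊l u⌋₊ : ℝ) < l u := by linarith [hθsdef, hθs0]
          linarith [h1 u]
        have : ⌊l u⌋₊ < n u := by exact_mod_cast h1'
        exact_mod_cast this
      rw [hl's]; push_cast; linarith [hθsdef]
    by_cases hut : u = t
    · subst hut; rw [hl't]; linarith [h1 u]
    · rw [hl'u u hus hut]; exact h1 u
  have hbsum : ∑ u, l' u = ∑ u, l u := by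
    rw [expand l', expand l, hrest, hl's, hl't]; ring
  have hbplin : ∑ u, plin (b u) (l' u) ≤ ∑ u, plin (b u) (l u) := by
    rw [expand (fun u => plin (b u) (l' u)), expand (fun u => plin (b u) (l u)),
      hrestp, hps, hpt, hps', hpt']
    nlinarith [mul_le_mul_of_nonneg_right hc hε0.le]
  -- cardinality decrease
  have hcard : ∀ s₀ ∈ ({s, t} : Finset (Fin S)), l' s₀ = (⌊l' s₀⌋₊ : ℝ) →
      (univ.filter fun u => l' u ≠ (⌊l' u⌋₊ : ℝ)).card <
        (univ.filter fun u => l u ≠ (⌊l u⌋₊ : ℝ)).card := by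
    intro s₀ hs₀ hint
    have hs₀F : s₀ ∈ univ.filter fun u => l u ≠ (⌊l u⌋₊ : ℝ) := by
      rcases mem_insert.1 hs₀ with h | h
      · subst h; exact mem_filter.2 ⟨mem_univ _, hs⟩
      · rw [mem_singleton] at h; subst h; exact mem_filter.2 ⟨mem_univ _, ht⟩
    have hsub : (univ.filter fun u => l' u ≠ (⌊l' u⌋₊ : ℝ)) ⊆
        (univ.filter fun u => l u ≠ (⌊l u⌋₊ : ℝ)).erase s₀ := by
      intro u hu
      have hu' : l' u ≠ (⌊l' u⌋₊ : ℝ) := (mem_filter.1 hu).2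
      have hus₀ : u ≠ s₀ := fun h => hu' (h ▸ hint)
      refine mem_erase.2 ⟨hus₀, mem_filter.2 ⟨mem_univ _, ?_⟩⟩
      by_cases hus : u = s
      · subst hus; exact hs
      by_cases hut : u = t
      · subst hut; exact ht
      · rw [← hl'u u hus hut]; exact hu'
    calc (univ.filter fun u => l' u ≠ (⌊l' u⌋₊ : ℝ)).card
        ≤ ((univ.filter fun u => l u ≠ (⌊l u⌋₊ : ℝ)).erase s₀).card :=
          Finset.card_le_card hsub
      _ < _ := Finset.card_erase_lt_of_mem hs₀F
  refine ⟨l', hb0, hb1, hbsum, hbplin, ?_⟩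
  rcases le_total (1 - θs) θt with hm | hm
  · have hεeq : ε = 1 - θs := min_eq_left hm
    have hintS : l' s = ((⌊l s⌋₊ + 1 : ℕ) : ℝ) := by
      rw [hl's]; push_cast; linarith [hθsdef, hεeq]
    exact hcard s (mem_insert_self _ _) (by rw [hintS, Nat.floor_natCast])
  · have hεeq : ε = θt := min_eq_right hm
    have hintT : l' t = ((⌊l t⌋₊ : ℕ) : ℝ) := by
      rw [hl't]; push_cast; linarith [hθtdef, hεeq]
    exact hcard t (mem_insert.2 (Or.inr (mem_singleton_self _)))
      (by rw [hintT, Nat.floor_natCast])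

lemma plin_round_le {S : ℕ} (n : Fin S → ℕ) (b : Fin S → ℕ → ℝ) (k : ℕ)
    (l : Fin S → ℝ) (h0 : ∀ s, 0 ≤ l s) (h1 : ∀ s, l s ≤ (n s : ℝ))
    (hsum : ∑ s, l s = (k : ℝ)) :
    ∃ m : Fin S → ℕ, (∀ s, m s ≤ n s) ∧ (∑ s, m s = k) ∧
      ∑ s, plin (b s) ((m s : ℝ)) ≤ ∑ s, plin (b s) (l s) := by
  suffices H : ∀ d (l : Fin S → ℝ),
      (univ.filter fun u => l u ≠ (⌊l u⌋₊ : ℝ)).card ≤ d →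
      (∀ s, 0 ≤ l s) → (∀ s, l s ≤ (n s : ℝ)) → (∑ s, l s = (k : ℝ)) →
      ∃ m : Fin S → ℕ, (∀ s, m s ≤ n s) ∧ (∑ s, m s = k) ∧
        ∑ s, plin (b s) ((m s : ℝ)) ≤ ∑ s, plin (b s) (l s) by
    exact H _ l le_rfl h0 h1 hsum
  intro d
  induction d with
  | zero =>
    intro l hcard h0 h1 hsum
    have hemp : (univ.filter fun u => l u ≠ (⌊l u⌋₊ : ℝ)) = ∅ :=
      Finset.card_eq_zero.1 (Nat.le_zero.1 hcard)
    have hint : ∀ u, l u = (⌊l u⌋₊ : ℝ) := by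
      intro u
      by_contra h
      have : u ∈ (univ.filter fun u => l u ≠ (⌊l u⌋₊ : ℝ)) := mem_filter.2 ⟨mem_univ _, h⟩
      rw [hemp] at this; exact absurd this (notMem_empty u)
    obtain ⟨m, hm1, hm2, hm3⟩ := round_base n b k l hint h1 hsum
    exact ⟨m, hm1, hm2, le_of_eq hm3⟩
  | succ d ih =>
    intro l hcard h0 h1 hsum
    by_cases hF : (univ.filter fun u => l u ≠ (⌊l u⌋₊ : ℝ)) = ∅
    · have hint : ∀ u, l u = (⌊l u⌋₊ : ℝ) := by
        intro u
        by_contra h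
        have : u ∈ (univ.filter fun u => l u ≠ (⌊l u⌋₊ : ℝ)) := mem_filter.2 ⟨mem_univ _, h⟩
        rw [hF] at this; exact absurd this (notMem_empty u)
      obtain ⟨m, hm1, hm2, hm3⟩ := round_base n b k l hint h1 hsum
      exact ⟨m, hm1, hm2, le_of_eq hm3⟩
    · obtain ⟨s, hsF⟩ := Finset.nonempty_iff_ne_empty.2 hF
      have hs : l s ≠ (⌊l s⌋₊ : ℝ) := (mem_filter.1 hsF).2
      by_cases ht2 : ∃ t, t ∈ (univ.filter fun u => l u ≠ (⌊l u⌋₊ : ℝ)) ∧ t ≠ s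
      · obtain ⟨t, htF, hts⟩ := ht2
        have ht : l t ≠ (⌊l t⌋₊ : ℝ) := (mem_filter.1 htF).2
        have step : ∃ l' : Fin S → ℝ, (∀ u, 0 ≤ l' u) ∧ (∀ u, l' u ≤ (n u : ℝ)) ∧
            (∑ u, l' u = ∑ u, l u) ∧
            (∑ u, plin (b u) (l' u) ≤ ∑ u, plin (b u) (l u)) ∧
            ((univ.filter fun u => l' u ≠ (⌊l' u⌋₊ : ℝ)).card <
              (univ.filter fun u => l u ≠ (⌊l u⌋₊ : ℝ)).card) := by
          rcases le_total (b s (⌊l s⌋₊ + 1) - b s ⌊l s⌋₊) (b t (⌊l t⌋₊ + 1) - b t ⌊l t⌋₊)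
            with hc | hc
          · exact round_step n b l s t hts.symm hs ht h0 h1 hc
          · obtain ⟨l', a1, a2, a3, a4, a5⟩ := round_step n b l t s hts ht hs h0 h1 hc
            exact ⟨l', a1, a2, a3, a4, a5⟩
        obtain ⟨l', a1, a2, a3, a4, a5⟩ := step
        obtain ⟨m, hm1, hm2, hm3⟩ := ih l' (Nat.lt_succ_iff.1 (lt_of_lt_of_le a5 hcard))
          a1 a2 (by rw [a3, hsum])
        exact ⟨m, hm1, hm2, le_trans hm3 a4⟩
      · push_neg at ht2
        exfalso
        have hrest : ∀ u, u ≠ s → l u = (⌊l u⌋₊ : ℝ) := by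
          intro u hu
          by_contra h
          exact hu (ht2 u (mem_filter.2 ⟨mem_univ _, h⟩))
        set N := ∑ u ∈ univ.erase s, ⌊l u⌋₊ with hN
        have hsplit : l s + (N : ℝ) = (k : ℝ) := by
          rw [← hsum, ← Finset.add_sum_erase _ l (mem_univ s)]
          congr 1
          rw [hN]; push_cast
          exact Finset.sum_congr rfl fun u hu => (hrest u (mem_erase.1 hu).1).symm
        have hNk : N ≤ k := by
          have h' : (N : ℝ) ≤ (k : ℝ) := by linarith [h0 s]
          exact_mod_cast h'
        have hls : l s = ((k - N : ℕ) : ℝ) := by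
          push_cast [hNk]; linarith
        exact hs (by rw [hls, Nat.floor_natCast])

lemma plin_round_ge {S : ℕ} (n : Fin S → ℕ) (b : Fin S → ℕ → ℝ) (k : ℕ)
    (l : Fin S → ℝ) (h0 : ∀ s, 0 ≤ l s) (h1 : ∀ s, l s ≤ (n s : ℝ))
    (hsum : ∑ s, l s = (k : ℝ)) :
    ∃ m : Fin S → ℕ, (∀ s, m s ≤ n s) ∧ (∑ s, m s = k) ∧
      ∑ s, plin (b s) (l s) ≤ ∑ s, plin (b s) ((m s : ℝ)) := by
  obtain ⟨m, hm1, hm2, hm3⟩ := plin_round_le n (fun s j => -(b s j)) k l h0 h1 hsum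
  refine ⟨m, hm1, hm2, ?_⟩
  simp only [plin_neg, Finset.sum_neg_distrib, neg_le_neg_iff] at hm3
  exact hm3

lemma exists_alloc {S : ℕ} (n : Fin S → ℕ) :
    ∀ k, k ≤ ∑ s, n s → ∃ l : Fin S → ℕ, (∀ s, l s ≤ n s) ∧ ∑ s, l s = k := by
  intro k
  induction k with
  | zero => exact fun _ => ⟨fun _ => 0, fun s => Nat.zero_le _, by simp⟩
  | succ k ih =>
    intro hk
    obtain ⟨l, hl1, hl2⟩ := ih (Nat.le_of_succ_le hk)
    have hex : ∃ s, l s < n s := by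
      by_contra h
      push_neg at h
      have : ∑ s, n s ≤ ∑ s, l s := Finset.sum_le_sum fun s _ => h s
      omega
    obtain ⟨s, hs⟩ := hex
    refine ⟨Function.update l s (l s + 1), fun u => ?_, ?_⟩
    · by_cases hu : u = s
      · subst hu; rw [Function.update_self]; omega
      · rw [Function.update_of_ne hu]; exact hl1 u
    · rw [Finset.sum_update_of_mem (mem_univ s), Finset.sdiff_singleton_eq_erase]
      have h2 := Finset.add_sum_erase univ l (mem_univ s)
      omega

/-- For a separable sum of piecewise-linear interpolants, dropping the integer
constraints changes neither the minimum nor the maximum over the allocation polytope. -/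
theorem stmt14 (S : ℕ) (hS : 1 ≤ S) (n : Fin S → ℕ) (hn : ∀ s, 1 ≤ n s)
    (k : ℕ) (hk : k ≤ ∑ s, n s) (b : Fin S → ℕ → ℝ) :
    (sInf {v : ℝ | ∃ l : Fin S → ℕ, (∀ s, l s ≤ n s) ∧ (∑ s, l s = k) ∧
        v = ∑ s, plin (b s) (l s : ℝ)} =
      sInf {v : ℝ | ∃ l : Fin S → ℝ, (∀ s, 0 ≤ l s ∧ l s ≤ (n s : ℝ)) ∧
        (∑ s, l s = (k : ℝ)) ∧ v = ∑ s, plin (b s) (l s)}) ∧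
    (sSup {v : ℝ | ∃ l : Fin S → ℕ, (∀ s, l s ≤ n s) ∧ (∑ s, l s = k) ∧
        v = ∑ s, plin (b s) (l s : ℝ)} =
      sSup {v : ℝ | ∃ l : Fin S → ℝ, (∀ s, 0 ≤ l s ∧ l s ≤ (n s : ℝ)) ∧
        (∑ s, l s = (k : ℝ)) ∧ v = ∑ s, plin (b s) (l s)}) := by
  set A : Set ℝ := {v : ℝ | ∃ l : Fin S → ℕ, (∀ s, l s ≤ n s) ∧ (∑ s, l s = k) ∧
      v = ∑ s, plin (b s) (l s : ℝ)} with hA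
  set B : Set ℝ := {v : ℝ | ∃ l : Fin S → ℝ, (∀ s, 0 ≤ l s ∧ l s ≤ (n s : ℝ)) ∧
      (∑ s, l s = (k : ℝ)) ∧ v = ∑ s, plin (b s) (l s)} with hB
  have hAB : A ⊆ B := by
    rintro v ⟨l, hl1, hl2, hl3⟩
    exact ⟨fun s => (l s : ℝ), fun s => ⟨Nat.cast_nonneg _, Nat.cast_le.2 (hl1 s)⟩,
      by push_cast [← hl2]; ring, hl3⟩
  have hAne : A.Nonempty := by
    obtain ⟨l, hl1, hl2⟩ := exists_alloc n k hk
    exact ⟨∑ s, plin (b s) (l s : ℝ), l, hl1, hl2, rfl⟩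
  have hBne : B.Nonempty := hAne.mono hAB
  have hdom_le : ∀ v ∈ B, ∃ w ∈ A, w ≤ v := by
    rintro v ⟨l, hl1, hl2, hl3⟩
    obtain ⟨m, hm1, hm2, hm3⟩ := plin_round_le n b k l (fun s => (hl1 s).1)
      (fun s => (hl1 s).2) hl2
    exact ⟨∑ s, plin (b s) (m s : ℝ), ⟨m, hm1, hm2, rfl⟩, hl3 ▸ hm3⟩
  have hdom_ge : ∀ v ∈ B, ∃ w ∈ A, v ≤ w := by
    rintro v ⟨l, hl1, hl2, hl3⟩
    obtain ⟨m, hm1, hm2, hm3⟩ := plin_round_ge n b k l (fun s => (hl1 s).1)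
      (fun s => (hl1 s).2) hl2
    exact ⟨∑ s, plin (b s) (m s : ℝ), ⟨m, hm1, hm2, rfl⟩, hl3 ▸ hm3⟩
  have hAfin : A.Finite := by
    apply Set.Finite.subset (Finset.finite_toSet
      ((Fintype.piFinset fun s => Finset.range (n s + 1)).image
        fun l => ∑ s, plin (b s) (l s : ℝ)))
    rintro v ⟨l, hl1, hl2, hl3⟩
    simp only [Finset.coe_image, Set.mem_image, Finset.mem_coe, Fintype.mem_piFinset,
      Finset.mem_range]
    exact ⟨l, fun s => Nat.lt_succ_of_le (hl1 s), hl3.symm⟩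
  have hAbddB : BddBelow A := hAfin.bddBelow
  have hAbddA : BddAbove A := hAfin.bddAbove
  have hBbddB : BddBelow B := by
    obtain ⟨c, hc⟩ := hAbddB
    exact ⟨c, fun v hv => by
      obtain ⟨w, hwA, hwv⟩ := hdom_le v hv
      exact le_trans (hc hwA) hwv⟩
  have hBbddA : BddAbove B := by
    obtain ⟨c, hc⟩ := hAbddA
    exact ⟨c, fun v hv => by
      obtain ⟨w, hwA, hwv⟩ := hdom_ge v hv
      exact le_trans hwv (hc hwA)⟩
  constructor
  · apply le_antisymm
    · apply le_csInf hBne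
      intro v hv
      obtain ⟨w, hwA, hwv⟩ := hdom_le v hv
      exact le_trans (csInf_le hAbddB hwA) hwv
    · exact csInf_le_csInf hBbddB hAne hAB
  · apply le_antisymm
    · exact csSup_le_csSup hBbddA hAne hAB
    · apply csSup_le hBne
      intro v hv
      obtain ⟨w, hwA, hwv⟩ := hdom_ge v hv
      exact le_trans hwv (le_csSup hAbddA hwA)
end

section
/- Let m ≥ 1 be an integer and let r_1(0) < r_2(0) < … < r_m(0) be strictly increasing positive integers. For l ≥ 1 define recursively r_1(l) = 1 and r_i(l) = r_{i−1}(l−1) + 1 for 2 ≤ i ≤ m. Let φ : [1, ∞) → ℝ be nondecreasing and concave, and define Δ(l) = Σ_{i=1}^m ( φ(r_i(l−1)) − φ(r_i(l)) ) for l ≥ 1. Then Δ(l) ≥ Δ(l+1) for every l ≥ 1. -/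
/-- The recursively updated rank configuration: `r i 0 = r0 i`, and for `l ≥ 1`,
`r 1 l = 1` and `r i l = r (i−1) (l−1) + 1` for `i ≥ 2`. -/
def rseq (r0 : ℕ → ℕ) : ℕ → ℕ → ℕ
  | i, 0 => r0 i
  | i, l + 1 => if i ≤ 1 then 1 else rseq r0 (i - 1) l + 1

lemma rseq_succ (r0 : ℕ → ℕ) (i l : ℕ) :
    rseq r0 i (l + 1) = if i ≤ 1 then 1 else rseq r0 (i - 1) l + 1 := rfl

lemma rseq_succ_of_two_le (r0 : ℕ → ℕ) (i l : ℕ) (h : 2 ≤ i) :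
    rseq r0 i (l + 1) = rseq r0 (i - 1) l + 1 := by
  rw [rseq_succ, if_neg (by omega)]

section aux

variable {m : ℕ} {r0 : ℕ → ℕ}

lemma rseq_props (hm : 1 ≤ m)
    (hpos : ∀ i : ℕ, 1 ≤ i → i ≤ m → 1 ≤ r0 i)
    (hinc : ∀ i j : ℕ, 1 ≤ i → i < j → j ≤ m → r0 i < r0 j) :
    ∀ l : ℕ, (∀ i : ℕ, 1 ≤ i → i ≤ m → 1 ≤ rseq r0 i l) ∧
      (∀ i j : ℕ, 1 ≤ i → i < j → j ≤ m → rseq r0 i l < rseq r0 j l) := by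
  intro l
  induction l with
  | zero => exact ⟨hpos, hinc⟩
  | succ l ih =>
    obtain ⟨ihpos, ihinc⟩ := ih
    constructor
    · intro i hi him
      rw [rseq_succ]
      split <;> omega
    · intro i j hi hij hjm
      rw [rseq_succ, rseq_succ]
      have hj1 : ¬ j ≤ 1 := by omega
      rw [if_neg hj1]
      split
      · have := ihpos (j - 1) (by omega) (by omega)
        omega
      · have := ihinc (i - 1) (j - 1) (by omega) (by omega) (by omega)
        omega

lemma rseq_dec (hm : 1 ≤ m)
    (hpos : ∀ i : ℕ, 1 ≤ i → i ≤ m → 1 ≤ r0 i)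
    (hinc : ∀ i j : ℕ, 1 ≤ i → i < j → j ≤ m → r0 i < r0 j) :
    ∀ l : ℕ, ∀ i : ℕ, 1 ≤ i → i ≤ m → rseq r0 i (l + 1) ≤ rseq r0 i l := by
  intro l
  induction l with
  | zero =>
    intro i hi him
    rw [rseq_succ]
    split
    · have h1 : i = 1 := by omega
      subst h1
      exact hpos 1 (le_refl 1) him
    · have := hinc (i - 1) i (by omega) (by omega) him
      simpa [rseq] using this
  | succ l ih =>
    intro i hi him
    by_cases h2 : 2 ≤ i
    · rw [rseq_succ_of_two_le r0 i (l + 1) h2, rseq_succ_of_two_le r0 i l h2]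
      have := ih (i - 1) (by omega) (by omega)
      omega
    · have h1 : i = 1 := by omega
      subst h1
      simp [rseq_succ]

/-- Concavity: successive differences of `φ` at integers `≥ 1` are nonincreasing. -/
lemma phi_diff_anti (φ : ℝ → ℝ) (hconc : ConcaveOn ℝ (Set.Ici (1 : ℝ)) φ)
    (a b : ℕ) (ha : 1 ≤ a) (hab : a ≤ b) :
    φ ((b : ℝ) + 1) - φ (b : ℝ) ≤ φ ((a : ℝ) + 1) - φ (a : ℝ) := by
  rcases eq_or_lt_of_le hab with h | h
  · subst h; exact le_rfl
  · have hx1 : (1 : ℝ) ≤ (a : ℝ) := by exact_mod_cast ha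
    have hab' : (a : ℝ) + 1 ≤ (b : ℝ) := by exact_mod_cast h
    rcases eq_or_lt_of_le hab' with heq | hlt
    · -- b = a + 1 : use adjacent slopes at a < a+1 < a+2
      have h1 := hconc.slope_anti_adjacent (x := (a : ℝ)) (y := (a : ℝ) + 1)
        (z := (a : ℝ) + 2)
        (by exact Set.mem_Ici.mpr hx1)
        (by simp only [Set.mem_Ici]; linarith)
        (by linarith) (by linarith)
      have e1 : (a : ℝ) + 2 - ((a : ℝ) + 1) = 1 := by ring
      have e2 : (a : ℝ) + 1 - (a : ℝ) = 1 := by ring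
      rw [e1, e2, div_one, div_one] at h1
      have hb : (b : ℝ) = (a : ℝ) + 1 := heq.symm
      rw [hb]
      have : (a : ℝ) + 1 + 1 = (a : ℝ) + 2 := by ring
      rw [this]
      exact h1
    · -- a + 1 < b
      have h1 := hconc.slope_anti_adjacent (x := (a : ℝ)) (y := (a : ℝ) + 1)
        (z := (b : ℝ))
        (by exact Set.mem_Ici.mpr hx1)
        (by simp only [Set.mem_Ici]; linarith)
        (by linarith) hlt
      have h2 := hconc.slope_anti_adjacent (x := (a : ℝ) + 1) (y := (b : ℝ))
        (z := (b : ℝ) + 1)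
        (by simp only [Set.mem_Ici]; linarith)
        (by simp only [Set.mem_Ici]; linarith)
        hlt (by linarith)
      have e2 : (a : ℝ) + 1 - (a : ℝ) = 1 := by ring
      have e3 : (b : ℝ) + 1 - (b : ℝ) = 1 := by ring
      rw [e2, div_one] at h1
      rw [e3, div_one] at h2
      exact le_trans h2 h1

end aux

/-- For a nondecreasing concave rank transformation `φ`, the successive decrements
`Δ(l) = Σ_{i=1}^m (φ(r_i(l−1)) − φ(r_i(l)))` form a nonincreasing sequence in `l`. -/
theorem stmt15 (m : ℕ) (hm : 1 ≤ m) (r0 : ℕ → ℕ)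
    (hpos : ∀ i : ℕ, 1 ≤ i → i ≤ m → 1 ≤ r0 i)
    (hinc : ∀ i j : ℕ, 1 ≤ i → i < j → j ≤ m → r0 i < r0 j)
    (φ : ℝ → ℝ) (hmono : MonotoneOn φ (Set.Ici (1 : ℝ)))
    (hconc : ConcaveOn ℝ (Set.Ici (1 : ℝ)) φ) :
    ∀ l : ℕ, 1 ≤ l →
      (∑ i ∈ Finset.Icc 1 m,
          (φ ((rseq r0 i l : ℕ) : ℝ) - φ ((rseq r0 i (l + 1) : ℕ) : ℝ))) ≤
      ∑ i ∈ Finset.Icc 1 m,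
          (φ ((rseq r0 i (l - 1) : ℕ) : ℝ) - φ ((rseq r0 i l : ℕ) : ℝ)) := by
  have hP := rseq_props hm hpos hinc
  have hD := rseq_dec hm hpos hinc
  intro l hl
  obtain ⟨k, rfl⟩ : ∃ k, l = k + 1 := ⟨l - 1, by omega⟩
  obtain ⟨n, rfl⟩ : ∃ n, m = n + 1 := ⟨m - 1, by omega⟩
  simp only [Nat.add_sub_cancel]
  rw [Finset.sum_sub_distrib, Finset.sum_sub_distrib]
  -- the telescoping identity
  have key : ∀ l' : ℕ,
      (∑ i ∈ Finset.Icc 1 (n + 1), φ ((rseq r0 i (l' + 1) : ℕ) : ℝ)) =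
        φ 1 + ∑ i ∈ Finset.Icc 1 n, φ (((rseq r0 i l' : ℕ) : ℝ) + 1) := by
    intro l'
    have h1 : Finset.Icc 1 (n + 1) = insert 1 (Finset.Icc 2 (n + 1)) := by
      ext x
      simp only [Finset.mem_Icc, Finset.mem_insert]
      omega
    rw [h1, Finset.sum_insert (by simp)]
    have h2 : rseq r0 1 (l' + 1) = 1 := by rw [rseq_succ]; simp
    rw [h2]
    congr 1
    · norm_num
    · apply Finset.sum_nbij' (i := fun a => a - 1) (j := fun b => b + 1)
      · intro a ha
        simp only [Finset.mem_Icc] at ha ⊢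
        omega
      · intro b hb
        simp only [Finset.mem_Icc] at hb ⊢
        omega
      · intro a ha
        simp only [Finset.mem_Icc] at ha
        omega
      · intro b hb
        omega
      · intro a ha
        simp only [Finset.mem_Icc] at ha
        rw [rseq_succ, if_neg (by omega)]
        push_cast
        ring_nf
  have e1 := key (k + 1)
  have e2 := key k
  -- reduce to a termwise inequality
  have split : ∀ l' : ℕ,
      (∑ i ∈ Finset.Icc 1 (n + 1), φ ((rseq r0 i l' : ℕ) : ℝ)) =
        (∑ i ∈ Finset.Icc 1 n, φ ((rseq r0 i l' : ℕ) : ℝ)) +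
          φ ((rseq r0 (n + 1) l' : ℕ) : ℝ) := by
    intro l'
    exact Finset.sum_Icc_succ_top (by omega) _
  have s1 := split (k + 1)
  have s2 := split k
  have hlast : φ ((rseq r0 (n + 1) (k + 1) : ℕ) : ℝ) ≤ φ ((rseq r0 (n + 1) k : ℕ) : ℝ) := by
    apply hmono
    · exact Set.mem_Ici.mpr (by exact_mod_cast (hP (k + 1)).1 (n + 1) (by omega) le_rfl)
    · exact Set.mem_Ici.mpr (by exact_mod_cast (hP k).1 (n + 1) (by omega) le_rfl)
    · exact_mod_cast hD k (n + 1) (by omega) le_rfl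
  have hterm : ∀ i ∈ Finset.Icc 1 n,
      φ ((rseq r0 i (k + 1) : ℕ) : ℝ) + φ (((rseq r0 i k : ℕ) : ℝ) + 1) ≤
        φ ((rseq r0 i k : ℕ) : ℝ) + φ (((rseq r0 i (k + 1) : ℕ) : ℝ) + 1) := by
    intro i hi
    simp only [Finset.mem_Icc] at hi
    have ha : 1 ≤ rseq r0 i (k + 1) := (hP (k + 1)).1 i hi.1 (by omega)
    have hab : rseq r0 i (k + 1) ≤ rseq r0 i k := hD k i hi.1 (by omega)
    have := phi_diff_anti φ hconc (rseq r0 i (k + 1)) (rseq r0 i k) ha hab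
    linarith
  have hsum : (∑ i ∈ Finset.Icc 1 n,
        (φ ((rseq r0 i (k + 1) : ℕ) : ℝ) + φ (((rseq r0 i k : ℕ) : ℝ) + 1))) ≤
      ∑ i ∈ Finset.Icc 1 n,
        (φ ((rseq r0 i k : ℕ) : ℝ) + φ (((rseq r0 i (k + 1) : ℕ) : ℝ) + 1)) :=
    Finset.sum_le_sum hterm
  rw [Finset.sum_add_distrib, Finset.sum_add_distrib] at hsum
  linarith [e1, e2, s1, s2, hsum, hlast]
end

section
/- For every integer h ≥ 2, the extended Stephenson rank transformation φ : ℝ → ℝ defined by φ(r) = (1/(h−1)!)·∏_{t=1}^{h−1} (r − t) for r ≥ h−1 and φ(r) = 0 for r < h−1 is convex on ℝ. (On positive integers r ≥ h−1 this function equals the binomial coefficient C(r−1, h−1), the Stephenson rank score.) -/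
open Set Finset

private lemma steph_aux (k : ℕ) :
    ConvexOn ℝ (Set.Ici (k : ℝ)) (fun r => ∏ t ∈ Finset.Icc 1 k, (r - (t : ℝ))) ∧
    MonotoneOn (fun r => ∏ t ∈ Finset.Icc 1 k, (r - (t : ℝ))) (Set.Ici (k : ℝ)) ∧
    (∀ x ∈ Set.Ici (k : ℝ), 0 ≤ ∏ t ∈ Finset.Icc 1 k, (x - (t : ℝ))) := by
  induction k with
  | zero =>
    simp only [Finset.Icc_eq_empty_of_lt (by norm_num : (1:ℕ) > 0), Finset.prod_empty]
    exact ⟨convexOn_const 1 (convex_Ici _), monotoneOn_const, fun x _ => zero_le_one⟩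
  | succ k ih =>
    obtain ⟨hc, hm, hn⟩ := ih
    have hsub : Set.Ici ((k+1 : ℕ) : ℝ) ⊆ Set.Ici (k : ℝ) := by
      apply Set.Ici_subset_Ici.2; push_cast; linarith
    have hprod : ∀ r : ℝ, ∏ t ∈ Finset.Icc 1 (k+1), (r - (t : ℝ)) =
        (∏ t ∈ Finset.Icc 1 k, (r - (t : ℝ))) * (r - ((k+1 : ℕ) : ℝ)) := by
      intro r
      rw [← Finset.prod_Icc_succ_top (Nat.succ_le_succ (Nat.zero_le k))]
    have hc' : ConvexOn ℝ (Set.Ici ((k+1 : ℕ) : ℝ))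
        (fun r => ∏ t ∈ Finset.Icc 1 k, (r - (t : ℝ))) := hc.subset hsub (convex_Ici _)
    have hm' : MonotoneOn (fun r => ∏ t ∈ Finset.Icc 1 k, (r - (t : ℝ)))
        (Set.Ici ((k+1 : ℕ) : ℝ)) := hm.mono hsub
    have hn' : ∀ x ∈ Set.Ici ((k+1 : ℕ) : ℝ), 0 ≤ ∏ t ∈ Finset.Icc 1 k, (x - (t : ℝ)) :=
      fun x hx => hn x (hsub hx)
    have hgc : ConvexOn ℝ (Set.Ici ((k+1 : ℕ) : ℝ)) (fun r : ℝ => r - ((k+1 : ℕ) : ℝ)) := by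
      refine ⟨convex_Ici _, fun x _ y _ a b ha hb hab => ?_⟩
      simp only [smul_eq_mul]
      nlinarith
    have hgm : MonotoneOn (fun r : ℝ => r - ((k+1 : ℕ) : ℝ)) (Set.Ici ((k+1 : ℕ) : ℝ)) :=
      fun x _ y _ hxy => by simpa using hxy
    have hgn : ∀ x ∈ Set.Ici ((k+1 : ℕ) : ℝ), (0:ℝ) ≤ x - ((k+1 : ℕ) : ℝ) :=
      fun x hx => by simp only [Set.mem_Ici] at hx; linarith
    have hmono : MonovaryOn (fun r => ∏ t ∈ Finset.Icc 1 k, (r - (t : ℝ)))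
        (fun r : ℝ => r - ((k+1 : ℕ) : ℝ)) (Set.Ici ((k+1 : ℕ) : ℝ)) := by
      intro i hi j hj hij
      simp only at hij
      exact hm' hi hj (by linarith)
    have hmul := hc'.mul hgc hn' hgn hmono
    refine ⟨?_, ?_, ?_⟩
    · rw [show (fun r : ℝ => ∏ t ∈ Finset.Icc 1 (k+1), (r - (t : ℝ))) = _ from funext hprod]; exact hmul
    · intro x hx y hy hxy
      simp only [hprod]
      exact mul_le_mul (hm' hx hy hxy) (by linarith) (hgn x hx) (hn' y hy)
    · intro x hx
      rw [hprod]
      exact mul_nonneg (hn' x hx) (hgn x hx)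

/-- The extended Stephenson rank transformation
`φ(r) = (∏_{t=1}^{h−1} (r − t)) / (h−1)!` for `r ≥ h − 1` and `φ(r) = 0` otherwise
is convex on all of `ℝ`. -/
theorem stmt16 (h : ℕ) (hh : 2 ≤ h) :
    ConvexOn ℝ Set.univ (fun r : ℝ =>
      if (h : ℝ) - 1 ≤ r then
        (∏ t ∈ Finset.Icc 1 (h - 1), (r - (t : ℝ))) / (Nat.factorial (h - 1) : ℝ)
      else 0) := by
  set k := h - 1 with hk
  have hk1 : 1 ≤ k := Nat.le_sub_of_add_le hh
  have hcast : ((k : ℕ) : ℝ) = (h : ℝ) - 1 := by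
    rw [hk, Nat.cast_sub (by omega : 1 ≤ h)]; norm_num
  obtain ⟨hc, hm, hn⟩ := steph_aux k
  set g : ℝ → ℝ := fun r => ∏ t ∈ Finset.Icc 1 k, (r - (t : ℝ)) with hg
  have hgc0 : g ((k : ℕ) : ℝ) = 0 := by
    apply Finset.prod_eq_zero (Finset.mem_Icc.2 ⟨hk1, le_rfl⟩)
    simp
  -- the max function
  have hmax : ConvexOn ℝ Set.univ (fun r : ℝ => max r ((k : ℕ) : ℝ)) :=
    (convexOn_id convex_univ).sup (convexOn_const _ convex_univ)
  have himg : (fun r : ℝ => max r ((k : ℕ) : ℝ)) '' Set.univ = Set.Ici ((k : ℕ) : ℝ) := by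
    ext x
    constructor
    · rintro ⟨y, -, rfl⟩; exact Set.mem_Ici.2 (le_max_right _ _)
    · intro hx; exact ⟨x, Set.mem_univ _, max_eq_left hx⟩
  have hcomp : ConvexOn ℝ Set.univ (g ∘ fun r : ℝ => max r ((k : ℕ) : ℝ)) := by
    refine ConvexOn.comp ?_ hmax ?_
    · rw [himg]; exact hc
    · rw [himg]; exact hm
  have hsmul := hcomp.smul (c := (Nat.factorial k : ℝ)⁻¹)
    (by positivity)
  refine hsmul.congr ?_
  intro r _
  simp only [Function.comp, smul_eq_mul]
  by_cases hr : (h : ℝ) - 1 ≤ r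
  · rw [if_pos hr, max_eq_left (by rw [hcast]; exact hr)]
    rw [div_eq_inv_mul]
  · rw [if_neg hr, max_eq_right (by rw [hcast]; linarith [not_le.1 hr])]
    rw [hgc0, mul_zero]
end

section
/- Let n ≥ 1 be an integer, Γ ≥ 1 a real number, γ = log Γ, u_1,…,u_n ∈ [0,1], and define the probabilities p_i = e^{γ u_i} / Σ_{j=1}^n e^{γ u_j}. Then for any real numbers ψ_1,…,ψ_n, the variance of ψ under p satisfies Σ_{i=1}^n p_i ψ_i² − ( Σ_{i=1}^n p_i ψ_i )² ≥ 2·( max_i ψ_i − min_i ψ_i )² / ( n³ Γ³ ). -/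
private lemma stmt18_aux (R t : ℝ) (hR : 0 ≤ R) (ht : 2 ≤ t) :
    2 * R / t ^ 3 ≤ 1 / t * (R / 2) := by
  have ht0 : (0:ℝ) < t := by linarith
  have heq : 1 / t * (R / 2) = R / (2 * t) := by
    field_simp
  rw [heq, div_le_div_iff₀ (by positivity) (by positivity)]
  nlinarith [mul_nonneg hR (mul_nonneg ht0.le (show (0:ℝ) ≤ t^2 - 4 by nlinarith))]


/-- Under Rosenbaum's sensitivity model with bias at most `Γ` for a matched set of `n`
units, the variance of any score vector `ψ` under the treated-unit distribution is at
least `2 (max ψ − min ψ)² / (n³ Γ³)`. -/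
theorem stmt18 (n : ℕ) (hn : 1 ≤ n) (Γ : ℝ) (hΓ : 1 ≤ Γ) (u : Fin n → ℝ)
    (hu : ∀ i, u i ∈ Set.Icc (0 : ℝ) 1) (ψ : Fin n → ℝ) :
    2 * (Finset.univ.sup' (Finset.univ_nonempty_iff.mpr ⟨⟨0, hn⟩⟩) ψ -
          Finset.univ.inf' (Finset.univ_nonempty_iff.mpr ⟨⟨0, hn⟩⟩) ψ) ^ 2 /
        ((n : ℝ) ^ 3 * Γ ^ 3) ≤
      (∑ i, (Real.exp (Real.log Γ * u i) / ∑ j, Real.exp (Real.log Γ * u j)) * (ψ i) ^ 2)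
        - (∑ i, (Real.exp (Real.log Γ * u i) / ∑ j, Real.exp (Real.log Γ * u j)) * ψ i) ^ 2 := by
  have hΓ0 : (0:ℝ) < Γ := lt_of_lt_of_le one_pos hΓ
  set γ := Real.log Γ with hγdef
  have hγ : 0 ≤ γ := Real.log_nonneg hΓ
  set S := ∑ j, Real.exp (γ * u j) with hSdef
  have hE1 : ∀ i, (1:ℝ) ≤ Real.exp (γ * u i) := fun i =>
    Real.one_le_exp (mul_nonneg hγ (hu i).1)
  have hEΓ : ∀ i, Real.exp (γ * u i) ≤ Γ := fun i => by
    calc Real.exp (γ * u i) ≤ Real.exp γ := by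
          apply Real.exp_le_exp.mpr
          nlinarith [(hu i).2, (hu i).1]
      _ = Γ := Real.exp_log hΓ0
  have hne : (Finset.univ : Finset (Fin n)).Nonempty := Finset.univ_nonempty_iff.mpr ⟨⟨0, hn⟩⟩
  have hSpos : 0 < S := Finset.sum_pos (fun i _ => Real.exp_pos _) hne
  have hSub : S ≤ n * Γ := by
    calc S ≤ ∑ _j : Fin n, Γ := Finset.sum_le_sum (fun j _ => hEΓ j)
      _ = n * Γ := by simp [Finset.sum_const, mul_comm]
  set p : Fin n → ℝ := fun i => Real.exp (γ * u i) / S with hpdef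
  have hppos : ∀ i, 0 < p i := fun i => div_pos (Real.exp_pos _) hSpos
  have hpsum : ∑ i, p i = 1 := by
    simp only [hpdef, ← Finset.sum_div]
    exact div_self hSpos.ne'
  have hplb : ∀ i, 1 / ((n:ℝ) * Γ) ≤ p i := fun i => by
    exact div_le_div₀ (le_of_lt (Real.exp_pos _)) (hE1 i) hSpos hSub
  set μ := ∑ i, p i * ψ i with hμdef
  have hvar : (∑ i, p i * (ψ i) ^ 2) - μ ^ 2 = ∑ i, p i * (ψ i - μ) ^ 2 := by
    have : ∑ i, p i * (ψ i - μ) ^ 2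
        = (∑ i, p i * (ψ i) ^ 2) - 2 * μ * (∑ i, p i * ψ i) + μ ^ 2 * (∑ i, p i) := by
      rw [Finset.sum_congr rfl
        (fun i _ => (by ring : p i * (ψ i - μ) ^ 2
          = p i * (ψ i) ^ 2 - 2 * μ * (p i * ψ i) + μ ^ 2 * p i)),
        Finset.sum_add_distrib, Finset.sum_sub_distrib, ← Finset.mul_sum, ← Finset.mul_sum]
    rw [this, hpsum, ← hμdef]; ring
  show 2 * (Finset.univ.sup' hne ψ - Finset.univ.inf' hne ψ) ^ 2 / ((n : ℝ) ^ 3 * Γ ^ 3)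
      ≤ (∑ i, p i * (ψ i) ^ 2) - (∑ i, p i * ψ i) ^ 2
  rw [← hμdef, hvar]
  obtain ⟨a, -, ha⟩ := Finset.exists_mem_eq_sup' hne ψ
  obtain ⟨b, -, hb⟩ := Finset.exists_mem_eq_inf' hne ψ
  set M := Finset.univ.sup' hne ψ with hM
  set m := Finset.univ.inf' hne ψ with hm
  by_cases hMm : M = m
  · have h0 : 2 * (M - m) ^ 2 / ((n : ℝ) ^ 3 * Γ ^ 3) = 0 := by
      rw [hMm]; ring
    rw [h0]
    exact Finset.sum_nonneg (fun i _ => mul_nonneg (hppos i).le (sq_nonneg _))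
  · have hab : a ≠ b := by
      intro h; apply hMm; rw [ha, hb, h]
    have hn2 : (2:ℝ) ≤ (n:ℝ) := by
      have : 1 < Fintype.card (Fin n) := Fintype.one_lt_card_iff.mpr ⟨a, b, hab⟩
      rw [Fintype.card_fin] at this
      exact_mod_cast this
    have hsub : p a * (ψ a - μ) ^ 2 + p b * (ψ b - μ) ^ 2 ≤ ∑ i, p i * (ψ i - μ) ^ 2 := by
      have := Finset.sum_le_sum_of_subset_of_nonneg
        (Finset.subset_univ ({a, b} : Finset (Fin n)))
        (fun i _ _ => mul_nonneg (hppos i).le (sq_nonneg ((ψ i - μ))))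
      rwa [Finset.sum_pair hab] at this
    have hNΓ : (2:ℝ) ≤ (n:ℝ) * Γ := by nlinarith
    have hNΓpos : (0:ℝ) < (n:ℝ) * Γ := by linarith
    have hstep : 1 / ((n:ℝ) * Γ) * ((M - m) ^ 2 / 2)
        ≤ p a * (ψ a - μ) ^ 2 + p b * (ψ b - μ) ^ 2 := by
      have h1 : (M - m) ^ 2 / 2 ≤ (ψ a - μ) ^ 2 + (ψ b - μ) ^ 2 := by
        rw [ha, hb] at *
        nlinarith [sq_nonneg (ψ a + ψ b - 2 * μ)]
      have h2 : 1 / ((n:ℝ) * Γ) * ((ψ a - μ) ^ 2 + (ψ b - μ) ^ 2)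
          ≤ p a * (ψ a - μ) ^ 2 + p b * (ψ b - μ) ^ 2 := by
        have := hplb a; have := hplb b
        nlinarith [sq_nonneg (ψ a - μ), sq_nonneg (ψ b - μ)]
      calc 1 / ((n:ℝ) * Γ) * ((M - m) ^ 2 / 2)
          ≤ 1 / ((n:ℝ) * Γ) * ((ψ a - μ) ^ 2 + (ψ b - μ) ^ 2) := by
            apply mul_le_mul_of_nonneg_left h1 (by positivity)
        _ ≤ _ := h2
    have hfirst : 2 * (M - m) ^ 2 / ((n : ℝ) ^ 3 * Γ ^ 3)
        ≤ 1 / ((n:ℝ) * Γ) * ((M - m) ^ 2 / 2) := by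
      have hcube : ((n:ℝ) ^ 3 * Γ ^ 3) = ((n:ℝ) * Γ) ^ 3 := by ring
      rw [hcube]
      exact stmt18_aux _ _ (sq_nonneg _) hNΓ
    linarith [hfirst, hstep, hsub]
end

section
/- Let S be a finite nonempty index set and, for each s ∈ S, let μ_s, μ̃_s ∈ ℝ with μ_s ≤ μ̃_s, and let v_s², ṽ_s² ≥ 0 be nonnegative reals. Let A = {s ∈ S : v_s² > ṽ_s²}, σ = √(Σ_{s∈S} v_s²), and σ̃ = √(Σ_{s∈S} ṽ_s²), and assume σ̃ > 0. Then for every real k ≥ 0: ( Σ_{s∈S} μ̃_s + k σ̃ ) − ( Σ_{s∈S} μ_s + k σ ) ≥ Σ_{s∈A} (μ̃_s − μ_s) − (k / (2 σ̃)) · Σ_{s∈A} (v_s² − ṽ_s²). -/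
/-- Deterministic inequality underlying the asymptotic validity of the
Gaussian-approximation sensitivity analysis: with `A = {s : v_s² > ṽ_s²}`,
`(Σ μ̃_s + k σ̃) − (Σ μ_s + k σ) ≥ Σ_A (μ̃_s − μ_s) − (k/(2σ̃)) Σ_A (v_s² − ṽ_s²)`. -/
theorem stmt19 {ι : Type*} [Fintype ι] [Nonempty ι]
    (μ μt v2 vt2 : ι → ℝ)
    (hμ : ∀ s, μ s ≤ μt s) (hv2 : ∀ s, 0 ≤ v2 s) (hvt2 : ∀ s, 0 ≤ vt2 s)
    (hσ : 0 < Real.sqrt (∑ s, vt2 s)) (k : ℝ) (hk : 0 ≤ k) :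
    (∑ s ∈ Finset.univ.filter fun s => vt2 s < v2 s, (μt s - μ s)) -
        k / (2 * Real.sqrt (∑ s, vt2 s)) *
          ∑ s ∈ Finset.univ.filter fun s => vt2 s < v2 s, (v2 s - vt2 s) ≤
      ((∑ s, μt s) + k * Real.sqrt (∑ s, vt2 s)) -
        ((∑ s, μ s) + k * Real.sqrt (∑ s, v2 s)) := by
  set A := Finset.univ.filter fun s => vt2 s < v2 s with hAdef
  set σt := Real.sqrt (∑ s, vt2 s) with hσt
  set σ := Real.sqrt (∑ s, v2 s) with hσs
  have hσnn : 0 ≤ σ := Real.sqrt_nonneg _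
  have hT : σt ^ 2 = ∑ s, vt2 s := Real.sq_sqrt (Finset.sum_nonneg fun s _ => hvt2 s)
  have hV : σ ^ 2 = ∑ s, v2 s := Real.sq_sqrt (Finset.sum_nonneg fun s _ => hv2 s)
  -- sum over A of (μt - μ) ≤ total sum
  have hA : ∑ s ∈ A, (μt s - μ s) ≤ ∑ s, (μt s - μ s) :=
    Finset.sum_le_sum_of_subset_of_nonneg (Finset.filter_subset _ _)
      (fun s _ _ => sub_nonneg.mpr (hμ s))
  have hsplit : ∑ s, (v2 s - vt2 s) = (∑ s ∈ A, (v2 s - vt2 s)) +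
      ∑ s ∈ Finset.univ.filter fun s => ¬ vt2 s < v2 s, (v2 s - vt2 s) :=
    (Finset.sum_filter_add_sum_filter_not _ _ _).symm
  have hneg : ∑ s ∈ Finset.univ.filter fun s => ¬ vt2 s < v2 s, (v2 s - vt2 s) ≤ 0 :=
    Finset.sum_nonpos fun s hs => by
      simp only [Finset.mem_filter, not_lt] at hs
      linarith [hs.2]
  have hB : σ ^ 2 - σt ^ 2 ≤ ∑ s ∈ A, (v2 s - vt2 s) := by
    rw [hT, hV, ← Finset.sum_sub_distrib]
    linarith [hsplit, hneg]
  have hC : k * (σ - σt) ≤ k / (2 * σt) * (σ ^ 2 - σt ^ 2) := by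
    rw [div_mul_eq_mul_div, le_div_iff₀ (by positivity)]
    nlinarith [sq_nonneg (σ - σt), mul_nonneg hk (sq_nonneg (σ - σt))]
  have hD : k / (2 * σt) * (σ ^ 2 - σt ^ 2) ≤ k / (2 * σt) * ∑ s ∈ A, (v2 s - vt2 s) :=
    mul_le_mul_of_nonneg_left hB (by positivity)
  have hsum : ∑ s, (μt s - μ s) = (∑ s, μt s) - ∑ s, μ s := Finset.sum_sub_distrib _ _
  linarith [hA, hC, hD]
end
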